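/- arXiv:math/0401192 — 4 statements merged into one kernel-verified Lean document; each statement's English description precedes it below -/
import Mathlib

section
/- Let R be a commutative ring and n a positive integer. Suppose there exist units b, c ∈ R such that for every positive integer m the ideal of R generated by b^m − 1 and c^m − 1 is all of R. Then every α ∈ GI^c_n(R) is a single commutator: there exist β, γ ∈ GA^c_n(R) with α = β∘γ∘β⁻¹∘γ⁻¹. -/
open MvPowerSeries

/-- The topology of coefficientwise convergence on `R[[X₁,…,Xₙ]]` (with `R` discrete):
the product topology on the coefficient functions, `R` carrying the discrete topology. -/
noncomputable def mvPiTopology (σ R : Type*) : TopologicalSpace (MvPowerSeries σ R) :=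
  @Pi.topologicalSpace (σ →₀ ℕ) (fun _ => R) (fun _ => ⊥)

/-- The augmentation ideal `M = (X₁,…,Xₙ)` of `R[[X₁,…,Xₙ]]`, i.e. the ideal generated
by the variables; it consists of the power series with zero constant term. -/
noncomputable def augIdeal (σ R : Type*) [CommRing R] : Ideal (MvPowerSeries σ R) :=
  Ideal.span (Set.range (X : σ → MvPowerSeries σ R))

/-- `GA^c_n(R)`: an `R`-algebra automorphism of `R[[X₁,…,Xₙ]]` belongs to `GA^c_n(R)` iff it is
continuous for the topology of coefficientwise convergence and augmented, i.e. each `φ(Xᵢ)` has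
zero constant coefficient. -/
noncomputable def GAc {R : Type*} [CommRing R] {n : ℕ}
    (φ : MvPowerSeries (Fin n) R ≃ₐ[R] MvPowerSeries (Fin n) R) : Prop :=
  @Continuous _ _ (mvPiTopology (Fin n) R) (mvPiTopology (Fin n) R) φ ∧
    ∀ i, constantCoeff (φ (X i)) = 0

/-- `GI^c_n(R)`: those `φ ∈ GA^c_n(R)` with `φ(Xᵢ) - Xᵢ ∈ M²` for all `i`. -/
noncomputable def GIc {R : Type*} [CommRing R] {n : ℕ}
    (φ : MvPowerSeries (Fin n) R ≃ₐ[R] MvPowerSeries (Fin n) R) : Prop :=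
  GAc φ ∧ ∀ i, φ (X i) - X i ∈ (augIdeal (Fin n) R) ^ 2

/-- Membership in `[GA^c_n(R), GA^c_n(R)]^{(k)}`: `α` is a product of `k` commutators
`[β,γ] = β∘γ∘β⁻¹∘γ⁻¹` of elements of `GA^c_n(R)`.  (The group structure on automorphisms is
composition: `(β * γ) f = β (γ f)`.) -/
noncomputable def IsProdOfCommutators {R : Type*} [CommRing R] {n : ℕ} (k : ℕ)
    (α : MvPowerSeries (Fin n) R ≃ₐ[R] MvPowerSeries (Fin n) R) : Prop :=
  ∃ β γ : Fin k → (MvPowerSeries (Fin n) R ≃ₐ[R] MvPowerSeries (Fin n) R),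
    (∀ j, GAc (β j) ∧ GAc (γ j)) ∧
    α = (List.ofFn (fun j => β j * γ j * (β j)⁻¹ * (γ j)⁻¹)).prod



namespace CommutatorProof

open Finsupp

variable {R : Type*} [CommRing R] {n : ℕ}

local notation "Mv" => MvPowerSeries (Fin n) R

/-- `lowC k f` : all coefficients of `f` in total degree `< k` vanish. -/
def lowC (k : ℕ) (f : Mv) : Prop :=
  ∀ d : Fin n →₀ ℕ, d.degree < k → coeff d f = 0

lemma degree_add (a b : Fin n →₀ ℕ) : degree (a + b) = degree a + degree b := by
  simp only [degree_eq_weight_one]; exact map_add _ _ _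

lemma degree_single (i : Fin n) (m : ℕ) : degree (single i m) = m := by
  simp [degree_eq_weight_one, weight_apply]

lemma degree_mono {a b : Fin n →₀ ℕ} (h : a ≤ b) : degree a ≤ degree b := by
  obtain ⟨c, rfl⟩ := le_iff_exists_add.mp h
  rw [degree_add]; omega

lemma lowC_mono {j k : ℕ} (h : j ≤ k) {f : Mv} (hf : lowC k f) : lowC j f :=
  fun d hd => hf d (lt_of_lt_of_le hd h)

lemma lowC_zero (k : ℕ) : lowC k (0 : Mv) := fun d _ => map_zero _

lemma lowC_add {k : ℕ} {f g : Mv} (hf : lowC k f) (hg : lowC k g) : lowC k (f + g) := by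
  intro d hd; rw [map_add, hf d hd, hg d hd, add_zero]

lemma lowC_neg {k : ℕ} {f : Mv} (hf : lowC k f) : lowC k (-f) := by
  intro d hd; rw [map_neg, hf d hd, neg_zero]

lemma lowC_sub {k : ℕ} {f g : Mv} (hf : lowC k f) (hg : lowC k g) : lowC k (f - g) := by
  rw [sub_eq_add_neg]; exact lowC_add hf (lowC_neg hg)

lemma lowC_smul {k : ℕ} (r : R) {f : Mv} (hf : lowC k f) : lowC k (r • f) := by
  intro d hd; rw [map_smul, smul_eq_mul, hf d hd, mul_zero]

lemma lowC_mul {j k : ℕ} {f g : Mv} (hf : lowC j f) (hg : lowC k g) : lowC (j + k) (f * g) := by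
  intro d hd
  classical
  rw [coeff_mul]
  refine Finset.sum_eq_zero fun p hp => ?_
  rw [Finset.HasAntidiagonal.mem_antidiagonal] at hp
  have hdeg : degree p.1 + degree p.2 = degree d := by rw [← degree_add, hp]
  rcases lt_or_ge (degree p.1) j with h1 | h1
  · rw [hf p.1 h1, zero_mul]
  · rw [hg p.2 (by omega), mul_zero]

/-- `lowC 1 f` iff constant coefficient vanishes. -/
lemma lowC_one_iff {f : Mv} : lowC 1 f ↔ constantCoeff f = 0 := by
  constructor
  · intro h; exact h 0 (by simp)
  · intro h d hd
    have : d = 0 := by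
      rwa [Nat.lt_one_iff, degree_eq_zero_iff] at hd
    rwa [this, coeff_zero_eq_constantCoeff_apply]

/-- The ideal of series with vanishing coefficients below degree `k`. -/
def lowIdeal (k : ℕ) : Ideal Mv where
  carrier := {f | lowC k f}
  add_mem' := lowC_add
  zero_mem' := lowC_zero k
  smul_mem' := by
    intro c f hf d hd
    classical
    rw [smul_eq_mul, coeff_mul]
    refine Finset.sum_eq_zero fun p hp => ?_
    rw [Finset.HasAntidiagonal.mem_antidiagonal] at hp
    have : p.2 ≤ d := le_iff_exists_add.mpr ⟨p.1, by rw [← hp, add_comm]⟩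
    rw [hf p.2 (lt_of_le_of_lt (degree_mono this) hd), mul_zero]

lemma augIdeal_le_lowIdeal : augIdeal (Fin n) R ≤ lowIdeal 1 := by
  rw [augIdeal, Ideal.span_le]
  rintro _ ⟨i, rfl⟩
  rw [SetLike.mem_coe]
  show lowC 1 (X i : Mv)
  rw [lowC_one_iff, constantCoeff_X]

lemma augIdeal_sq_le : (augIdeal (Fin n) R) ^ 2 ≤ lowIdeal 2 := by
  rw [pow_two]
  refine le_trans (Ideal.mul_mono augIdeal_le_lowIdeal augIdeal_le_lowIdeal) ?_
  rw [Ideal.mul_le]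
  intro f hf g hg
  exact lowC_mul (j := 1) (k := 1) hf hg


/-- `PP P d = ∏ i, (P i)^(d i)`. -/
noncomputable def PP (P : Fin n → Mv) (d : Fin n →₀ ℕ) : Mv :=
  d.prod fun i k => P i ^ k

lemma PP_zero (P : Fin n → Mv) : PP P 0 = 1 := Finsupp.prod_zero_index

lemma PP_add (P : Fin n → Mv) (u v : Fin n →₀ ℕ) : PP P (u + v) = PP P u * PP P v :=
  Finsupp.prod_add_index' (fun i => pow_zero (P i)) (fun i k l => pow_add (P i) k l)

lemma PP_single_pow (P : Fin n → Mv) (i : Fin n) (m : ℕ) : PP P (single i m) = P i ^ m := by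
  rcases Nat.eq_zero_or_pos m with rfl | hm
  · rw [single_zero, PP_zero, pow_zero]
  · exact Finsupp.prod_single_index (pow_zero (P i))

lemma PP_single (P : Fin n → Mv) (i : Fin n) : PP P (single i 1) = P i := by
  rw [PP_single_pow, pow_one]

lemma lowC_pow {f : Mv} (hf : lowC 1 f) (k : ℕ) : lowC k (f ^ k) := by
  induction k with
  | zero => intro d hd; omega
  | succ k ih => rw [pow_succ]; exact lowC_mul ih hf

lemma lowC_PP {P : Fin n → Mv} (hP : ∀ i, lowC 1 (P i)) (d : Fin n →₀ ℕ) :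
    lowC d.degree (PP P d) := by
  induction d using Finsupp.induction with
  | zero => rw [PP_zero]; intro d hd; rw [map_zero] at hd; omega
  | single_add i m f hif hm ih =>
    rw [PP_add, degree_add, degree_single, PP_single_pow]
    exact lowC_mul (lowC_pow (hP i) m) ih

lemma lowC_pow_sub {m : ℕ} {f g : Mv} (hf : lowC 1 f) (hg : lowC 1 g)
    (hfg : lowC m (f - g)) (k : ℕ) : lowC (k - 1 + m) (f ^ k - g ^ k) := by
  induction k with
  | zero => simp only [pow_zero, sub_self]; intro d hd; exact map_zero _
  | succ k ih =>
    have key : f ^ (k+1) - g ^ (k+1) = (f - g) * f ^ k + g * (f ^ k - g ^ k) := by ring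
    rw [key]
    rcases Nat.eq_zero_or_pos k with rfl | hk
    · simp only [pow_zero, sub_self, mul_zero, add_zero, mul_one]
      exact lowC_mono (by omega) hfg
    · intro d hd
      rw [map_add, lowC_mul hfg (lowC_pow hf k) d (by omega),
        lowC_mul hg ih d (by omega), add_zero]

lemma lowC_PP_sub {m : ℕ} {P Q : Fin n → Mv} (hP : ∀ i, lowC 1 (P i)) (hQ : ∀ i, lowC 1 (Q i))
    (hPQ : ∀ i, lowC m (P i - Q i)) (d : Fin n →₀ ℕ) :
    lowC (d.degree - 1 + m) (PP P d - PP Q d) := by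
  induction d using Finsupp.induction with
  | zero => rw [PP_zero, PP_zero, sub_self]; intro e _; exact map_zero _
  | single_add i k f hif hk ih =>
    have key : PP P (single i k + f) - PP Q (single i k + f)
        = (P i ^ k - Q i ^ k) * PP P f + Q i ^ k * (PP P f - PP Q f) := by
      rw [PP_add, PP_add, PP_single_pow, PP_single_pow]; ring
    rw [key, degree_add, degree_single]
    intro d hd
    rw [map_add, lowC_mul (lowC_pow_sub (hP i) (hQ i) (hPQ i) k) (lowC_PP hP f) d (by omega),
      lowC_mul (lowC_pow (hQ i) k) ih d (by omega), add_zero]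

lemma monomial_one_eq (d : Fin n →₀ ℕ) : (monomial d 1 : Mv) = PP X d := by
  induction d using Finsupp.induction with
  | zero => rw [PP_zero]; ext e; classical rw [coeff_monomial, coeff_one]
  | single_add i k f hif hk ih =>
    rw [PP_add, PP_single_pow, ← ih, X_pow_eq, monomial_mul_monomial, one_mul]

lemma degree_eq_one {d : Fin n →₀ ℕ} (hd : degree d = 1) : ∃ j, d = single j 1 := by
  have hd0 : d ≠ 0 := by intro h; rw [h, map_zero] at hd; omega
  obtain ⟨j, hj⟩ : ∃ j, d j ≠ 0 := by
    by_contra h; push_neg at h; exact hd0 (Finsupp.ext h)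
  have h1 : d j = 1 := by have := le_degree j d; omega
  have hle : single j 1 ≤ d := by
    rw [Finsupp.single_le_iff, h1]
  refine ⟨j, ?_⟩
  have hsub : (d - single j 1) + single j 1 = d := tsub_add_cancel_of_le hle
  have : degree (d - single j 1) = 0 := by
    have := degree_add (d - single j 1) (single j 1)
    rw [hsub, degree_single, hd] at this; omega
  rw [degree_eq_zero_iff] at this
  rw [← hsub, this, zero_add]

/-- If `P ≡ X mod (deg ≥ 2)` then `PP P d` looks like the monomial `X^d` in degrees `≤ deg d`. -/
lemma coeff_PP_near_X {P : Fin n → Mv} (hP1 : ∀ i, lowC 1 (P i))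
    (hP2 : ∀ i, lowC 2 (P i - X i)) {d e : Fin n →₀ ℕ} (he : degree e ≤ degree d) :
    coeff e (PP P d) = if e = d then 1 else 0 := by
  classical
  have hX1 : ∀ i : Fin n, lowC 1 (X i : Mv) := by
    intro i d hd
    have : d = 0 := by rwa [Nat.lt_one_iff, degree_eq_zero_iff] at hd
    rw [this, coeff_zero_eq_constantCoeff_apply, constantCoeff_X]
  rcases Nat.eq_zero_or_pos (degree d) with h0 | h1
  · have : d = 0 := by rwa [degree_eq_zero_iff] at h0
    subst this
    have : e = 0 := by rw [← degree_eq_zero_iff]; omega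
    subst this
    rw [PP_zero, coeff_zero_eq_constantCoeff_apply, map_one, if_pos rfl]
  · have hdiff := lowC_PP_sub (m := 2) hP1 hX1 hP2 d e (by omega)
    rw [map_sub, sub_eq_zero] at hdiff
    rw [hdiff, ← monomial_one_eq, coeff_monomial]

/-- The finset of exponents of degree at most `N`. -/
noncomputable def Dset (N : ℕ) : Finset (Fin n →₀ ℕ) :=
  (Finsupp.finite_of_degree_le (σ := Fin n) N).toFinset

lemma mem_Dset {N : ℕ} {d : Fin n →₀ ℕ} : d ∈ Dset N ↔ degree d ≤ N := by
  simp [Dset]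

/-- Substitution of the tuple `P` into `f`, defined coefficientwise. -/
noncomputable def S (P : Fin n → Mv) (f : Mv) : Mv :=
  fun e => ∑ d ∈ Dset (n := n) (degree e), coeff d f * coeff e (PP P d)

lemma coeff_S (P : Fin n → Mv) (f : Mv) (e : Fin n →₀ ℕ) :
    coeff e (S P f) = ∑ d ∈ Dset (n := n) (degree e), coeff d f * coeff e (PP P d) := rfl

lemma coeff_S_superset {P : Fin n → Mv} (hP : ∀ i, lowC 1 (P i)) {f : Mv} {e : Fin n →₀ ℕ}
    {T : Finset (Fin n →₀ ℕ)} (hT : ∀ d, degree d ≤ degree e → d ∈ T) :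
    coeff e (S P f) = ∑ d ∈ T, coeff d f * coeff e (PP P d) := by
  rw [coeff_S]
  refine Finset.sum_subset (fun d hd => hT d (mem_Dset.mp hd)) fun d _ hd => ?_
  rw [mem_Dset] at hd
  rw [lowC_PP hP d e (by omega), mul_zero]

lemma S_add (P : Fin n → Mv) (f g : Mv) : S P (f + g) = S P f + S P g := by
  ext e
  simp only [coeff_S, map_add, add_mul, Finset.sum_add_distrib]

lemma S_smul (P : Fin n → Mv) (r : R) (f : Mv) : S P (r • f) = r • S P f := by
  ext e
  simp only [coeff_S, map_smul, smul_eq_mul, Finset.mul_sum, mul_assoc]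

lemma S_zero (P : Fin n → Mv) : S P 0 = 0 := by
  ext e; simp only [coeff_S, map_zero, zero_mul, Finset.sum_const_zero]

lemma S_congr {P : Fin n → Mv} {f g : Mv} {e : Fin n →₀ ℕ}
    (h : ∀ d, degree d ≤ degree e → coeff d f = coeff d g) :
    coeff e (S P f) = coeff e (S P g) := by
  rw [coeff_S, coeff_S]
  exact Finset.sum_congr rfl fun d hd => by rw [h d (mem_Dset.mp hd)]

lemma S_low {P : Fin n → Mv} {k : ℕ} {f : Mv} (hf : lowC k f) : lowC k (S P f) := by
  intro e he
  rw [coeff_S]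
  exact Finset.sum_eq_zero fun d hd => by
    rw [hf d (lt_of_le_of_lt (mem_Dset.mp hd) he), zero_mul]

lemma S_C (P : Fin n → Mv) (r : R) : S P (C r) = C r := by
  classical
  ext e
  rw [coeff_S]
  rw [Finset.sum_eq_single (0 : Fin n →₀ ℕ)]
  · rw [coeff_zero_eq_constantCoeff_apply, constantCoeff_C, PP_zero, coeff_one, coeff_C]
    split_ifs <;> simp
  · intro d _ hd0
    rw [coeff_C, if_neg hd0, zero_mul]
  · intro h
    exact absurd (mem_Dset.mpr (by rw [map_zero]; omega)) h

lemma S_X {P : Fin n → Mv} (hP : ∀ i, lowC 1 (P i)) (i : Fin n) : S P (X i) = P i := by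
  classical
  ext e
  rw [coeff_S]
  rcases Nat.eq_zero_or_pos (degree e) with h0 | h1
  · have he : e = 0 := by rwa [degree_eq_zero_iff] at h0
    rw [Finset.sum_eq_zero, he, coeff_zero_eq_constantCoeff_apply,
      ← coeff_zero_eq_constantCoeff_apply, hP i 0 (by rw [map_zero]; omega)]
    intro d hd
    have hd0 : d = 0 := by
      have := mem_Dset.mp hd; rw [h0, Nat.le_zero, degree_eq_zero_iff] at this; exact this
    have : d ≠ single i 1 := by
      rw [hd0]; intro h
      have := degree_single i 1; rw [← h, map_zero] at this; omega
    rw [coeff_X, if_neg this, zero_mul]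
  · rw [Finset.sum_eq_single (single i 1)]
    · rw [coeff_X, if_pos rfl, PP_single, one_mul]
    · intro d _ hd
      rw [coeff_X, if_neg hd, zero_mul]
    · intro h
      exact absurd (mem_Dset.mpr (by rw [degree_single]; omega)) h

lemma S_id (f : Mv) : S (X : Fin n → Mv) f = f := by
  classical
  ext e
  rw [coeff_S, Finset.sum_eq_single e]
  · rw [← monomial_one_eq, coeff_monomial_same, mul_one]
  · intro d _ hd
    rw [← monomial_one_eq, coeff_monomial, if_neg (Ne.symm hd), mul_zero]
  · intro h
    exact absurd (mem_Dset.mpr le_rfl) h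

lemma S_mul {P : Fin n → Mv} (hP : ∀ i, lowC 1 (P i)) (f g : Mv) :
    S P (f * g) = S P f * S P g := by
  classical
  ext e
  set T := Dset (n := n) (degree e) with hT
  have hmemT : ∀ d : Fin n →₀ ℕ, degree d ≤ degree e → d ∈ T := fun d hd => mem_Dset.mpr hd
  set F : (Fin n →₀ ℕ) × (Fin n →₀ ℕ) → R :=
    fun p => coeff p.1 f * coeff p.2 g * coeff e (PP P (p.1 + p.2)) with hF
  have step1 : coeff e (S P (f * g)) = ∑ d ∈ T, ∑ p ∈ Finset.HasAntidiagonal.antidiagonal d, F p := by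
    rw [coeff_S]
    refine Finset.sum_congr rfl fun d _ => ?_
    rw [coeff_mul, Finset.sum_mul]
    refine Finset.sum_congr rfl fun p hp => ?_
    rw [Finset.HasAntidiagonal.mem_antidiagonal] at hp
    subst hp; rfl
  have hdisj : (↑T : Set (Fin n →₀ ℕ)).PairwiseDisjoint Finset.HasAntidiagonal.antidiagonal := by
    intro d1 _ d2 _ hne
    simp only [Function.onFun, Finset.disjoint_left]
    intro p hp1 hp2
    rw [Finset.HasAntidiagonal.mem_antidiagonal] at hp1 hp2
    exact hne (hp1 ▸ hp2)
  have step2 : ∑ d ∈ T, ∑ p ∈ Finset.HasAntidiagonal.antidiagonal d, F p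
      = ∑ p ∈ T.biUnion Finset.HasAntidiagonal.antidiagonal, F p := (Finset.sum_biUnion hdisj).symm
  have hsub : T.biUnion Finset.HasAntidiagonal.antidiagonal ⊆ T ×ˢ T := by
    intro p hp
    rw [Finset.mem_biUnion] at hp
    obtain ⟨d, hd, hpd⟩ := hp
    rw [Finset.HasAntidiagonal.mem_antidiagonal] at hpd
    have hd' : degree d ≤ degree e := mem_Dset.mp hd
    have hle : degree p.1 + degree p.2 = degree d := by rw [← degree_add, hpd]
    exact Finset.mem_product.mpr ⟨hmemT _ (by omega), hmemT _ (by omega)⟩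
  have hvan : ∀ p ∈ T ×ˢ T, p ∉ T.biUnion Finset.HasAntidiagonal.antidiagonal → F p = 0 := by
    intro p _ hp
    have hnot : p.1 + p.2 ∉ T := by
      intro hmem
      exact hp (Finset.mem_biUnion.mpr ⟨p.1 + p.2, hmem, Finset.HasAntidiagonal.mem_antidiagonal.mpr rfl⟩)
    rw [mem_Dset, not_le] at hnot
    rw [hF]
    simp only
    rw [lowC_PP hP _ e hnot, mul_zero]
  have step3 : ∑ p ∈ T.biUnion Finset.HasAntidiagonal.antidiagonal, F p = ∑ p ∈ T ×ˢ T, F p :=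
    Finset.sum_subset hsub hvan
  have step3' : ∑ p ∈ T ×ˢ T, F p
      = ∑ u ∈ T, ∑ v ∈ T, coeff u f * coeff v g * coeff e (PP P (u + v)) := by
    rw [Finset.sum_product]
  have step4 : coeff e (S P f * S P g)
      = ∑ u ∈ T, ∑ v ∈ T, coeff u f * coeff v g * coeff e (PP P (u + v)) := by
    rw [coeff_mul]
    have key : ∀ q ∈ Finset.HasAntidiagonal.antidiagonal e,
        coeff q.1 (S P f) * coeff q.2 (S P g)
          = ∑ u ∈ T, ∑ v ∈ T, coeff u f * coeff v g
              * (coeff q.1 (PP P u) * coeff q.2 (PP P v)) := by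
      intro q hq
      rw [Finset.HasAntidiagonal.mem_antidiagonal] at hq
      have h1 : degree q.1 ≤ degree e := by
        have := degree_add q.1 q.2; rw [hq] at this; omega
      have h2 : degree q.2 ≤ degree e := by
        have := degree_add q.1 q.2; rw [hq] at this; omega
      rw [coeff_S_superset hP (fun d hd => hmemT d (le_trans hd h1)),
        coeff_S_superset hP (fun d hd => hmemT d (le_trans hd h2)),
        Finset.sum_mul_sum]
      refine Finset.sum_congr rfl fun u _ => ?_
      refine Finset.sum_congr rfl fun v _ => ?_
      ring
    rw [Finset.sum_congr rfl key, Finset.sum_comm]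
    refine Finset.sum_congr rfl fun u _ => ?_
    rw [Finset.sum_comm]
    refine Finset.sum_congr rfl fun v _ => ?_
    rw [PP_add, coeff_mul, Finset.mul_sum]
  rw [step1, step2, step3, step3', step4]

/-- Substitution as an `R`-algebra homomorphism. -/
noncomputable def SAlg (P : Fin n → Mv) (hP : ∀ i, lowC 1 (P i)) : Mv →ₐ[R] Mv where
  toFun := S P
  map_one' := by have := S_C P 1; rwa [map_one] at this
  map_mul' := S_mul hP
  map_zero' := S_zero P
  map_add' := S_add P
  commutes' := fun r => S_C P r

@[simp] lemma SAlg_apply (P : Fin n → Mv) (hP : ∀ i, lowC 1 (P i)) (f : Mv) :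
    SAlg P hP f = S P f := rfl

/-- `f` is supported in total degree exactly `m`. -/
def levelOnly (m : ℕ) (f : Mv) : Prop := ∀ e : Fin n →₀ ℕ, degree e ≠ m → coeff e f = 0

lemma levelOnly.lowC {m : ℕ} {f : Mv} (h : levelOnly m f) : lowC m f :=
  fun d hd => h d (by omega)

lemma S_level {P : Fin n → Mv} (hP1 : ∀ i, lowC 1 (P i)) (hP2 : ∀ i, lowC 2 (P i - X i))
    {f : Mv} {m : ℕ} (hf : lowC m f) {e : Fin n →₀ ℕ} (he : degree e = m) :
    coeff e (S P f) = coeff e f := by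
  classical
  rw [coeff_S, Finset.sum_eq_single e]
  · rw [coeff_PP_near_X hP1 hP2 le_rfl, if_pos rfl, mul_one]
  · intro d hd hne
    have hdle : degree d ≤ degree e := mem_Dset.mp hd
    rcases lt_or_eq_of_le hdle with h | h
    · rw [hf d (by omega), zero_mul]
    · rw [coeff_PP_near_X hP1 hP2 h.ge, if_neg (Ne.symm hne), mul_zero]
  · intro h
    exact absurd (mem_Dset.mpr le_rfl) h

lemma S_tuple_congr {P Q : Fin n → Mv} (hP1 : ∀ i, lowC 1 (P i)) (hQ1 : ∀ i, lowC 1 (Q i))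
    {N : ℕ} (h : ∀ i d, degree d ≤ N → coeff d (P i) = coeff d (Q i))
    {f : Mv} {e : Fin n →₀ ℕ} (he : degree e ≤ N) :
    coeff e (S P f) = coeff e (S Q f) := by
  rw [coeff_S, coeff_S]
  refine Finset.sum_congr rfl fun d _ => ?_
  rcases eq_or_ne d 0 with rfl | hd0
  · rw [PP_zero, PP_zero]
  · have hd1 : 1 ≤ degree d := by
      rcases Nat.eq_zero_or_pos (degree d) with h0 | h1
      · exact absurd (degree_eq_zero_iff d |>.mp h0) hd0
      · omega
    have hPQ : ∀ i, lowC (N + 1) (P i - Q i) := by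
      intro i dd hdd
      rw [map_sub, h i dd (by omega), sub_self]
    have := lowC_PP_sub hP1 hQ1 hPQ d e (by omega)
    rw [map_sub, sub_eq_zero] at this
    rw [this]

lemma S_tuple_perturb {Q s : Fin n → Mv} (hQ1 : ∀ i, lowC 1 (Q i))
    (hQ2 : ∀ i, lowC 2 (Q i - X i)) {m : ℕ} (hm : 2 ≤ m) (hs : ∀ j, lowC m (s j))
    {g : Mv} {e : Fin n →₀ ℕ} (he : degree e = m) :
    coeff e (S (fun j => Q j + s j) g)
      = coeff e (S Q g) + ∑ j, coeff (single j 1) g * coeff e (s j) := by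
  classical
  have hQ'1 : ∀ i, lowC 1 (Q i + s i) :=
    fun i => lowC_add (hQ1 i) (lowC_mono (by omega) (hs i))
  have key1 : ∀ j : Fin n, coeff e (PP (fun j => Q j + s j) (single j 1))
      - coeff e (PP Q (single j 1)) = coeff e (s j) := by
    intro j
    rw [PP_single, PP_single, map_add]
    ring
  have key2 : ∀ d ∈ Dset (n := n) (degree e), degree d ≠ 1 →
      coeff e (PP (fun j => Q j + s j) d) - coeff e (PP Q d) = 0 := by
    intro d _ h1
    rcases eq_or_ne d 0 with rfl | hd0
    · rw [PP_zero, PP_zero, sub_self]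
    · have h2 : 2 ≤ degree d := by
        have : degree d ≠ 0 := fun h => hd0 ((degree_eq_zero_iff d).mp h)
        omega
      have hPQ : ∀ j, lowC m ((Q j + s j) - Q j) := fun j => by
        rw [add_sub_cancel_left]; exact hs j
      have := lowC_PP_sub hQ'1 hQ1 hPQ d e (by omega)
      rw [map_sub] at this
      exact this
  have split : coeff e (S (fun j => Q j + s j) g)
      = coeff e (S Q g) + ∑ d ∈ Dset (n := n) (degree e),
          coeff d g * (coeff e (PP (fun j => Q j + s j) d) - coeff e (PP Q d)) := by
    rw [coeff_S, coeff_S, ← Finset.sum_add_distrib]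
    refine Finset.sum_congr rfl fun d _ => by ring
  rw [split]
  congr 1
  have himg : Finset.image (fun j : Fin n => single j (1:ℕ)) Finset.univ
      ⊆ Dset (n := n) (degree e) := by
    intro d hd
    rw [Finset.mem_image] at hd
    obtain ⟨j, _, rfl⟩ := hd
    rw [mem_Dset, degree_single]; omega
  rw [← Finset.sum_subset himg (fun d hd hnot => by
    rw [key2 d hd (fun h1 => hnot (by
      obtain ⟨j, rfl⟩ := degree_eq_one h1
      exact Finset.mem_image_of_mem _ (Finset.mem_univ j))), mul_zero])]
  rw [Finset.sum_image (fun a _ b _ hab => (Finsupp.single_left_inj one_ne_zero).mp hab)]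
  exact Finset.sum_congr rfl fun j _ => by rw [key1 j]

/-- Truncation to a single total degree. -/
noncomputable def levelTrunc (m : ℕ) (f : Mv) : Mv :=
  fun e => if degree e = m then coeff e f else 0

lemma coeff_levelTrunc (m : ℕ) (f : Mv) (e : Fin n →₀ ℕ) :
    coeff e (levelTrunc m f) = if degree e = m then coeff e f else 0 := rfl

lemma levelTrunc_levelOnly (m : ℕ) (f : Mv) : levelOnly m (levelTrunc m f) := by
  intro e he; rw [coeff_levelTrunc, if_neg he]

noncomputable def invApprox (P : Fin n → Mv) (g : Mv) : ℕ → Mv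
  | 0 => 0
  | m+1 => invApprox P g m + levelTrunc m (g - S P (invApprox P g m))

lemma invApprox_stab (P : Fin n → Mv) (g : Mv) {m m' : ℕ} (h : m ≤ m') {e : Fin n →₀ ℕ}
    (he : degree e < m) : coeff e (invApprox P g m') = coeff e (invApprox P g m) := by
  induction m' with
  | zero => omega
  | succ k ih =>
    rcases Nat.lt_or_ge m (k+1) with hk | hk
    · rw [invApprox, map_add, coeff_levelTrunc, if_neg (by omega), add_zero, ih (by omega)]
    · have : m = k + 1 := by omega
      rw [this]

lemma invApprox_solves {P : Fin n → Mv} (hP1 : ∀ i, lowC 1 (P i))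
    (hP2 : ∀ i, lowC 2 (P i - X i)) (g : Mv) :
    ∀ m, ∀ e : Fin n →₀ ℕ, degree e < m → coeff e (S P (invApprox P g m)) = coeff e g := by
  intro m
  induction m with
  | zero => intro e he; omega
  | succ k ih =>
    intro e he
    rw [invApprox, S_add, map_add]
    have hlow : lowC k (levelTrunc k (g - S P (invApprox P g k))) :=
      (levelTrunc_levelOnly _ _).lowC
    rcases Nat.lt_or_ge (degree e) k with hk | hk
    · rw [S_low hlow e hk, add_zero, ih e hk]
    · have hek : degree e = k := by omega
      rw [S_level hP1 hP2 hlow hek, coeff_levelTrunc, if_pos hek, map_sub]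
      ring

lemma S_surjective {P : Fin n → Mv} (hP1 : ∀ i, lowC 1 (P i))
    (hP2 : ∀ i, lowC 2 (P i - X i)) : Function.Surjective (S P) := by
  intro g
  refine ⟨fun e => invApprox P g (degree e + 1) e, ?_⟩
  ext e
  have hagree : ∀ d : Fin n →₀ ℕ, degree d ≤ degree e →
      coeff d (fun e' => invApprox P g (degree e' + 1) e' : Mv)
        = coeff d (invApprox P g (degree e + 1)) := by
    intro d hd
    show coeff d (invApprox P g (degree d + 1)) = _
    rw [invApprox_stab P g (show degree d + 1 ≤ degree e + 1 by omega) (by omega)]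
  rw [S_congr hagree, invApprox_solves hP1 hP2 g (degree e + 1) e (by omega)]

lemma S_injective {P : Fin n → Mv} (hP1 : ∀ i, lowC 1 (P i))
    (hP2 : ∀ i, lowC 2 (P i - X i)) : Function.Injective (S P) := by
  intro f g hfg
  by_contra hne
  have hsub : S P (f - g) = 0 := by
    have := map_sub (SAlg P hP1) f g
    simp only [SAlg_apply] at this
    rw [this, hfg, sub_self]
  set h := f - g with hh
  have hh0 : h ≠ 0 := sub_ne_zero_of_ne hne
  obtain ⟨e0, he0⟩ : ∃ e, coeff e h ≠ 0 := by
    by_contra hc; push_neg at hc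
    exact hh0 (MvPowerSeries.ext hc)
  have hex : ∃ k, ∃ e : Fin n →₀ ℕ, degree e = k ∧ coeff e h ≠ 0 := ⟨_, e0, rfl, he0⟩
  classical
  obtain ⟨e, hedeg, hene⟩ := Nat.find_spec hex
  have hlow : lowC (Nat.find hex) h := by
    intro d hd
    by_contra hd0
    exact absurd ⟨d, rfl, hd0⟩ (Nat.find_min hex hd)
  have := S_level hP1 hP2 hlow hedeg
  rw [hsub, map_zero] at this
  exact hene this.symm

/-- Substitution by a tuple `≡ X mod M²` is an algebra automorphism. -/
noncomputable def SEquiv (P : Fin n → Mv) (hP1 : ∀ i, lowC 1 (P i))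
    (hP2 : ∀ i, lowC 2 (P i - X i)) : Mv ≃ₐ[R] Mv :=
  AlgEquiv.ofBijective (SAlg P hP1) ⟨S_injective hP1 hP2, S_surjective hP1 hP2⟩

@[simp] lemma SEquiv_apply (P : Fin n → Mv) (hP1 : ∀ i, lowC 1 (P i))
    (hP2 : ∀ i, lowC 2 (P i - X i)) (f : Mv) : SEquiv P hP1 hP2 f = S P f := rfl

/-- Rescaling: `X_i ↦ u X_i`, i.e. multiply the degree-`k` part by `u^k`. -/
noncomputable def resc (u : R) (f : Mv) : Mv := fun e => u ^ degree e * coeff e f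

lemma coeff_resc (u : R) (f : Mv) (e : Fin n →₀ ℕ) :
    coeff e (resc u f) = u ^ degree e * coeff e f := rfl

lemma resc_add (u : R) (f g : Mv) : resc u (f + g) = resc u f + resc u g := by
  ext e; rw [map_add, coeff_resc, coeff_resc, coeff_resc, map_add]; ring

lemma resc_smul (u r : R) (f : Mv) : resc u (r • f) = r • resc u f := by
  ext e; rw [map_smul, coeff_resc, coeff_resc, map_smul, smul_eq_mul, smul_eq_mul]; ring

lemma resc_X (u : R) (i : Fin n) : resc u (X i : Mv) = u • (X i : Mv) := by
  classical
  ext e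
  rw [coeff_resc, map_smul, smul_eq_mul, coeff_X]
  split_ifs with h
  · rw [h, degree_single, pow_one]
  · ring

lemma resc_lowC (u : R) {k : ℕ} {f : Mv} (hf : lowC k f) : lowC k (resc u f) := by
  intro d hd; rw [coeff_resc, hf d hd, mul_zero]

lemma resc_levelOnly (u : R) {k : ℕ} {f : Mv} (hf : levelOnly k f) :
    levelOnly k (resc u f) := by
  intro d hd; rw [coeff_resc, hf d hd, mul_zero]

/-- Rescaling as an algebra homomorphism. -/
noncomputable def rescHom (u : R) : Mv →ₐ[R] Mv where
  toFun := resc u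
  map_one' := by
    ext e
    classical
    rw [coeff_resc, coeff_one]
    split_ifs with h
    · rw [h, map_zero, pow_zero, one_mul]
    · rw [mul_zero]
  map_mul' := by
    intro f g
    ext e
    classical
    rw [coeff_resc, coeff_mul, coeff_mul, Finset.mul_sum]
    refine Finset.sum_congr rfl fun p hp => ?_
    rw [Finset.HasAntidiagonal.mem_antidiagonal] at hp
    rw [coeff_resc, coeff_resc, ← hp, degree_add, pow_add]
    ring
  map_zero' := by ext e; rw [coeff_resc, map_zero, mul_zero]
  map_add' := resc_add u
  commutes' := by
    intro r
    ext e
    classical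
    show coeff e (resc u (C r)) = coeff e (C r)
    rw [coeff_resc, coeff_C]
    split_ifs with h
    · rw [h, map_zero, pow_zero, one_mul]
    · rw [mul_zero]

lemma resc_resc (u v : R) (f : Mv) : resc u (resc v f) = resc (u * v) f := by
  ext e; rw [coeff_resc, coeff_resc, coeff_resc, mul_pow]; ring

lemma resc_one_apply (f : Mv) : resc (1 : R) f = f := by
  ext e; rw [coeff_resc, one_pow, one_mul]

/-- Rescaling by a unit, as an algebra automorphism. -/
noncomputable def rescEquiv (u : Rˣ) : Mv ≃ₐ[R] Mv :=
  AlgEquiv.ofAlgHom (rescHom (u : R)) (rescHom ((u⁻¹ : Rˣ) : R))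
    (AlgHom.ext fun f => by
      show resc (u : R) (resc ((u⁻¹ : Rˣ) : R) f) = f
      rw [resc_resc, Units.mul_inv]
      exact resc_one_apply f)
    (AlgHom.ext fun f => by
      show resc ((u⁻¹ : Rˣ) : R) (resc (u : R) f) = f
      rw [resc_resc, Units.inv_mul]
      exact resc_one_apply f)

lemma rescEquiv_apply (u : Rˣ) (f : Mv) : rescEquiv u f = resc (u : R) f := rfl

/-- A coefficientwise-finitely-determined map is continuous for the product topology. -/
lemma continuous_of_coeff_dep {F : Mv → Mv}
    (h : ∀ e : Fin n →₀ ℕ, ∃ T : Finset (Fin n →₀ ℕ), ∀ f g : Mv,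
      (∀ d ∈ T, coeff d f = coeff d g) → coeff e (F f) = coeff e (F g)) :
    @Continuous _ _ (mvPiTopology (Fin n) R) (mvPiTopology (Fin n) R) F := by
  letI : TopologicalSpace R := ⊥
  haveI : DiscreteTopology R := ⟨rfl⟩
  letI : TopologicalSpace Mv := mvPiTopology (Fin n) R
  refine continuous_pi fun e => ?_
  obtain ⟨T, hT⟩ := h e
  classical
  have hfac : (fun f : Mv => coeff e (F f))
      = (fun v : (↥T → R) => coeff e (F (fun d => if hd : d ∈ T then v ⟨d, hd⟩ else 0)))
        ∘ (fun (f : Mv) (t : ↥T) => coeff (↑t) f) := by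
    funext f
    refine hT f _ fun d hd => ?_
    show coeff d f = if h : d ∈ T then coeff d f else 0
    rw [dif_pos hd]
  show Continuous fun f : Mv => coeff e (F f)
  rw [hfac]
  have h1 : Continuous fun (f : Mv) (t : ↥T) => coeff (↑t) f :=
    continuous_pi fun t => continuous_apply (↑t : Fin n →₀ ℕ)
  exact (continuous_of_discreteTopology).comp h1

lemma S_continuous (P : Fin n → Mv) :
    @Continuous _ _ (mvPiTopology (Fin n) R) (mvPiTopology (Fin n) R) (S P) :=
  continuous_of_coeff_dep fun e =>
    ⟨Dset (n := n) (degree e), fun _ _ h => S_congr fun d hd => h d (mem_Dset.mpr hd)⟩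

lemma resc_continuous (u : R) :
    @Continuous _ _ (mvPiTopology (Fin n) R) (mvPiTopology (Fin n) R) (resc u) :=
  continuous_of_coeff_dep fun e =>
    ⟨{e}, fun f g h => by
      rw [coeff_resc, coeff_resc, h e (Finset.mem_singleton_self e)]⟩

/-- Continuous algebra homomorphisms agreeing on the variables agree everywhere. -/
lemma continuous_algHom_ext {φ ψ : Mv →ₐ[R] Mv}
    (hφ : @Continuous _ _ (mvPiTopology (Fin n) R) (mvPiTopology (Fin n) R) φ)
    (hψ : @Continuous _ _ (mvPiTopology (Fin n) R) (mvPiTopology (Fin n) R) ψ)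
    (hX : ∀ i, φ (X i) = ψ (X i)) : ∀ f, φ f = ψ f := by
  classical
  letI : TopologicalSpace R := ⊥
  haveI : DiscreteTopology R := ⟨rfl⟩
  have hmono : ∀ (d : Fin n →₀ ℕ) (r : R), φ (monomial d r) = ψ (monomial d r) := by
    intro d r
    have h1 : (monomial d r : Mv) = r • monomial d 1 := by
      rw [← map_smul, smul_eq_mul, mul_one]
    rw [h1, map_smul, map_smul, monomial_one_eq]
    have h2 : ∀ (χ : Mv →ₐ[R] Mv), χ (PP (X : Fin n → Mv) d) = PP (fun i => χ (X i)) d := by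
      intro χ
      rw [PP, PP, map_finsuppProd]
      exact Finsupp.prod_congr fun i _ => map_pow χ _ _
    rw [h2 φ, h2 ψ]
    exact congrArg (fun z : Mv => r • z)
      (congrArg (fun Pt : Fin n → Mv => PP Pt d) (funext fun i => hX i))
  have hbox : ∀ (χ : Mv →ₐ[R] Mv),
      @Continuous _ _ (mvPiTopology (Fin n) R) (mvPiTopology (Fin n) R) χ →
      ∀ (f : Mv) (e : Fin n →₀ ℕ), ∃ T : Finset (Fin n →₀ ℕ), ∀ g : Mv,
        (∀ d ∈ T, coeff d g = coeff d f) → coeff e (χ g) = coeff e (χ f) := by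
    intro χ hχ f e
    letI : TopologicalSpace R := ⊥
    haveI : DiscreteTopology R := ⟨rfl⟩
    letI tMv : TopologicalSpace Mv := mvPiTopology (Fin n) R
    have hc : Continuous fun g : Mv => coeff e (χ g) := by
      have : Continuous fun h : Mv => coeff e h := continuous_apply e
      exact this.comp hχ
    have hopen : IsOpen {g : Mv | coeff e (χ g) = coeff e (χ f)} := by
      have : IsOpen ({coeff e (χ f)} : Set R) := isOpen_discrete _
      exact hc.isOpen_preimage _ this
    replace hopen := (isOpen_pi_iff (A := fun _ : Fin n →₀ ℕ => R)
      (s := {g : Mv | coeff e (χ g) = coeff e (χ f)})).mp hopen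
    obtain ⟨I, u, hIu, hsub⟩ := hopen f rfl
    refine ⟨I, fun g hg => ?_⟩
    have : g ∈ (↑I : Set (Fin n →₀ ℕ)).pi u := by
      intro d hd
      have := (hIu d hd).2
      rw [show (g : (Fin n →₀ ℕ) → R) d = f d from hg d hd]
      exact this
    exact hsub this
  intro f
  ext e
  obtain ⟨T1, hT1⟩ := hbox φ hφ f e
  obtain ⟨T2, hT2⟩ := hbox ψ hψ f e
  set g : Mv := ∑ d ∈ T1 ∪ T2, monomial d (coeff d f) with hg
  have hgf : ∀ d ∈ T1 ∪ T2, coeff d g = coeff d f := by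
    intro d hd
    rw [hg, map_sum, Finset.sum_eq_single d]
    · rw [coeff_monomial_same]
    · intro d' _ hne
      rw [coeff_monomial_ne (Ne.symm hne)]
    · intro h; exact absurd hd h
  have hφg : φ g = ψ g := by
    rw [hg, map_sum, map_sum]
    exact Finset.sum_congr rfl fun d _ => hmono d _
  calc coeff e (φ f) = coeff e (φ g) :=
        (hT1 g fun d hd => hgf d (Finset.mem_union_left _ hd)).symm
    _ = coeff e (ψ g) := by rw [hφg]
    _ = coeff e (ψ f) := hT2 g fun d hd => hgf d (Finset.mem_union_right _ hd)

lemma lowC_X (i : Fin n) : lowC 1 (X i : Mv) := by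
  intro d hd
  have : d = 0 := by rwa [Nat.lt_one_iff, degree_eq_zero_iff] at hd
  rw [this, coeff_zero_eq_constantCoeff_apply, constantCoeff_X]

/-- A "good" substitution tuple: `P ≡ X mod M²`. -/
def Good (P : Fin n → Mv) : Prop := (∀ i, lowC 1 (P i)) ∧ (∀ i, lowC 2 (P i - X i))

lemma good_X : Good (X : Fin n → Mv) := by
  refine ⟨lowC_X, fun i d hd => ?_⟩
  rw [sub_self, map_zero]

lemma good_perturb {P t : Fin n → Mv} (hP : Good P) (ht : ∀ i, lowC 2 (t i)) :
    Good (fun i => P i + t i) := by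
  constructor
  · exact fun i => lowC_add (hP.1 i) (lowC_mono (by omega) (ht i))
  · intro i
    have : P i + t i - X i = (P i - X i) + t i := by ring
    rw [this]
    exact lowC_add (hP.2 i) (ht i)

lemma good_linear_coeff {P : Fin n → Mv} (hP : Good P) (i j : Fin n) :
    coeff (single j 1) (P i) = if j = i then 1 else 0 := by
  classical
  have h := hP.2 i (single j 1) (by rw [degree_single]; omega)
  rw [map_sub, sub_eq_zero] at h
  rw [h, coeff_X]
  by_cases hji : j = i
  · rw [if_pos (by rw [hji]), if_pos hji]
  · rw [if_neg (fun hc => hji ((Finsupp.single_left_inj one_ne_zero).mp hc)), if_neg hji]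

lemma levelOnly_smul_levelTrunc (r : R) (m : ℕ) (f : Mv) :
    levelOnly m (r • levelTrunc m f) := by
  intro e he
  rw [map_smul, smul_eq_mul, coeff_levelTrunc, if_neg he, mul_zero]

section MainConstruction

variable (b c : Rˣ)

/-- `Lf P Q i = (α ∘ γ ∘ β)(X i)` where `β = S_P ∘ σ_b`, `γ = S_Q ∘ σ_c`, `α = S_A`,
with the scalar `b` pulled out. -/
noncomputable def Lf (A : Fin n → Mv) (P Q : Fin n → Mv) (i : Fin n) : Mv :=
  (b : R) • S A (S Q (resc (c : R) (P i)))

/-- `Rf P Q i = (β ∘ γ)(X i)` with the scalar `c` pulled out. -/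
noncomputable def Rf (P Q : Fin n → Mv) (i : Fin n) : Mv :=
  (c : R) • S P (resc (b : R) (Q i))

/-- One step of the successive-approximation: correct the degree-`m` discrepancy. -/
noncomputable def stepT (A : Fin n → Mv) (xy : ℕ → R × R) (m : ℕ)
    (PQ : (Fin n → Mv) × (Fin n → Mv)) : (Fin n → Mv) × (Fin n → Mv) :=
  (fun i => PQ.1 i + ((xy (m-1)).2 * (((b⁻¹ : Rˣ) : R) * ((c⁻¹ : Rˣ) : R))) •
      levelTrunc m (Rf b c PQ.1 PQ.2 i - Lf b c A PQ.1 PQ.2 i),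
   fun i => PQ.2 i + (-(xy (m-1)).1 * (((b⁻¹ : Rˣ) : R) * ((c⁻¹ : Rˣ) : R))) •
      levelTrunc m (Rf b c PQ.1 PQ.2 i - Lf b c A PQ.1 PQ.2 i))

/-- The successive approximations: `PQa m` is correct in degrees `≤ m`. -/
noncomputable def PQa (A : Fin n → Mv) (xy : ℕ → R × R) : ℕ → (Fin n → Mv) × (Fin n → Mv)
  | 0 => (X, X)
  | 1 => (X, X)
  | (m+2) => stepT b c A xy (m+2) (PQa A xy (m+1))

lemma PQa_good (A : Fin n → Mv) (xy : ℕ → R × R) :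
    ∀ m, Good (PQa b c A xy m).1 ∧ Good (PQa b c A xy m).2
  | 0 => ⟨good_X, good_X⟩
  | 1 => ⟨good_X, good_X⟩
  | (m+2) => by
    obtain ⟨h1, h2⟩ := PQa_good A xy (m+1)
    constructor
    · exact good_perturb h1 fun i =>
        lowC_mono (by omega) (levelOnly_smul_levelTrunc _ (m+2) _).lowC
    · exact good_perturb h2 fun i =>
        lowC_mono (by omega) (levelOnly_smul_levelTrunc _ (m+2) _).lowC

lemma PQa_stab (A : Fin n → Mv) (xy : ℕ → R × R) {m m' : ℕ} (h : m ≤ m') {e : Fin n →₀ ℕ}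
    (he : degree e ≤ m) (i : Fin n) :
    coeff e ((PQa b c A xy m').1 i) = coeff e ((PQa b c A xy m).1 i) ∧
    coeff e ((PQa b c A xy m').2 i) = coeff e ((PQa b c A xy m).2 i) := by
  induction m' with
  | zero =>
    have : m = 0 := by omega
    rw [this]
    exact ⟨rfl, rfl⟩
  | succ k ih =>
    rcases Nat.lt_or_ge m (k+1) with hk | hk
    · have hkm : m ≤ k := by omega
      obtain ⟨ih1, ih2⟩ := ih hkm
      rcases Nat.eq_zero_or_pos k with rfl | hkpos
      · exact ⟨ih1, ih2⟩
      · obtain ⟨k', rfl⟩ : ∃ k', k = k' + 1 := ⟨k - 1, by omega⟩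
        constructor
        · rw [PQa, stepT, map_add, map_smul, smul_eq_mul, coeff_levelTrunc,
            if_neg (by omega), mul_zero, add_zero]
          exact ih1
        · rw [PQa, stepT, map_add, map_smul, smul_eq_mul, coeff_levelTrunc,
            if_neg (by omega), mul_zero, add_zero]
          exact ih2
    · have : m = k + 1 := by omega
      rw [this]
      exact ⟨rfl, rfl⟩

lemma Lf_congr (A : Fin n → Mv) {P Q P' Q' : Fin n → Mv}
    (hQ1 : ∀ i, lowC 1 (Q i)) (hQ'1 : ∀ i, lowC 1 (Q' i)) {N : ℕ}
    (hPP : ∀ i d, degree d ≤ N → coeff d (P i) = coeff d (P' i))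
    (hQQ : ∀ i d, degree d ≤ N → coeff d (Q i) = coeff d (Q' i))
    {e : Fin n →₀ ℕ} (he : degree e ≤ N) (i : Fin n) :
    coeff e (Lf b c A P Q i) = coeff e (Lf b c A P' Q' i) := by
  rw [Lf, Lf, map_smul, map_smul, smul_eq_mul, smul_eq_mul]
  congr 1
  refine S_congr fun d hd => ?_
  have h1 : coeff d (S Q (resc (c:R) (P i))) = coeff d (S Q' (resc (c:R) (P i))) :=
    S_tuple_congr hQ1 hQ'1 hQQ (le_trans hd he)
  have h2 : coeff d (S Q' (resc (c:R) (P i))) = coeff d (S Q' (resc (c:R) (P' i))) :=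
    S_congr fun u hu => by
      rw [coeff_resc, coeff_resc, hPP i u (le_trans (le_trans hu hd) he)]
  rw [h1, h2]

lemma Rf_congr {P Q P' Q' : Fin n → Mv}
    (hP1 : ∀ i, lowC 1 (P i)) (hP'1 : ∀ i, lowC 1 (P' i)) {N : ℕ}
    (hPP : ∀ i d, degree d ≤ N → coeff d (P i) = coeff d (P' i))
    (hQQ : ∀ i d, degree d ≤ N → coeff d (Q i) = coeff d (Q' i))
    {e : Fin n →₀ ℕ} (he : degree e ≤ N) (i : Fin n) :
    coeff e (Rf b c P Q i) = coeff e (Rf b c P' Q' i) := by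
  rw [Rf, Rf, map_smul, map_smul, smul_eq_mul, smul_eq_mul]
  congr 1
  have h1 : coeff e (S P (resc (b:R) (Q i))) = coeff e (S P' (resc (b:R) (Q i))) :=
    S_tuple_congr hP1 hP'1 hPP he
  have h2 : coeff e (S P' (resc (b:R) (Q i))) = coeff e (S P' (resc (b:R) (Q' i))) :=
    S_congr fun u hu => by
      rw [coeff_resc, coeff_resc, hQQ i u (le_trans hu he)]
  rw [h1, h2]

lemma Lf_perturb (A : Fin n → Mv) (hA1 : ∀ i, lowC 1 (A i)) (hA2 : ∀ i, lowC 2 (A i - X i))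
    {P Q t s : Fin n → Mv} (hP : Good P) (hQ : Good Q)
    {M : ℕ} (hM : 2 ≤ M) (ht : ∀ i, levelOnly M (t i)) (hs : ∀ i, levelOnly M (s i))
    {e : Fin n →₀ ℕ} (he : degree e = M) (i : Fin n) :
    coeff e (Lf b c A (fun j => P j + t j) (fun j => Q j + s j) i)
      = coeff e (Lf b c A P Q i)
        + (b : R) * ((c : R) ^ M * coeff e (t i) + (c : R) * coeff e (s i)) := by
  have hslow : ∀ j, lowC M (s j) := fun j => (hs j).lowC
  have htlow : ∀ j, lowC M (t j) := fun j => (ht j).lowC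
  have hQ' : Good (fun j => Q j + s j) :=
    good_perturb hQ fun j => lowC_mono hM (hslow j)
  -- the new inner series
  have hexp : S (fun j => Q j + s j) (resc (c:R) (P i + t i))
      = S (fun j => Q j + s j) (resc (c:R) (P i)) + S (fun j => Q j + s j) (resc (c:R) (t i)) := by
    have : resc (c:R) (P i + t i) = resc (c:R) (P i) + resc (c:R) (t i) := resc_add _ _ _
    rw [this, S_add]
  set u := S Q (resc (c:R) (P i)) with hu
  set w := S (fun j => Q j + s j) (resc (c:R) (P i)) + S (fun j => Q j + s j) (resc (c:R) (t i))
    with hw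
  -- the difference w - u is concentrated in degrees ≥ M
  have hΔlow : lowC M (w - u) := by
    intro d hd
    rw [map_sub, hw, map_add]
    have h1 : coeff d (S (fun j => Q j + s j) (resc (c:R) (P i))) = coeff d u := by
      rw [hu]
      refine S_tuple_congr hQ'.1 hQ.1 (N := M - 1) ?_ (by omega)
      intro j dd hdd
      rw [map_add, (hs j) dd (by omega), add_zero]
    have h2 : coeff d (S (fun j => Q j + s j) (resc (c:R) (t i))) = 0 :=
      S_low (resc_lowC _ (htlow i)) d hd
    rw [h1, h2, add_zero, sub_self]
  -- the coefficient of the difference at level M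
  have hΔe : coeff e (w - u)
      = (c : R) ^ M * coeff e (t i) + (c : R) * coeff e (s i) := by
    rw [map_sub, hw, map_add]
    have h2 : coeff e (S (fun j => Q j + s j) (resc (c:R) (t i)))
        = (c : R) ^ M * coeff e (t i) := by
      rw [S_level hQ'.1 hQ'.2 (resc_lowC _ (htlow i)) he, coeff_resc, he]
    have h1 : coeff e (S (fun j => Q j + s j) (resc (c:R) (P i)))
        = coeff e u + (c : R) * coeff e (s i) := by
      rw [hu, S_tuple_perturb hQ.1 hQ.2 hM hslow he]
      congr 1
      rw [Fintype.sum_eq_single i]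
      · rw [coeff_resc, degree_single, pow_one, good_linear_coeff hP, if_pos rfl, mul_one]
      · intro j hj
        rw [coeff_resc, degree_single, pow_one, good_linear_coeff hP, if_neg hj,
          mul_zero, zero_mul]
    rw [h1, h2]
    ring
  -- pass through the outer substitution by A
  have hkey : coeff e (S A w) = coeff e (S A u) + coeff e (w - u) := by
    have hw' : w = u + (w - u) := by ring
    calc coeff e (S A w) = coeff e (S A (u + (w - u))) := by rw [← hw']
      _ = coeff e (S A u) + coeff e (S A (w - u)) := by rw [S_add, map_add]
      _ = coeff e (S A u) + coeff e (w - u) := by rw [S_level hA1 hA2 hΔlow he]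
  rw [Lf, Lf, map_smul, map_smul, smul_eq_mul, smul_eq_mul, hexp, hkey, hΔe, ← hu]
  ring

lemma Rf_perturb {P Q t s : Fin n → Mv} (hP : Good P) (hQ : Good Q)
    {M : ℕ} (hM : 2 ≤ M) (ht : ∀ i, levelOnly M (t i)) (hs : ∀ i, levelOnly M (s i))
    {e : Fin n →₀ ℕ} (he : degree e = M) (i : Fin n) :
    coeff e (Rf b c (fun j => P j + t j) (fun j => Q j + s j) i)
      = coeff e (Rf b c P Q i)
        + (c : R) * ((b : R) ^ M * coeff e (s i) + (b : R) * coeff e (t i)) := by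
  have hslow : ∀ j, lowC M (s j) := fun j => (hs j).lowC
  have htlow : ∀ j, lowC M (t j) := fun j => (ht j).lowC
  have hP' : Good (fun j => P j + t j) :=
    good_perturb hP fun j => lowC_mono hM (htlow j)
  have hexp : resc (b:R) (Q i + s i) = resc (b:R) (Q i) + resc (b:R) (s i) := resc_add _ _ _
  rw [Rf, Rf, map_smul, map_smul, smul_eq_mul, smul_eq_mul, hexp, S_add, map_add]
  have h2 : coeff e (S (fun j => P j + t j) (resc (b:R) (s i)))
      = (b : R) ^ M * coeff e (s i) := by
    rw [S_level hP'.1 hP'.2 (resc_lowC _ (hslow i)) he, coeff_resc, he]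
  have h1 : coeff e (S (fun j => P j + t j) (resc (b:R) (Q i)))
      = coeff e (S P (resc (b:R) (Q i))) + (b : R) * coeff e (t i) := by
    rw [S_tuple_perturb hP.1 hP.2 hM htlow he]
    congr 1
    rw [Fintype.sum_eq_single i]
    · rw [coeff_resc, degree_single, pow_one, good_linear_coeff hQ, if_pos rfl, mul_one]
    · intro j hj
      rw [coeff_resc, degree_single, pow_one, good_linear_coeff hQ, if_neg hj,
        mul_zero, zero_mul]
  rw [h1, h2]
  ring

lemma PQa_main (A : Fin n → Mv) (hA1 : ∀ i, lowC 1 (A i)) (hA2 : ∀ i, lowC 2 (A i - X i))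
    (xy : ℕ → R × R)
    (hxy : ∀ m, 1 ≤ m → (xy m).1 * ((b:R)^m - 1) + (xy m).2 * ((c:R)^m - 1) = 1) :
    ∀ m, 1 ≤ m → ∀ (i : Fin n) (e : Fin n →₀ ℕ), degree e ≤ m →
      coeff e (Lf b c A (PQa b c A xy m).1 (PQa b c A xy m).2 i)
        = coeff e (Rf b c (PQa b c A xy m).1 (PQa b c A xy m).2 i)
  | 0 => by omega
  | 1 => by
    intro _ i e he
    have hPQ1 : PQa b c A xy 1 = ((X : Fin n → Mv), (X : Fin n → Mv)) := by simp only [PQa]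
    have hp1 : (PQa b c A xy 1).1 = (X : Fin n → Mv) := by rw [hPQ1]
    have hp2 : (PQa b c A xy 1).2 = (X : Fin n → Mv) := by rw [hPQ1]
    rw [hp1, hp2]
    have hL : Lf b c A (X : Fin n → Mv) (X : Fin n → Mv) i
        = (b : R) • ((c : R) • S A (X i)) := by
      rw [Lf, S_id, resc_X, S_smul]
    have hR : Rf b c (X : Fin n → Mv) (X : Fin n → Mv) i
        = (c : R) • ((b : R) • (X i : Mv)) := by
      rw [Rf, resc_X, S_smul, S_id]
    rw [hL, hR, map_smul, map_smul, map_smul, map_smul, S_X hA1]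
    have hAX : coeff e (A i) = coeff e (X i : Mv) := by
      have := hA2 i e (by omega)
      rw [map_sub, sub_eq_zero] at this
      exact this
    rw [hAX, smul_eq_mul, smul_eq_mul, smul_eq_mul, smul_eq_mul]
    ring
  | (m+2) => by
    intro _ i e he
    have IH := PQa_main A hA1 hA2 xy hxy (m+1) (by omega)
    set prev := PQa b c A xy (m+1) with hprev
    obtain ⟨hgood1, hgood2⟩ := PQa_good b c A xy (m+1)
    set v : R := ((b⁻¹ : Rˣ) : R) * ((c⁻¹ : Rˣ) : R) with hv
    set t : Fin n → Mv := fun j => ((xy (m+1)).2 * v) •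
        levelTrunc (m+2) (Rf b c prev.1 prev.2 j - Lf b c A prev.1 prev.2 j) with htdef
    set s : Fin n → Mv := fun j => (-(xy (m+1)).1 * v) •
        levelTrunc (m+2) (Rf b c prev.1 prev.2 j - Lf b c A prev.1 prev.2 j) with hsdef
    have hPQnew : PQa b c A xy (m+2)
        = (fun j => prev.1 j + t j, fun j => prev.2 j + s j) := by
      rw [PQa, stepT]
      rfl
    have hfun1 : (PQa b c A xy (m+2)).1 = fun j => prev.1 j + t j := by rw [hPQnew]
    have hfun2 : (PQa b c A xy (m+2)).2 = fun j => prev.2 j + s j := by rw [hPQnew]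
    have ht : ∀ j, levelOnly (m+2) (t j) := fun j => levelOnly_smul_levelTrunc _ _ _
    have hs : ∀ j, levelOnly (m+2) (s j) := fun j => levelOnly_smul_levelTrunc _ _ _
    rw [hfun1, hfun2]
    rcases Nat.lt_or_ge (degree e) (m+2) with hlt | hge
    · -- low degrees: nothing changed
      have hagreeP : ∀ (j : Fin n) (d : Fin n →₀ ℕ), degree d ≤ m + 1 →
          coeff d (prev.1 j) = coeff d (prev.1 j + t j) := by
        intro j d hd
        rw [map_add, (ht j) d (by omega), add_zero]
      have hagreeQ : ∀ (j : Fin n) (d : Fin n →₀ ℕ), degree d ≤ m + 1 →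
          coeff d (prev.2 j) = coeff d (prev.2 j + s j) := by
        intro j d hd
        rw [map_add, (hs j) d (by omega), add_zero]
      have hQ'1 : ∀ j, lowC 1 (prev.2 j + s j) :=
        fun j => lowC_add (hgood2.1 j) (lowC_mono (by omega) (hs j).lowC)
      have hP'1 : ∀ j, lowC 1 (prev.1 j + t j) :=
        fun j => lowC_add (hgood1.1 j) (lowC_mono (by omega) (ht j).lowC)
      have hL := Lf_congr b c A hgood2.1 hQ'1 (N := m+1) hagreeP hagreeQ (by omega : degree e ≤ m+1) i
      have hR := Rf_congr b c hgood1.1 hP'1 (N := m+1) hagreeP hagreeQ (by omega : degree e ≤ m+1) i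
      rw [← hL, ← hR]
      exact IH i e (by omega)
    · -- top degree: use the perturbation formulas and solve
      have heM : degree e = m + 2 := by omega
      rw [Lf_perturb b c A hA1 hA2 hgood1 hgood2 (by omega) ht hs heM i,
        Rf_perturb b c hgood1 hgood2 (by omega) ht hs heM i]
      set L := coeff e (Lf b c A prev.1 prev.2 i) with hL
      set Rr := coeff e (Rf b c prev.1 prev.2 i) with hRr
      have hKe : coeff e ((Rf b c prev.1 prev.2 i) - (Lf b c A prev.1 prev.2 i))
          = Rr - L := by rw [map_sub]
      have hte : coeff e (t i) = (xy (m+1)).2 * v * (Rr - L) := by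
        have h' : t i = ((xy (m+1)).2 * v) •
            levelTrunc (m+2) (Rf b c prev.1 prev.2 i - Lf b c A prev.1 prev.2 i) := rfl
        rw [h', map_smul, smul_eq_mul, coeff_levelTrunc, if_pos heM, hKe]
      have hse : coeff e (s i) = -(xy (m+1)).1 * v * (Rr - L) := by
        have h' : s i = (-(xy (m+1)).1 * v) •
            levelTrunc (m+2) (Rf b c prev.1 prev.2 i - Lf b c A prev.1 prev.2 i) := rfl
        rw [h', map_smul, smul_eq_mul, coeff_levelTrunc, if_pos heM, hKe]
      rw [hte, hse]
      have h1 := hxy (m+1) (by omega)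
      have hbinv : ((b⁻¹ : Rˣ) : R) * (b : R) = 1 := by
        rw [← Units.val_mul, inv_mul_cancel, Units.val_one]
      have hcinv : ((c⁻¹ : Rˣ) : R) * (c : R) = 1 := by
        rw [← Units.val_mul, inv_mul_cancel, Units.val_one]
      rw [show ((c:R))^(m+2) = (c:R)^(m+1) * (c:R) from pow_succ _ _,
        show ((b:R))^(m+2) = (b:R)^(m+1) * (b:R) from pow_succ _ _, hv]
      set x := (xy (m+1)).1
      set y := (xy (m+1)).2
      set B := (b : R)
      set Cc := (c : R)
      set Bi := ((b⁻¹ : Rˣ) : R)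
      set Ci := ((c⁻¹ : Rˣ) : R)
      linear_combination ((Rr - L) * B * Cc * Bi * Ci) * h1
        + ((Rr - L) * Cc * Ci) * hbinv + (Rr - L) * hcinv

/-- The limit tuple `P∞`. -/
noncomputable def Pinf (A : Fin n → Mv) (xy : ℕ → R × R) : Fin n → Mv :=
  fun i e => ((PQa b c A xy (degree e + 1)).1 i) e

/-- The limit tuple `Q∞`. -/
noncomputable def Qinf (A : Fin n → Mv) (xy : ℕ → R × R) : Fin n → Mv :=
  fun i e => ((PQa b c A xy (degree e + 1)).2 i) e

lemma Pinf_agree (A : Fin n → Mv) (xy : ℕ → R × R) {m : ℕ} {e : Fin n →₀ ℕ}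
    (he : degree e < m) (i : Fin n) :
    coeff e (Pinf b c A xy i) = coeff e ((PQa b c A xy m).1 i) := by
  have h1 : coeff e (Pinf b c A xy i)
      = coeff e ((PQa b c A xy (degree e + 1)).1 i) := rfl
  rw [h1, (PQa_stab b c A xy (show degree e + 1 ≤ m by omega) (by omega) i).1]

lemma Qinf_agree (A : Fin n → Mv) (xy : ℕ → R × R) {m : ℕ} {e : Fin n →₀ ℕ}
    (he : degree e < m) (i : Fin n) :
    coeff e (Qinf b c A xy i) = coeff e ((PQa b c A xy m).2 i) := by
  have h1 : coeff e (Qinf b c A xy i)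
      = coeff e ((PQa b c A xy (degree e + 1)).2 i) := rfl
  rw [h1, (PQa_stab b c A xy (show degree e + 1 ≤ m by omega) (by omega) i).2]

lemma Pinf_good (A : Fin n → Mv) (xy : ℕ → R × R) : Good (Pinf b c A xy) := by
  constructor
  · intro i d hd
    rw [Pinf_agree b c A xy (show degree d < degree d + 1 by omega) i]
    exact (PQa_good b c A xy (degree d + 1)).1.1 i d hd
  · intro i d hd
    rw [map_sub, Pinf_agree b c A xy (show degree d < degree d + 1 by omega) i, ← map_sub]
    exact (PQa_good b c A xy (degree d + 1)).1.2 i d hd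

lemma Qinf_good (A : Fin n → Mv) (xy : ℕ → R × R) : Good (Qinf b c A xy) := by
  constructor
  · intro i d hd
    rw [Qinf_agree b c A xy (show degree d < degree d + 1 by omega) i]
    exact (PQa_good b c A xy (degree d + 1)).2.1 i d hd
  · intro i d hd
    rw [map_sub, Qinf_agree b c A xy (show degree d < degree d + 1 by omega) i, ← map_sub]
    exact (PQa_good b c A xy (degree d + 1)).2.2 i d hd

/-- The limit tuples solve the commutation equation exactly. -/
lemma inf_solves (A : Fin n → Mv) (hA1 : ∀ i, lowC 1 (A i)) (hA2 : ∀ i, lowC 2 (A i - X i))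
    (xy : ℕ → R × R)
    (hxy : ∀ m, 1 ≤ m → (xy m).1 * ((b:R)^m - 1) + (xy m).2 * ((c:R)^m - 1) = 1)
    (i : Fin n) :
    Lf b c A (Pinf b c A xy) (Qinf b c A xy) i
      = Rf b c (Pinf b c A xy) (Qinf b c A xy) i := by
  ext e
  set m := degree e + 1 with hm
  have hPP : ∀ (j : Fin n) (d : Fin n →₀ ℕ), degree d ≤ degree e →
      coeff d (Pinf b c A xy j) = coeff d ((PQa b c A xy m).1 j) :=
    fun j d hd => Pinf_agree b c A xy (by omega) j
  have hQQ : ∀ (j : Fin n) (d : Fin n →₀ ℕ), degree d ≤ degree e →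
      coeff d (Qinf b c A xy j) = coeff d ((PQa b c A xy m).2 j) :=
    fun j d hd => Qinf_agree b c A xy (by omega) j
  have h1 : coeff e (Lf b c A (Pinf b c A xy) (Qinf b c A xy) i)
      = coeff e (Lf b c A (PQa b c A xy m).1 (PQa b c A xy m).2 i) :=
    Lf_congr b c A (Qinf_good b c A xy).1 (PQa_good b c A xy m).2.1
      (N := degree e) hPP hQQ le_rfl i
  have h2 : coeff e (Rf b c (Pinf b c A xy) (Qinf b c A xy) i)
      = coeff e (Rf b c (PQa b c A xy m).1 (PQa b c A xy m).2 i) :=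
    Rf_congr b c (Pinf_good b c A xy).1 (PQa_good b c A xy m).1.1
      (N := degree e) hPP hQQ le_rfl i
  rw [h1, h2]
  exact PQa_main b c A hA1 hA2 xy hxy m (by omega) i e (by omega)

end MainConstruction

end CommutatorProof

open CommutatorProof

/-- Theorem `Main`: if there are units `b, c ∈ R` such that
`(bᵐ - 1)R + (cᵐ - 1)R = R` for every positive integer `m`, then every `α ∈ GI^c_n(R)` is a
single commutator of elements of `GA^c_n(R)`. -/
theorem every_GIc_is_commutator {R : Type*} [CommRing R] {n : ℕ} (hn : 0 < n)
    (b c : Rˣ)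
    (hbc : ∀ m : ℕ, 0 < m → Ideal.span {(b : R) ^ m - 1, (c : R) ^ m - 1} = ⊤)
    (α : MvPowerSeries (Fin n) R ≃ₐ[R] MvPowerSeries (Fin n) R) (hα : GIc α) :
    ∃ β γ : MvPowerSeries (Fin n) R ≃ₐ[R] MvPowerSeries (Fin n) R,
      GAc β ∧ GAc γ ∧ α = β * γ * β⁻¹ * γ⁻¹ := by
  classical
  letI : TopologicalSpace R := ⊥
  letI : TopologicalSpace (MvPowerSeries (Fin n) R) := mvPiTopology (Fin n) R
  obtain ⟨⟨hαcont, hαconst⟩, hαsq⟩ := hα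
  set A : Fin n → MvPowerSeries (Fin n) R := fun i => α (X i) with hAdef
  have hA1 : ∀ i, lowC 1 (A i) := fun i => lowC_one_iff.mpr (hαconst i)
  have hA2 : ∀ i, lowC 2 (A i - X i) := fun i => augIdeal_sq_le (hαsq i)
  -- choose the Bézout data
  have hxyex : ∀ m : ℕ, 1 ≤ m →
      ∃ p : R × R, p.1 * ((b:R)^m - 1) + p.2 * ((c:R)^m - 1) = 1 := by
    intro m hm
    have h := hbc m (by omega)
    rw [Ideal.eq_top_iff_one] at h
    obtain ⟨x, y, hxy⟩ := Ideal.mem_span_pair.mp h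
    exact ⟨(x, y), hxy⟩
  set xy : ℕ → R × R := fun m => if h : 1 ≤ m then (hxyex m h).choose else 0 with hxydef
  have hxy : ∀ m, 1 ≤ m →
      (xy m).1 * ((b:R)^m - 1) + (xy m).2 * ((c:R)^m - 1) = 1 := by
    intro m hm
    have hxm : xy m = (hxyex m hm).choose := dif_pos hm
    rw [hxm]
    exact (hxyex m hm).choose_spec
  have hPg : Good (Pinf b c A xy) := Pinf_good b c A xy
  have hQg : Good (Qinf b c A xy) := Qinf_good b c A xy
  set β : MvPowerSeries (Fin n) R ≃ₐ[R] MvPowerSeries (Fin n) R :=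
    SEquiv (Pinf b c A xy) hPg.1 hPg.2 * rescEquiv b with hβdef
  set γ : MvPowerSeries (Fin n) R ≃ₐ[R] MvPowerSeries (Fin n) R :=
    SEquiv (Qinf b c A xy) hQg.1 hQg.2 * rescEquiv c with hγdef
  have hβfun : ∀ f, β f = S (Pinf b c A xy) (resc (b:R) f) := by
    intro f
    rw [hβdef, AlgEquiv.mul_apply, rescEquiv_apply, SEquiv_apply]
  have hγfun : ∀ f, γ f = S (Qinf b c A xy) (resc (c:R) f) := by
    intro f
    rw [hγdef, AlgEquiv.mul_apply, rescEquiv_apply, SEquiv_apply]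
  have hβcont : @Continuous _ _ (mvPiTopology (Fin n) R) (mvPiTopology (Fin n) R) ⇑β := by
    have hco : ⇑β = S (Pinf b c A xy) ∘ resc (b:R) := funext fun f => hβfun f
    rw [hco]
    exact (S_continuous _).comp (resc_continuous _)
  have hγcont : @Continuous _ _ (mvPiTopology (Fin n) R) (mvPiTopology (Fin n) R) ⇑γ := by
    have hco : ⇑γ = S (Qinf b c A xy) ∘ resc (c:R) := funext fun f => hγfun f
    rw [hco]
    exact (S_continuous _).comp (resc_continuous _)
  have hβX : ∀ i, β (X i) = (b:R) • Pinf b c A xy i := by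
    intro i
    rw [hβfun, resc_X, S_smul, S_X hPg.1]
  have hγX : ∀ i, γ (X i) = (c:R) • Qinf b c A xy i := by
    intro i
    rw [hγfun, resc_X, S_smul, S_X hQg.1]
  have hβ0 : ∀ i, constantCoeff (β (X i)) = 0 := by
    intro i
    rw [hβX i, ← coeff_zero_eq_constantCoeff_apply, map_smul, smul_eq_mul,
      hPg.1 i 0 (by rw [map_zero]; omega), mul_zero]
  have hγ0 : ∀ i, constantCoeff (γ (X i)) = 0 := by
    intro i
    rw [hγX i, ← coeff_zero_eq_constantCoeff_apply, map_smul, smul_eq_mul,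
      hQg.1 i 0 (by rw [map_zero]; omega), mul_zero]
  -- α agrees with substitution by A
  have hαS : ∀ f : MvPowerSeries (Fin n) R, α f = S A f := by
    have h1 : @Continuous _ _ (mvPiTopology (Fin n) R) (mvPiTopology (Fin n) R)
        ⇑(α : MvPowerSeries (Fin n) R →ₐ[R] MvPowerSeries (Fin n) R) := hαcont
    have h2 : @Continuous _ _ (mvPiTopology (Fin n) R) (mvPiTopology (Fin n) R)
        ⇑(SAlg A hA1) := S_continuous A
    have h3 : ∀ i, (α : MvPowerSeries (Fin n) R →ₐ[R] MvPowerSeries (Fin n) R) (X i)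
        = SAlg A hA1 (X i) := by
      intro i
      rw [SAlg_apply, S_X hA1]
      rfl
    exact fun f => continuous_algHom_ext h1 h2 h3 f
  -- the two sides of the commutation identity, evaluated on the variables
  have hφX : ∀ i, (α * γ * β) (X i) = Lf b c A (Pinf b c A xy) (Qinf b c A xy) i := by
    intro i
    rw [AlgEquiv.mul_apply, AlgEquiv.mul_apply, hβX i,
      map_smul γ ((b:R)) (Pinf b c A xy i), hγfun,
      map_smul α ((b:R)) _, hαS, Lf]
  have hψX : ∀ i, (β * γ) (X i) = Rf b c (Pinf b c A xy) (Qinf b c A xy) i := by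
    intro i
    rw [AlgEquiv.mul_apply, hγX i, map_smul β ((c:R)) _, hβfun, Rf]
  have hφcont : @Continuous _ _ (mvPiTopology (Fin n) R) (mvPiTopology (Fin n) R)
      ⇑((α * γ * β : MvPowerSeries (Fin n) R ≃ₐ[R] MvPowerSeries (Fin n) R) :
        MvPowerSeries (Fin n) R →ₐ[R] MvPowerSeries (Fin n) R) := by
    have hco : ⇑((α * γ * β : MvPowerSeries (Fin n) R ≃ₐ[R] MvPowerSeries (Fin n) R) :
        MvPowerSeries (Fin n) R →ₐ[R] MvPowerSeries (Fin n) R) = ⇑α ∘ (⇑γ ∘ ⇑β) :=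
      funext fun f => by
        show (α * γ * β) f = α (γ (β f))
        rw [AlgEquiv.mul_apply, AlgEquiv.mul_apply]
    rw [hco]
    exact hαcont.comp (hγcont.comp hβcont)
  have hψcont : @Continuous _ _ (mvPiTopology (Fin n) R) (mvPiTopology (Fin n) R)
      ⇑((β * γ : MvPowerSeries (Fin n) R ≃ₐ[R] MvPowerSeries (Fin n) R) :
        MvPowerSeries (Fin n) R →ₐ[R] MvPowerSeries (Fin n) R) := by
    have hco : ⇑((β * γ : MvPowerSeries (Fin n) R ≃ₐ[R] MvPowerSeries (Fin n) R) :
        MvPowerSeries (Fin n) R →ₐ[R] MvPowerSeries (Fin n) R) = ⇑β ∘ ⇑γ :=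
      funext fun f => by
        show (β * γ) f = β (γ f)
        rw [AlgEquiv.mul_apply]
    rw [hco]
    exact hβcont.comp hγcont
  have hXagree : ∀ i,
      ((α * γ * β : MvPowerSeries (Fin n) R ≃ₐ[R] MvPowerSeries (Fin n) R) :
        MvPowerSeries (Fin n) R →ₐ[R] MvPowerSeries (Fin n) R) (X i)
      = ((β * γ : MvPowerSeries (Fin n) R ≃ₐ[R] MvPowerSeries (Fin n) R) :
        MvPowerSeries (Fin n) R →ₐ[R] MvPowerSeries (Fin n) R) (X i) := by
    intro i
    show (α * γ * β) (X i) = (β * γ) (X i)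
    rw [hφX i, hψX i]
    exact inf_solves b c A hA1 hA2 xy hxy i
  have heqfun := continuous_algHom_ext hφcont hψcont hXagree
  have heq : α * γ * β = β * γ := AlgEquiv.ext fun f => heqfun f
  refine ⟨β, γ, ⟨hβcont, hβ0⟩, ⟨hγcont, hγ0⟩, ?_⟩
  rw [← heq]
  group
end

section
/- Let R be a commutative ring, n a positive integer, and m ≥ 2. For a continuous augmented R-algebra endomorphism β of R[[X₁,...,Xₙ]], let β₁ denote the continuous augmented endomorphism sending each Xᵢ to the degree-1 homogeneous component of β(Xᵢ). Let β, β′, γ, γ′ be continuous augmented R-algebra endomorphisms such that β(Xᵢ) ≡ β′(Xᵢ) mod M^m and γ(Xᵢ) ≡ γ′(Xᵢ) mod M^m for all i (all homogeneous components of degree < m agree; in particular β₁ = β′₁ and γ₁ = γ′₁). Then for every i, the degree-m homogeneous components of γ(β(Xᵢ)) − γ₁(β(Xᵢ)) − γ(β₁(Xᵢ)) and of γ′(β′(Xᵢ)) − γ′₁(β′(Xᵢ)) − γ′(β′₁(Xᵢ)) coincide; i.e. this expression's degree-m part does not depend on the degree-m homogeneous components of the β(Xⱼ) and γ(Xⱼ).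 -/
open MvPowerSeries

/-- A continuous augmented `R`-algebra endomorphism of `R[[X₁,…,Xₙ]]`: continuous for the
topology of coefficientwise convergence and mapping `M` into `M` (each variable goes to a
series with zero constant coefficient). -/
noncomputable def ContAug {R : Type*} [CommRing R] {n : ℕ}
    (φ : MvPowerSeries (Fin n) R →ₐ[R] MvPowerSeries (Fin n) R) : Prop :=
  @Continuous _ _ (mvPiTopology (Fin n) R) (mvPiTopology (Fin n) R) φ ∧
    ∀ i, constantCoeff (φ (X i)) = 0

section Aux
variable {R : Type*} [CommRing R] {n : ℕ}

local notation "M" => augIdeal (Fin n) R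

def degf {n : ℕ} (d : Fin n →₀ ℕ) : ℕ := d.sum fun _ e => e

lemma degf_add (a b : Fin n →₀ ℕ) : degf (a + b) = degf a + degf b :=
  Finsupp.sum_add_index' (fun _ => rfl) (fun _ _ _ => rfl)

lemma degf_eq_zero {d : Fin n →₀ ℕ} (h : degf d = 0) : d = 0 := by
  ext j
  by_contra hj
  have hjs : j ∈ d.support := Finsupp.mem_support_iff.mpr (by simpa using hj)
  have := Finset.sum_eq_zero_iff.mp h j hjs
  simp at this
  exact hj (by simpa using this)

lemma degf_single (j : Fin n) (k : ℕ) : degf (Finsupp.single j k) = k :=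
  Finsupp.sum_single_index rfl

lemma degf_eq_one {d : Fin n →₀ ℕ} (h : degf d = 1) : ∃ j, d = Finsupp.single j 1 := by
  have hne : d ≠ 0 := by
    intro h0; rw [h0] at h; simp [degf] at h
  have hsne : d.support.Nonempty := Finsupp.support_nonempty_iff.mpr hne
  obtain ⟨j, hj⟩ := hsne
  refine ⟨j, ?_⟩
  have hdj : 1 ≤ d j := Nat.one_le_iff_ne_zero.mpr (Finsupp.mem_support_iff.mp hj)
  have hsum : d.support.sum d = 1 := h
  have hsub : Finsupp.single j (d j) ≤ d := Finsupp.single_le_iff.mpr le_rfl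
  rw [Finsupp.eq_single_iff]
  have hsum : ∑ x ∈ d.support, d x = 1 := h
  have hj1 : d j ≤ ∑ x ∈ d.support, d x :=
    Finset.single_le_sum (f := d) (fun k _ => Nat.zero_le _) hj
  constructor
  · intro i hi
    simp only [Finset.mem_singleton]
    by_contra hij
    have hi' : i ∈ d.support.erase j := Finset.mem_erase.mpr ⟨hij, hi⟩
    have h1 : d j + ∑ x ∈ d.support.erase j, d x = ∑ x ∈ d.support, d x :=
      Finset.add_sum_erase _ d hj
    have h2 : d i ≤ ∑ x ∈ d.support.erase j, d x :=
      Finset.single_le_sum (f := d) (fun k _ => Nat.zero_le _) hi'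
    have hdi : 1 ≤ d i := Nat.one_le_iff_ne_zero.mpr (Finsupp.mem_support_iff.mp hi)
    omega
  · omega

lemma constantCoeff_of_mem {f : MvPowerSeries (Fin n) R} (hf : f ∈ M) :
    constantCoeff f = 0 := by
  have hle : M ≤ RingHom.ker (constantCoeff) := by
    rw [augIdeal, Ideal.span_le]
    rintro _ ⟨j, rfl⟩
    simp [RingHom.mem_ker]
  exact hle hf

lemma coeff_eq_zero_of_mem_pow :
    ∀ (k : ℕ) (f : MvPowerSeries (Fin n) R), f ∈ M ^ k →
      ∀ d : Fin n →₀ ℕ, degf d < k → MvPowerSeries.coeff d f = 0 := by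
  intro k
  induction k with
  | zero => intro f _ d hd; omega
  | succ k ih =>
    intro f hf
    rw [pow_succ] at hf
    refine Submodule.mul_induction_on hf ?_ ?_
    · intro x hx y hy d hd
      rw [MvPowerSeries.coeff_mul]
      refine Finset.sum_eq_zero ?_
      rintro ⟨a, b⟩ hab
      have hab' : a + b = d := (Finset.HasAntidiagonal.mem_antidiagonal.mp hab)
      have hdeg : degf a + degf b = degf d := by rw [← degf_add, hab']
      by_cases ha : degf a < k
      · rw [ih x hx a ha, zero_mul]
      · have hb : degf b = 0 := by omega
        have : b = 0 := degf_eq_zero hb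
        subst this
        have : MvPowerSeries.coeff 0 y = 0 := by
          rw [MvPowerSeries.coeff_zero_eq_constantCoeff]
          exact constantCoeff_of_mem hy
        rw [this, mul_zero]
    · intro x y hx hy d hd
      rw [map_add, hx d hd, hy d hd, add_zero]

open Classical in
noncomputable def shiftg {R : Type*} [CommRing R] {n : ℕ} (f : MvPowerSeries (Fin n) R)
    (j : Fin n) : MvPowerSeries (Fin n) R :=
  fun e => if ∀ i, i < j → e i = 0 then MvPowerSeries.coeff (e + Finsupp.single j 1) f else 0

open Classical in
lemma coeff_shiftg (f : MvPowerSeries (Fin n) R) (j : Fin n) (e : Fin n →₀ ℕ) :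
    MvPowerSeries.coeff e (shiftg f j) =
      if ∀ i, i < j → e i = 0 then MvPowerSeries.coeff (e + Finsupp.single j 1) f else 0 := by
  rw [MvPowerSeries.coeff_apply]; rfl

lemma decomp (f : MvPowerSeries (Fin n) R) (hf : constantCoeff f = 0) :
    f = ∑ j, X j * shiftg f j := by
  classical
  apply MvPowerSeries.ext
  intro d
  rw [map_sum]
  by_cases hd : d = 0
  · subst hd
    rw [MvPowerSeries.coeff_zero_eq_constantCoeff_apply, hf]
    refine (Finset.sum_eq_zero ?_).symm
    intro j _
    rw [X_def, MvPowerSeries.coeff_monomial_mul, if_neg]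
    intro hle
    have := Finsupp.single_le_iff.mp hle
    simp at this
  · have hsne : d.support.Nonempty := Finsupp.support_nonempty_iff.mpr hd
    set j0 := d.support.min' hsne with hj0
    have hj0mem : j0 ∈ d.support := d.support.min'_mem hsne
    have hj0le : 1 ≤ d j0 := Nat.one_le_iff_ne_zero.mpr (Finsupp.mem_support_iff.mp hj0mem)
    have key : ∀ j : Fin n, MvPowerSeries.coeff d (X j * shiftg f j)
        = if j = j0 then MvPowerSeries.coeff d f else 0 := by
      intro j
      rw [X_def, MvPowerSeries.coeff_monomial_mul]
      by_cases hle : Finsupp.single j 1 ≤ d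
      · rw [if_pos hle, one_mul, coeff_shiftg]
        have hdj : 1 ≤ d j := Finsupp.single_le_iff.mp hle
        have hcancel : d - Finsupp.single j 1 + Finsupp.single j 1 = d :=
          tsub_add_cancel_of_le hle
        have hcond : (∀ i, i < j → (d - Finsupp.single j 1 : Fin n →₀ ℕ) i = 0) ↔ j = j0 := by
          constructor
          · intro hc
            refine le_antisymm ?_ (d.support.min'_le j (Finsupp.mem_support_iff.mpr (by omega)))
            by_contra hlt
            push_neg at hlt
            have := hc j0 hlt
            rw [Finsupp.tsub_apply, Finsupp.single_apply, if_neg (by omega : ¬ j = j0)] at this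
            omega
          · rintro rfl
            intro i hi
            rw [Finsupp.tsub_apply, Finsupp.single_apply]
            have hns : i ∉ d.support := by
              intro hmem
              exact absurd (d.support.min'_le i hmem) (not_le.mpr hi)
            have : d i = 0 := Finsupp.notMem_support_iff.mp hns
            omega
        by_cases hj : j = j0
        · rw [if_pos (hcond.mpr hj), hcancel, if_pos hj]
        · rw [if_neg (fun hc => hj (hcond.mp hc)), if_neg hj]
      · rw [if_neg hle, if_neg]
        rintro rfl
        exact hle (Finsupp.single_le_iff.mpr hj0le)
    rw [Finset.sum_congr rfl (fun j _ => key j), Finset.sum_ite_eq' Finset.univ j0]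
    rw [if_pos (Finset.mem_univ _)]

lemma X_mem_aug (j : Fin n) : (X j : MvPowerSeries (Fin n) R) ∈ M :=
  Ideal.subset_span ⟨j, rfl⟩

lemma mem_pow_of_coeff :
    ∀ (k : ℕ) (f : MvPowerSeries (Fin n) R),
      (∀ d : Fin n →₀ ℕ, degf d < k → MvPowerSeries.coeff d f = 0) → f ∈ M ^ k := by
  intro k
  induction k with
  | zero => intro f _; simp
  | succ k ih =>
    intro f hf
    have hc : constantCoeff f = 0 := by
      rw [← MvPowerSeries.coeff_zero_eq_constantCoeff_apply]
      exact hf 0 (by simp [degf])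
    rw [decomp f hc]
    refine Ideal.sum_mem _ ?_
    intro j _
    rw [mul_comm, pow_succ]
    refine Ideal.mul_mem_mul (ih _ ?_) (X_mem_aug j)
    intro e he
    rw [coeff_shiftg]
    split
    · refine hf _ ?_
      rw [degf_add, degf_single]
      omega
    · rfl


variable (φ ψ : MvPowerSeries (Fin n) R →ₐ[R] MvPowerSeries (Fin n) R)

lemma map_X_mem' (hφ : ∀ i, constantCoeff (φ (X i)) = 0) (j : Fin n) :
    φ (X j) ∈ M := by
  have := mem_pow_of_coeff (R := R) (n := n) 1 (φ (X j)) ?_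
  · simpa using this
  · intro d hd
    have : d = 0 := degf_eq_zero (by omega)
    subst this
    rw [MvPowerSeries.coeff_zero_eq_constantCoeff_apply]
    exact hφ j

lemma map_mem_aug (hφ : ∀ i, constantCoeff (φ (X i)) = 0)
    {f : MvPowerSeries (Fin n) R} (hf : f ∈ M) : φ f ∈ M := by
  induction hf using Submodule.span_induction with
  | mem x hx => obtain ⟨j, rfl⟩ := hx; exact map_X_mem' φ hφ j
  | zero => simp
  | add x y hx hy ihx ihy => rw [map_add]; exact Ideal.add_mem _ ihx ihy
  | smul a x hx ihx =>
    rw [smul_eq_mul, map_mul]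
    exact Ideal.mul_mem_left _ _ ihx

lemma map_mem_aug_pow (hφ : ∀ i, constantCoeff (φ (X i)) = 0) :
    ∀ (k : ℕ) (f : MvPowerSeries (Fin n) R), f ∈ M ^ k → φ f ∈ M ^ k := by
  intro k
  induction k with
  | zero => intro f _; simp
  | succ k ih =>
    intro f hf
    rw [pow_succ] at hf ⊢
    refine Submodule.mul_induction_on hf ?_ ?_
    · intro x hx y hy
      rw [map_mul]
      exact Ideal.mul_mem_mul (ih x hx) (map_mem_aug φ hφ hy)
    · intro x y hx hy
      rw [map_add]; exact Ideal.add_mem _ hx hy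

lemma sub_map_mem (hφ : ∀ i, constantCoeff (φ (X i)) = 0)
    (hψ : ∀ i, constantCoeff (ψ (X i)) = 0)
    (t : ℕ) (h : ∀ i, φ (X i) - ψ (X i) ∈ M ^ t) :
    ∀ s, s ≤ t → ∀ a : MvPowerSeries (Fin n) R, φ a - ψ a ∈ M ^ s := by
  intro s
  induction s with
  | zero => intro _ a; simp
  | succ s ih =>
    intro hst a
    set c := constantCoeff a with hc
    have ha' : constantCoeff (a - C c) = 0 := by
      simp [hc]
    have hφc : φ (C c) = C c := by
      rw [MvPowerSeries.c_eq_algebraMap]; exact φ.commutes c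
    have hψc : ψ (C c) = C c := by
      rw [MvPowerSeries.c_eq_algebraMap]; exact ψ.commutes c
    have key : φ a - ψ a = φ (a - C c) - ψ (a - C c) := by
      rw [map_sub, map_sub, hφc, hψc]; ring
    rw [key, decomp _ ha']
    rw [map_sum, map_sum, ← Finset.sum_sub_distrib]
    refine Ideal.sum_mem _ ?_
    intro j _
    have expand : φ (X j * shiftg (a - C c) j) - ψ (X j * shiftg (a - C c) j)
        = (φ (X j) - ψ (X j)) * φ (shiftg (a - C c) j)
          + ψ (X j) * (φ (shiftg (a - C c) j) - ψ (shiftg (a - C c) j)) := by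
      rw [map_mul, map_mul]; ring
    rw [expand]
    refine Ideal.add_mem _ ?_ ?_
    · exact Ideal.mul_mem_right _ _ (Ideal.pow_le_pow_right hst (h j))
    · rw [pow_succ']
      exact Ideal.mul_mem_mul (map_X_mem' ψ hψ j) (ih (by omega) _)

lemma map_sub_mem (hφ : ∀ i, constantCoeff (φ (X i)) = 0)
    (hψ : ∀ i, constantCoeff (ψ (X i)) = 0)
    (t : ℕ) (h : ∀ i, φ (X i) - ψ (X i) ∈ M ^ t) :
    ∀ (k : ℕ), 1 ≤ k → ∀ f ∈ M ^ k, φ f - ψ f ∈ M ^ (k + t - 1) := by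
  intro k
  induction k with
  | zero => omega
  | succ k ih =>
    intro _ f hf
    by_cases hk : k = 0
    · subst hk
      have : 1 + t - 1 = t := by omega
      rw [this]
      exact sub_map_mem φ ψ hφ hψ t h t le_rfl f
    · rw [pow_succ] at hf
      have hkt : k + 1 + t - 1 = (k + t - 1) + 1 := by omega
      rw [hkt, pow_succ]
      refine Submodule.mul_induction_on hf ?_ ?_
      · intro x hx y hy
        have expand : φ (x * y) - ψ (x * y)
            = (φ x - ψ x) * ψ y + φ x * (φ y - ψ y) := by
          rw [map_mul, map_mul]; ring
        rw [expand]
        refine Ideal.add_mem _ ?_ ?_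
        · exact Ideal.mul_mem_mul (ih (by omega) x hx) (map_mem_aug ψ hψ hy)
        · have h1 : φ x ∈ M ^ k := map_mem_aug_pow φ hφ k x hx
          have h2 : φ y - ψ y ∈ M ^ t := sub_map_mem φ ψ hφ hψ t h t le_rfl y
          have := Ideal.mul_mem_mul h1 h2
          rw [← pow_add] at this
          have hle : M ^ (k + t) ≤ M ^ (k + t - 1) * M := by
            rw [← pow_succ]
            exact Ideal.pow_le_pow_right (by omega)
          exact hle this
      · intro x y hx hy
        have : φ (x + y) - ψ (x + y) = (φ x - ψ x) + (φ y - ψ y) := by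
          rw [map_add, map_add]; ring
        rw [this]; exact Ideal.add_mem _ hx hy


lemma coeff_lin_single (c : Fin n → R) (j : Fin n) :
    MvPowerSeries.coeff (Finsupp.single j 1) (∑ k, c k • (X k : MvPowerSeries (Fin n) R))
      = c j := by
  classical
  rw [map_sum]
  have : ∀ k : Fin n, MvPowerSeries.coeff (Finsupp.single j 1) (c k • (X k : MvPowerSeries (Fin n) R))
      = if k = j then c k else 0 := by
    intro k
    rw [LinearMap.map_smul, MvPowerSeries.coeff_X, smul_eq_mul]
    by_cases hk : k = j
    · subst hk; simp
    · rw [if_neg, if_neg hk, mul_zero]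
      intro hkk
      exact hk ((Finsupp.single_left_inj (one_ne_zero)).mp hkk.symm)
  rw [Finset.sum_congr rfl (fun k _ => this k), Finset.sum_ite_eq' Finset.univ j]
  simp

lemma coeff_lin_ne (c : Fin n → R) (e : Fin n →₀ ℕ) (he : degf e ≠ 1) :
    MvPowerSeries.coeff e (∑ k, c k • (X k : MvPowerSeries (Fin n) R)) = 0 := by
  classical
  rw [map_sum]
  refine Finset.sum_eq_zero ?_
  intro k _
  rw [LinearMap.map_smul, MvPowerSeries.coeff_X, smul_eq_mul, if_neg, mul_zero]
  rintro rfl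
  exact he (degf_single k 1)

open Classical in
noncomputable def trunc2 (m : ℕ) (f : MvPowerSeries (Fin n) R) : MvPowerSeries (Fin n) R :=
  fun e => if 2 ≤ degf e ∧ degf e < m then MvPowerSeries.coeff e f else 0

open Classical in
lemma coeff_trunc2 (m : ℕ) (f : MvPowerSeries (Fin n) R) (e : Fin n →₀ ℕ) :
    MvPowerSeries.coeff e (trunc2 m f) =
      if 2 ≤ degf e ∧ degf e < m then MvPowerSeries.coeff e f else 0 := by
  rw [MvPowerSeries.coeff_apply]; rfl

lemma trunc2_congr (m : ℕ) (f g : MvPowerSeries (Fin n) R)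
    (h : ∀ e, degf e < m → MvPowerSeries.coeff e f = MvPowerSeries.coeff e g) :
    trunc2 m f = trunc2 m g := by
  apply MvPowerSeries.ext
  intro e
  rw [coeff_trunc2, coeff_trunc2]
  split
  · next hcond => exact h e hcond.2
  · rfl

lemma trunc2_mem (m : ℕ) (f : MvPowerSeries (Fin n) R) : trunc2 m f ∈ M ^ 2 := by
  refine mem_pow_of_coeff 2 _ ?_
  intro e he
  rw [coeff_trunc2, if_neg]
  omega

lemma sub_trunc2_mem (m : ℕ) (f : MvPowerSeries (Fin n) R)
    (hf : constantCoeff f = 0) :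
    f - (∑ j, MvPowerSeries.coeff (Finsupp.single j 1) f • (X j : MvPowerSeries (Fin n) R))
      - trunc2 m f ∈ M ^ m := by
  refine mem_pow_of_coeff m _ ?_
  intro e he
  rw [map_sub, map_sub, coeff_trunc2]
  by_cases h0 : degf e = 0
  · have : e = 0 := degf_eq_zero h0
    subst this
    rw [MvPowerSeries.coeff_zero_eq_constantCoeff_apply, hf,
      coeff_lin_ne _ _ (by omega), if_neg (by omega)]
    ring
  · by_cases h1 : degf e = 1
    · obtain ⟨j, rfl⟩ := degf_eq_one h1
      rw [coeff_lin_single, if_neg (by omega)]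
      ring
    · rw [coeff_lin_ne _ _ h1, if_pos ⟨by omega, he⟩]
      ring

end Aux

/-- Lemma `TOPterms`(b): let `m ≥ 2`, let `β, β', γ, γ'` be continuous
augmented endomorphisms agreeing on the variables modulo `M^m` (all homogeneous components
of degree `< m` agree), and let `β₁, γ₁, β₁', γ₁'` be continuous augmented endomorphisms
sending each `Xᵢ` to the degree-1 homogeneous component of `β(Xᵢ)`, `γ(Xᵢ)`, `β'(Xᵢ)`,
`γ'(Xᵢ)` respectively. Then for every `i` the degree-`m` homogeneous components of
`γ(β(Xᵢ)) - γ₁(β(Xᵢ)) - γ(β₁(Xᵢ))` and `γ'(β'(Xᵢ)) - γ₁'(β'(Xᵢ)) - γ'(β₁'(Xᵢ))`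
coincide. -/
theorem comp_sub_linear_parts_congr {R : Type*} [CommRing R] {n : ℕ} (hn : 0 < n)
    (m : ℕ) (hm : 2 ≤ m)
    (β β' γ γ' β₁ γ₁ β₁' γ₁' : MvPowerSeries (Fin n) R →ₐ[R] MvPowerSeries (Fin n) R)
    (hβ : ContAug β) (hβ' : ContAug β') (hγ : ContAug γ) (hγ' : ContAug γ')
    (hβ₁ : ContAug β₁) (hγ₁ : ContAug γ₁) (hβ₁' : ContAug β₁') (hγ₁' : ContAug γ₁')
    (hββ' : ∀ i, β (X i) - β' (X i) ∈ (augIdeal (Fin n) R) ^ m)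
    (hγγ' : ∀ i, γ (X i) - γ' (X i) ∈ (augIdeal (Fin n) R) ^ m)
    (hβ₁X : ∀ i, β₁ (X i) =
      ∑ j, MvPowerSeries.coeff (Finsupp.single j 1) (β (X i)) • X j)
    (hγ₁X : ∀ i, γ₁ (X i) =
      ∑ j, MvPowerSeries.coeff (Finsupp.single j 1) (γ (X i)) • X j)
    (hβ₁'X : ∀ i, β₁' (X i) =
      ∑ j, MvPowerSeries.coeff (Finsupp.single j 1) (β' (X i)) • X j)
    (hγ₁'X : ∀ i, γ₁' (X i) =
      ∑ j, MvPowerSeries.coeff (Finsupp.single j 1) (γ' (X i)) • X j) :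
    ∀ i, ∀ d : Fin n →₀ ℕ, (d.sum fun _ e => e) = m →
      MvPowerSeries.coeff d (γ (β (X i)) - γ₁ (β (X i)) - γ (β₁ (X i))) =
        MvPowerSeries.coeff d (γ' (β' (X i)) - γ₁' (β' (X i)) - γ' (β₁' (X i))) := by
  intro i d hd
  have hd' : degf d = m := hd
  -- coefficients of degree < m agree
  have hccβ : ∀ j, MvPowerSeries.coeff (Finsupp.single j 1) (β (X i))
      = MvPowerSeries.coeff (Finsupp.single j 1) (β' (X i)) := by
    intro j
    have := coeff_eq_zero_of_mem_pow m _ (hββ' i) (Finsupp.single j 1)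
      (by rw [degf_single]; omega)
    rw [map_sub] at this
    exact sub_eq_zero.mp this
  have hccγ : ∀ jj : Fin n, ∀ k, MvPowerSeries.coeff (Finsupp.single k 1) (γ (X jj))
      = MvPowerSeries.coeff (Finsupp.single k 1) (γ' (X jj)) := by
    intro jj k
    have := coeff_eq_zero_of_mem_pow m _ (hγγ' jj) (Finsupp.single k 1)
      (by rw [degf_single]; omega)
    rw [map_sub] at this
    exact sub_eq_zero.mp this
  -- linear parts agree
  have hℓ : β₁' (X i) = β₁ (X i) := by
    rw [hβ₁X i, hβ₁'X i]
    exact Finset.sum_congr rfl (fun j _ => by rw [hccβ j])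
  have hγ₁eq : ∀ j, γ₁ (X j) = γ₁' (X j) := by
    intro j
    rw [hγ₁X j, hγ₁'X j]
    exact Finset.sum_congr rfl (fun k _ => by rw [hccγ j k])
  -- γ X − γ₁ X ∈ M²
  have hγ2 : ∀ j, γ (X j) - γ₁ (X j) ∈ (augIdeal (Fin n) R) ^ 2 := by
    intro j
    refine mem_pow_of_coeff 2 _ ?_
    intro e he
    rw [map_sub]
    by_cases h0 : degf e = 0
    · have : e = 0 := degf_eq_zero h0
      subst this
      rw [MvPowerSeries.coeff_zero_eq_constantCoeff_apply,
        MvPowerSeries.coeff_zero_eq_constantCoeff_apply, hγ.2 j, hγ₁.2 j, sub_zero]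
    · have h1 : degf e = 1 := by omega
      obtain ⟨k, rfl⟩ := degf_eq_one h1
      rw [hγ₁X j, coeff_lin_single, sub_self]
  have hγ2' : ∀ j, γ' (X j) - γ₁' (X j) ∈ (augIdeal (Fin n) R) ^ 2 := by
    intro j
    refine mem_pow_of_coeff 2 _ ?_
    intro e he
    rw [map_sub]
    by_cases h0 : degf e = 0
    · have : e = 0 := degf_eq_zero h0
      subst this
      rw [MvPowerSeries.coeff_zero_eq_constantCoeff_apply,
        MvPowerSeries.coeff_zero_eq_constantCoeff_apply, hγ'.2 j, hγ₁'.2 j, sub_zero]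
    · have h1 : degf e = 1 := by omega
      obtain ⟨k, rfl⟩ := degf_eq_one h1
      rw [hγ₁'X j, coeff_lin_single, sub_self]
  -- the common truncation q
  obtain ⟨q, hq⟩ : ∃ q, q = trunc2 m (β (X i)) := ⟨_, rfl⟩
  have hq' : trunc2 m (β' (X i)) = q := by
    rw [hq]
    refine (trunc2_congr m _ _ ?_).symm
    intro e hee
    have := coeff_eq_zero_of_mem_pow m _ (hββ' i) e hee
    rw [map_sub] at this
    exact sub_eq_zero.mp this
  have hqmem : q ∈ (augIdeal (Fin n) R) ^ 2 := hq ▸ trunc2_mem m _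
  -- s and s'
  obtain ⟨s, hs_def⟩ : ∃ s, β (X i) = β₁ (X i) + q + s :=
    ⟨β (X i) - β₁ (X i) - q, by ring⟩
  obtain ⟨s', hs'_def⟩ : ∃ s', β' (X i) = β₁' (X i) + q + s' :=
    ⟨β' (X i) - β₁' (X i) - q, by ring⟩
  have hs : s ∈ (augIdeal (Fin n) R) ^ m := by
    have heq : s = β (X i)
        - (∑ j, MvPowerSeries.coeff (Finsupp.single j 1) (β (X i)) • X j)
        - trunc2 m (β (X i)) := by
      rw [← hβ₁X i, ← hq, hs_def]; ring
    rw [heq]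
    exact sub_trunc2_mem m _ (hβ.2 i)
  have hs' : s' ∈ (augIdeal (Fin n) R) ^ m := by
    have heq : s' = β' (X i)
        - (∑ j, MvPowerSeries.coeff (Finsupp.single j 1) (β' (X i)) • X j)
        - trunc2 m (β' (X i)) := by
      rw [← hβ₁'X i, hq', hs'_def]; ring
    rw [heq]
    exact sub_trunc2_mem m _ (hβ'.2 i)
  -- membership facts
  have hm21 : m + 2 - 1 = m + 1 := by omega
  have h2m1 : 2 + m - 1 = m + 1 := by omega
  have h1m1 : 1 + (m + 1) - 1 = m + 1 := by omega
  have hA : γ s - γ₁ s ∈ (augIdeal (Fin n) R) ^ (m + 1) :=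
    hm21 ▸ map_sub_mem γ γ₁ hγ.2 hγ₁.2 2 hγ2 m (by omega) s hs
  have hA' : γ' s' - γ₁' s' ∈ (augIdeal (Fin n) R) ^ (m + 1) :=
    hm21 ▸ map_sub_mem γ' γ₁' hγ'.2 hγ₁'.2 2 hγ2' m (by omega) s' hs'
  have hB : γ q - γ' q ∈ (augIdeal (Fin n) R) ^ (m + 1) :=
    h2m1 ▸ map_sub_mem γ γ' hγ.2 hγ'.2 m hγγ' 2 (by omega) q hqmem
  have hγ₁0 : ∀ t : ℕ, ∀ j, γ₁ (X j) - γ₁' (X j) ∈ (augIdeal (Fin n) R) ^ t := by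
    intro t j
    rw [hγ₁eq j, sub_self]
    exact Ideal.zero_mem _
  have hC : γ₁ q - γ₁' q ∈ (augIdeal (Fin n) R) ^ (m + 1) :=
    h2m1 ▸ map_sub_mem γ₁ γ₁' hγ₁.2 hγ₁'.2 m (hγ₁0 m) 2 (by omega) q hqmem
  have hℓmem : β₁ (X i) ∈ (augIdeal (Fin n) R) ^ 1 := by
    rw [pow_one]
    exact map_mem_aug β₁ hβ₁.2 (X_mem_aug i)
  have hD : γ₁ (β₁ (X i)) - γ₁' (β₁ (X i)) ∈ (augIdeal (Fin n) R) ^ (m + 1) :=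
    h1m1 ▸ map_sub_mem γ₁ γ₁' hγ₁.2 hγ₁'.2 (m + 1) (hγ₁0 (m + 1)) 1 (by omega) _ hℓmem
  -- the key algebraic identity
  have key : (γ (β (X i)) - γ₁ (β (X i)) - γ (β₁ (X i)))
      - (γ' (β' (X i)) - γ₁' (β' (X i)) - γ' (β₁' (X i)))
      = ((γ q - γ' q) - (γ₁ q - γ₁' q) - (γ₁ (β₁ (X i)) - γ₁' (β₁ (X i))))
        + ((γ s - γ₁ s) - (γ' s' - γ₁' s')) := by
    rw [hs_def, hs'_def, hℓ]
    simp only [map_add]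
    ring
  have hmem : (γ (β (X i)) - γ₁ (β (X i)) - γ (β₁ (X i)))
      - (γ' (β' (X i)) - γ₁' (β' (X i)) - γ' (β₁' (X i)))
      ∈ (augIdeal (Fin n) R) ^ (m + 1) := by
    rw [key]
    exact Ideal.add_mem _ (Ideal.sub_mem _ (Ideal.sub_mem _ hB hC) hD)
      (Ideal.sub_mem _ hA hA')
  have hzero := coeff_eq_zero_of_mem_pow (m + 1) _ hmem d (by omega)
  rw [map_sub] at hzero
  exact sub_eq_zero.mp hzero
end

section
/- Let p ≥ 5 be a prime and R a commutative ring containing a field F of characteristic p. Let b₂, b₃, c₂, c₃ ∈ F with c₂ − b₂ ≠ 0, and set a₂ = 2(b₂ − c₂), a₃ = 4(b₂ − c₂)². Let α ∈ GA^c_1(R) satisfy α(X)_1 = 1, α(X)_2 = a₂ and α(X)_3 = a₃ (higher coefficients arbitrary). Let m ≥ 4 be an even integer with m ≢ 2 (mod p). Then for arbitrary prescribed elements b_k, c_k ∈ R for k ≥ 4 with k ≠ m, there exist b_m, c_m ∈ R such that the automorphisms β, γ ∈ GA^c_1(R) determined by β(X) = −X + b₂X² + b₃X³ + Σ_{k≥4}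 b_k X^k and γ(X) = −X + c₂X² + c₃X³ + Σ_{k≥4} c_k X^k satisfy β(γ(α(X)))_m = γ(β(X))_m and β(γ(α(X)))_{m+1} = γ(β(X))_{m+1}. -/
/-- `GA^c_1(R)`: an `R`-algebra automorphism of `R[[X]]` belongs to `GA^c_1(R)` iff it is
continuous for the topology of coefficientwise convergence and `φ(X)` has zero constant
coefficient. -/
noncomputable def GAc1 {R : Type*} [CommRing R]
    (φ : PowerSeries R ≃ₐ[R] PowerSeries R) : Prop :=
  @Continuous _ _ (mvPiTopology Unit R) (mvPiTopology Unit R) φ ∧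
    PowerSeries.constantCoeff (φ PowerSeries.X) = 0

open PowerSeries Finset

namespace ClaimA

variable {R : Type*} [CommRing R]

/-- Substitution of `g` into `f` (composition `f ∘ g`), defined coefficientwise. -/
noncomputable def pssubst (g f : PowerSeries R) : PowerSeries R :=
  PowerSeries.mk fun n => ∑ k ∈ range (n + 1), coeff k f * coeff n (g ^ k)

lemma coeff_pssubst (g f : PowerSeries R) (n : ℕ) :
    coeff n (pssubst g f) = ∑ k ∈ range (n + 1), coeff k f * coeff n (g ^ k) := by
  simp [pssubst]

/-- L1: if `g` has zero constant coefficient then `coeff n (g^k) = 0` for `n < k`. -/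
lemma coeff_pow_eq_zero {g : PowerSeries R} (hg : constantCoeff g = 0)
    {n k : ℕ} (h : n < k) : coeff n (g ^ k) = 0 := by
  induction k generalizing n with
  | zero => omega
  | succ k ih =>
    rw [pow_succ, mul_comm, coeff_mul]
    refine Finset.sum_eq_zero fun p hp => ?_
    rw [Finset.HasAntidiagonal.mem_antidiagonal] at hp
    rcases Nat.eq_zero_or_pos p.1 with h0 | h0
    · have : coeff p.1 g = 0 := by
        rw [h0]; simpa [PowerSeries.coeff_zero_eq_constantCoeff] using hg
      simp [this]
    · have : p.2 < k := by omega
      rw [ih this, mul_zero]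

lemma constantCoeff_pow_eq_zero {g : PowerSeries R} (hg : constantCoeff g = 0)
    {k : ℕ} (hk : 0 < k) : constantCoeff (g ^ k) = 0 := by
  have := coeff_pow_eq_zero hg hk (n := 0)
  simpa [PowerSeries.coeff_zero_eq_constantCoeff] using this

/-- stability: for `n < N` the defining sum can be extended. -/
lemma coeff_pssubst_eq_sum {g f : PowerSeries R} (hg : constantCoeff g = 0)
    {n N : ℕ} (h : n < N) :
    coeff n (pssubst g f) = ∑ k ∈ range N, coeff k f * coeff n (g ^ k) := by
  rw [coeff_pssubst]
  refine Finset.sum_subset ?_ ?_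
  · intro k hk; rw [mem_range] at *; omega
  · intro k hk hk'
    rw [mem_range] at *
    rw [coeff_pow_eq_zero hg (by omega), mul_zero]

end ClaimA

namespace ClaimA
variable {R : Type*} [CommRing R]

lemma pssubst_add (g f₁ f₂ : PowerSeries R) :
    pssubst g (f₁ + f₂) = pssubst g f₁ + pssubst g f₂ := by
  ext n
  simp [coeff_pssubst, add_mul, Finset.sum_add_distrib]

lemma pssubst_one (g : PowerSeries R) : pssubst g 1 = 1 := by
  ext n
  rw [coeff_pssubst]
  rcases Nat.eq_zero_or_pos n with rfl | hn
  · simp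
  · rw [Finset.sum_eq_single 0]
    · simp [Nat.pos_iff_ne_zero.mp hn]
    · intro k _ hk; simp [PowerSeries.coeff_one, hk]
    · simp

lemma pssubst_C (g : PowerSeries R) (r : R) : pssubst g (C r) = C r := by
  ext n
  rw [coeff_pssubst, Finset.sum_eq_single 0]
  · simp [PowerSeries.coeff_C]
  · intro k _ hk; simp [PowerSeries.coeff_C, hk]
  · simp

lemma pssubst_X {g : PowerSeries R} (hg : constantCoeff g = 0) :
    pssubst g X = g := by
  ext n
  rcases Nat.eq_zero_or_pos n with rfl | hn
  · rw [coeff_pssubst]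
    simpa [PowerSeries.coeff_zero_eq_constantCoeff] using hg.symm
  · rw [coeff_pssubst, Finset.sum_eq_single 1]
    · simp
    · intro k _ hk; simp [PowerSeries.coeff_X, hk]
    · intro h; rw [mem_range] at h; omega

lemma biUnion_antidiagonal (n : ℕ) :
    (range (n + 1)).biUnion (fun k => antidiagonal k) =
      (range (n + 1) ×ˢ range (n + 1)).filter (fun p => p.1 + p.2 ≤ n) := by
  ext p
  simp only [mem_biUnion, Finset.HasAntidiagonal.mem_antidiagonal, mem_filter, mem_product, mem_range]
  constructor
  · rintro ⟨k, hk, rfl⟩; omega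
  · rintro ⟨⟨h1, h2⟩, h3⟩; exact ⟨p.1 + p.2, by omega, rfl⟩

lemma pssubst_mul {g : PowerSeries R} (hg : constantCoeff g = 0) (f₁ f₂ : PowerSeries R) :
    pssubst g (f₁ * f₂) = pssubst g f₁ * pssubst g f₂ := by
  ext n
  have LHS : coeff n (pssubst g (f₁ * f₂)) =
      ∑ p ∈ range (n + 1) ×ˢ range (n + 1),
        coeff p.1 f₁ * coeff p.2 f₂ * coeff n (g ^ (p.1 + p.2)) := by
    rw [coeff_pssubst]
    have : ∀ k ∈ range (n + 1), coeff k (f₁ * f₂) * coeff n (g ^ k) =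
        ∑ p ∈ antidiagonal k, coeff p.1 f₁ * coeff p.2 f₂ * coeff n (g ^ (p.1 + p.2)) := by
      intro k _
      rw [PowerSeries.coeff_mul, Finset.sum_mul]
      refine Finset.sum_congr rfl fun p hp => ?_
      rw [Finset.HasAntidiagonal.mem_antidiagonal] at hp
      rw [hp]
    rw [Finset.sum_congr rfl this, ← Finset.sum_biUnion, biUnion_antidiagonal]
    · refine Finset.sum_filter_of_ne fun p hp hne => ?_
      by_contra h
      exact hne (by rw [coeff_pow_eq_zero hg (by omega), mul_zero])
    · intro a _ b _ hab
      simp only [Finset.disjoint_left, Finset.HasAntidiagonal.mem_antidiagonal]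
      rintro p h1 h2; exact hab (h1 ▸ h2.symm ▸ rfl)
  have RHS : coeff n (pssubst g f₁ * pssubst g f₂) =
      ∑ p ∈ range (n + 1) ×ˢ range (n + 1),
        coeff p.1 f₁ * coeff p.2 f₂ * coeff n (g ^ (p.1 + p.2)) := by
    rw [PowerSeries.coeff_mul]
    have : ∀ q ∈ antidiagonal n,
        coeff q.1 (pssubst g f₁) * coeff q.2 (pssubst g f₂) =
        ∑ p ∈ range (n + 1) ×ˢ range (n + 1),
          (coeff p.1 f₁ * coeff q.1 (g ^ p.1)) * (coeff p.2 f₂ * coeff q.2 (g ^ p.2)) := by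
      intro q hq
      rw [Finset.HasAntidiagonal.mem_antidiagonal] at hq
      rw [coeff_pssubst_eq_sum hg (show q.1 < n + 1 by omega),
          coeff_pssubst_eq_sum hg (show q.2 < n + 1 by omega), Finset.sum_mul_sum,
          Finset.sum_product]
    rw [Finset.sum_congr rfl this, Finset.sum_comm]
    refine Finset.sum_congr rfl fun p _ => ?_
    rw [pow_add, PowerSeries.coeff_mul, Finset.mul_sum]
    refine Finset.sum_congr rfl fun q _ => ?_
    ring
  rw [LHS, RHS]

end ClaimA

namespace ClaimA
variable {R : Type*} [CommRing R]

/-- Substitution as an `R`-algebra homomorphism. -/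
noncomputable def substHom (g : PowerSeries R) (hg : constantCoeff g = 0) :
    PowerSeries R →ₐ[R] PowerSeries R where
  toFun := pssubst g
  map_one' := pssubst_one g
  map_mul' := pssubst_mul hg
  map_zero' := by
    have := pssubst_add g 0 0
    simpa using this.symm
  map_add' := pssubst_add g
  commutes' := fun r => by
    simpa [PowerSeries.algebraMap_apply] using pssubst_C g r

@[simp] lemma substHom_apply (g : PowerSeries R) (hg) (f : PowerSeries R) :
    substHom g hg f = pssubst g f := rfl

lemma pssubst_pow {g : PowerSeries R} (hg : constantCoeff g = 0) (f : PowerSeries R) (k : ℕ) :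
    pssubst g (f ^ k) = (pssubst g f) ^ k := by
  simpa using map_pow (substHom g hg) f k

lemma constantCoeff_pssubst {g : PowerSeries R} (hg : constantCoeff g = 0)
    (f : PowerSeries R) : constantCoeff (pssubst g f) = constantCoeff f := by
  have := coeff_pssubst g f 0
  simpa [PowerSeries.coeff_zero_eq_constantCoeff] using this

/-- Associativity: `(f ∘ g) ∘ h = f ∘ (g ∘ h)`. -/
lemma pssubst_assoc {g h : PowerSeries R} (hg : constantCoeff g = 0)
    (hh : constantCoeff h = 0) (f : PowerSeries R) :
    pssubst h (pssubst g f) = pssubst (pssubst h g) f := by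
  ext n
  rw [coeff_pssubst, coeff_pssubst]
  have step : ∀ j ∈ range (n + 1),
      coeff j f * coeff n ((pssubst h g) ^ j) =
      ∑ k ∈ range (n + 1), coeff j f * (coeff k (g ^ j) * coeff n (h ^ k)) := by
    intro j _
    rw [← pssubst_pow hh, coeff_pssubst, Finset.mul_sum]
  rw [Finset.sum_congr rfl step, Finset.sum_comm]
  refine Finset.sum_congr rfl fun k hk => ?_
  rw [coeff_pssubst_eq_sum (N := n + 1) hg (by rw [mem_range] at hk; omega), Finset.sum_mul]
  refine Finset.sum_congr rfl fun j _ => ?_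
  ring

/-- coefficient `n` of a power depends only on coefficients `≤ n`. -/
lemma coeff_pow_congr_le {p q : PowerSeries R} {n : ℕ}
    (h : ∀ j ≤ n, coeff j p = coeff j q) (k : ℕ) :
    coeff n (p ^ k) = coeff n (q ^ k) := by
  induction k generalizing n with
  | zero => rfl
  | succ k ih =>
    rw [pow_succ, pow_succ, coeff_mul, coeff_mul]
    refine Finset.sum_congr rfl fun r hr => ?_
    rw [Finset.HasAntidiagonal.mem_antidiagonal] at hr
    rw [ih (n := r.1) (fun j hj => h j (by omega)), h r.2 (by omega)]

/-- coefficient `n` of a `k`-th power (`k ≥ 2`) of a series with zero constant term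
depends only on coefficients `< n`. -/
lemma coeff_pow_congr_lt {p q : PowerSeries R} (hp : constantCoeff p = 0)
    (hq : constantCoeff q = 0) {n : ℕ}
    (h : ∀ j < n, coeff j p = coeff j q) {k : ℕ} (hk : 2 ≤ k) :
    coeff n (p ^ k) = coeff n (q ^ k) := by
  induction k, hk using Nat.le_induction generalizing n with
  | base =>
    rw [pow_two, pow_two, coeff_mul, coeff_mul]
    refine Finset.sum_congr rfl fun r hr => ?_
    rw [Finset.HasAntidiagonal.mem_antidiagonal] at hr
    rcases Nat.eq_zero_or_pos r.1 with h1 | h1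
    · have : (r.1 : ℕ) = 0 := h1
      rw [this]
      simp [PowerSeries.coeff_zero_eq_constantCoeff, hp, hq]
    · rcases Nat.eq_zero_or_pos r.2 with h2 | h2
      · rw [h2]
        simp [PowerSeries.coeff_zero_eq_constantCoeff, hp, hq]
      · rw [h r.1 (by omega), h r.2 (by omega)]
  | succ k hk2 ih =>
    rw [pow_succ, pow_succ, coeff_mul, coeff_mul]
    refine Finset.sum_congr rfl fun r hr => ?_
    rw [Finset.HasAntidiagonal.mem_antidiagonal] at hr
    rcases Nat.eq_zero_or_pos r.2 with h2 | h2
    · rw [h2]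
      simp [PowerSeries.coeff_zero_eq_constantCoeff, hp, hq]
    · rcases Nat.eq_zero_or_pos r.1 with h1 | h1
      · rw [h1]
        simp [PowerSeries.coeff_zero_eq_constantCoeff,
          constantCoeff_pow_eq_zero hp (by omega : 0 < k),
          constantCoeff_pow_eq_zero hq (by omega : 0 < k)]
      · rw [ih (n := r.1) (fun j hj => h j (by omega)), h r.2 (by omega)]

/-- coefficient `n` of a substitution depends only on the inner series through
coefficients `≤ n`. -/
lemma coeff_pssubst_congr {g g' : PowerSeries R} {n : ℕ}
    (h : ∀ j ≤ n, coeff j g = coeff j g') (f : PowerSeries R) :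
    coeff n (pssubst g f) = coeff n (pssubst g' f) := by
  rw [coeff_pssubst, coeff_pssubst]
  exact Finset.sum_congr rfl fun k _ => by rw [coeff_pow_congr_le h]

end ClaimA

namespace ClaimA
variable {R : Type*} [CommRing R]

lemma pssubst_X_inner (f : PowerSeries R) : pssubst X f = f := by
  ext n
  rw [coeff_pssubst, Finset.sum_eq_single n]
  · simp [PowerSeries.coeff_X_pow]
  · intro k _ hk
    simp [PowerSeries.coeff_X_pow, Ne.symm hk]
  · intro h; rw [mem_range] at h; omega

/-- Coefficients of the compositional inverse of a series
with zero constant term and linear coefficient `-1`. -/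
noncomputable def icoeff (g : PowerSeries R) : ℕ → R
  | 0 => 0
  | 1 => -1
  | (n+2) => coeff (n+2) (∑ k ∈ Icc 2 (n+2),
      C (coeff k g) * (PowerSeries.mk fun j => if _ : j < n+2 then icoeff g j else 0) ^ k)

noncomputable def inv (g : PowerSeries R) : PowerSeries R := PowerSeries.mk (icoeff g)

@[simp] lemma inv_coeff_zero (g : PowerSeries R) : constantCoeff (inv g) = 0 := by
  have : coeff 0 (inv g) = 0 := by simp [inv, icoeff]
  simpa [PowerSeries.coeff_zero_eq_constantCoeff] using this

@[simp] lemma inv_coeff_one (g : PowerSeries R) : coeff 1 (inv g) = -1 := by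
  simp [inv, icoeff]

lemma range_split (n : ℕ) : range (n + 3) = insert 0 (insert 1 (Icc 2 (n + 2))) := by
  ext k
  simp only [mem_range, mem_insert, mem_Icc]
  omega

lemma pssubst_inv (g : PowerSeries R) (hg0 : constantCoeff g = 0)
    (hg1 : coeff 1 g = -1) : pssubst (inv g) g = X := by
  ext n
  match n with
  | 0 =>
    rw [coeff_pssubst]
    simpa [PowerSeries.coeff_zero_eq_constantCoeff] using hg0
  | 1 =>
    rw [coeff_pssubst]
    have : range 2 = {0, 1} := rfl
    rw [this]
    simp [hg1, PowerSeries.coeff_zero_eq_constantCoeff, hg0, inv, icoeff]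
  | (n+2) =>
    rw [coeff_pssubst, range_split, Finset.sum_insert (by simp),
      Finset.sum_insert (by simp)]
    have h0 : coeff 0 g * coeff (n+2) ((inv g) ^ 0) = 0 := by
      simpa [PowerSeries.coeff_zero_eq_constantCoeff] using (by simp [hg0])
    have h1 : coeff 1 g * coeff (n+2) ((inv g) ^ 1) = - coeff (n+2) (inv g) := by
      rw [hg1, pow_one]; ring
    have hrec : coeff (n+2) (inv g) =
        ∑ k ∈ Icc 2 (n+2), coeff k g * coeff (n+2) ((inv g) ^ k) := by
      have hdef : coeff (n+2) (inv g) = icoeff g (n+2) := by simp [inv]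
      rw [hdef, icoeff]
      rw [map_sum]
      refine Finset.sum_congr rfl fun k hk => ?_
      rw [mem_Icc] at hk
      rw [PowerSeries.coeff_C_mul]
      congr 1
      refine coeff_pow_congr_lt ?_ ?_ ?_ hk.1
      · have : (0:ℕ) < n + 2 := by omega
        simp [PowerSeries.constantCoeff_mk, this, icoeff]
      · simp [inv, PowerSeries.constantCoeff_mk, icoeff]
      · intro j hj
        simp [inv, PowerSeries.coeff_mk, hj]
    rw [h0, h1, ← hrec]
    simp [PowerSeries.coeff_X]

lemma pssubst_inv' (g : PowerSeries R) (hg0 : constantCoeff g = 0)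
    (hg1 : coeff 1 g = -1) : pssubst g (inv g) = X := by
  have h1 : pssubst (inv g) g = X := pssubst_inv g hg0 hg1
  have h2 : pssubst (inv (inv g)) (inv g) = X :=
    pssubst_inv (inv g) (inv_coeff_zero g) (inv_coeff_one g)
  have key : inv (inv g) = g := by
    calc inv (inv g) = pssubst (inv (inv g)) X := (pssubst_X (inv_coeff_zero _)).symm
    _ = pssubst (inv (inv g)) (pssubst (inv g) g) := by rw [h1]
    _ = pssubst (pssubst (inv (inv g)) (inv g)) g :=
        pssubst_assoc (inv_coeff_zero _) (inv_coeff_zero _) g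
    _ = pssubst X g := by rw [h2]
    _ = g := pssubst_X_inner g
  rw [key] at h2; exact h2

/-- The continuous augmented automorphism determined by a power series with zero
constant term and linear coefficient `-1`. -/
noncomputable def mkEquiv (g : PowerSeries R) (hg0 : constantCoeff g = 0)
    (hg1 : coeff 1 g = -1) : PowerSeries R ≃ₐ[R] PowerSeries R :=
  AlgEquiv.ofAlgHom (substHom g hg0) (substHom (inv g) (inv_coeff_zero g))
    (AlgHom.ext fun f => by
      simp only [AlgHom.coe_comp, Function.comp_apply, substHom_apply, AlgHom.coe_id, id_eq]
      rw [pssubst_assoc (inv_coeff_zero g) hg0, pssubst_inv' g hg0 hg1, pssubst_X_inner])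
    (AlgHom.ext fun f => by
      simp only [AlgHom.coe_comp, Function.comp_apply, substHom_apply, AlgHom.coe_id, id_eq]
      rw [pssubst_assoc hg0 (inv_coeff_zero g), pssubst_inv g hg0 hg1, pssubst_X_inner])

@[simp] lemma mkEquiv_apply (g : PowerSeries R) (hg0) (hg1) (f : PowerSeries R) :
    mkEquiv g hg0 hg1 f = pssubst g f := rfl

end ClaimA

namespace ClaimA
variable {R : Type*} [CommRing R]

lemma continuous_coeffwise (F : PowerSeries R → PowerSeries R)
    (h : ∀ n, ∃ (N : ℕ) (φ : (Fin N → R) → R),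
      ∀ f, coeff n (F f) = φ (fun i => coeff (i : ℕ) f)) :
    @Continuous _ _ (mvPiTopology Unit R) (mvPiTopology Unit R) F := by
  letI : TopologicalSpace R := ⊥
  haveI : DiscreteTopology R := ⟨rfl⟩
  show @Continuous ((Unit →₀ ℕ) → R) ((Unit →₀ ℕ) → R) Pi.topologicalSpace Pi.topologicalSpace F
  apply continuous_pi
  intro d
  obtain ⟨N, φ, hφ⟩ := h (d ())
  have hd : d = Finsupp.single () (d ()) := by
    refine Finsupp.ext fun u => ?_
    cases u; simp
  have key : ∀ f, F f d = φ fun i => coeff (i : ℕ) f := by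
    intro f
    rw [hd]
    exact hφ f
  have hc : Continuous ((fun v : Fin N → R => φ v) ∘
      (fun (f : (Unit →₀ ℕ) → R) (i : Fin N) => f (Finsupp.single () (i : ℕ)))) :=
    (continuous_of_discreteTopology).comp
      (continuous_pi fun i => continuous_apply (Finsupp.single () (i : ℕ)))
  exact hc.congr fun f => (key f).symm

lemma continuous_pssubst (g : PowerSeries R) :
    @Continuous _ _ (mvPiTopology Unit R) (mvPiTopology Unit R) (pssubst g) := by
  refine continuous_coeffwise _ fun n => ⟨n + 1,
    fun v => ∑ i : Fin (n + 1), v i * coeff n (g ^ (i : ℕ)), fun f => ?_⟩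
  rw [coeff_pssubst]
  rw [Finset.sum_range fun k => coeff k f * coeff n (g ^ k)]

end ClaimA

namespace ClaimA
variable {R : Type*} [CommRing R]

/-- L2: leading coefficient of a power. -/
lemma coeff_pow_self {g : PowerSeries R} (hg : constantCoeff g = 0) (k : ℕ) :
    coeff k (g ^ k) = (coeff 1 g) ^ k := by
  induction k with
  | zero => simp
  | succ k ih =>
    rw [pow_succ, coeff_mul, Finset.sum_eq_single (k, 1)]
    · rw [ih]; ring
    · rintro ⟨i, j⟩ hij hne
      rw [Finset.HasAntidiagonal.mem_antidiagonal] at hij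
      rcases Nat.lt_or_ge i k with h | h
      · rw [coeff_pow_eq_zero hg h, zero_mul]
      · have : j = 0 := by
          rcases Nat.eq_or_lt_of_le h with h' | h'
          · exfalso; exact hne (by simp at hij ⊢; omega)
          · omega
        rw [this]
        simp only [PowerSeries.coeff_zero_eq_constantCoeff, hg, mul_zero]
    · intro h
      exfalso
      exact h (by simp [Finset.HasAntidiagonal.mem_antidiagonal])

lemma coeff_one_pow {g : PowerSeries R} (hg : constantCoeff g = 0) (k : ℕ) :
    coeff 1 (g ^ k) = if k = 1 then coeff 1 g else 0 := by
  match k with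
  | 0 => simp [PowerSeries.coeff_one]
  | 1 => simp
  | (k+2) => rw [coeff_pow_eq_zero hg (by omega)]; simp

/-- L3: subleading coefficient of a power. -/
lemma coeff_pow_succ {g : PowerSeries R} (hg : constantCoeff g = 0) (k : ℕ) :
    coeff (k + 2) (g ^ (k + 1)) = (k + 1) • ((coeff 1 g) ^ k * coeff 2 g) := by
  induction k with
  | zero => simp
  | succ k ih =>
    rw [pow_succ, coeff_mul]
    have hsub : ({(k+2, 1), (k+1, 2)} : Finset (ℕ × ℕ)) ⊆ antidiagonal (k + 1 + 2) := by
      intro p hp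
      simp only [Finset.mem_insert, Finset.mem_singleton] at hp
      rcases hp with rfl | rfl <;> simp [Finset.HasAntidiagonal.mem_antidiagonal]
    have hzero : ∀ p ∈ antidiagonal (k + 1 + 2),
        p ∉ ({(k+2, 1), (k+1, 2)} : Finset (ℕ × ℕ)) →
        coeff p.1 (g ^ (k + 1)) * coeff p.2 g = 0 := by
      rintro ⟨i, j⟩ hij hnot
      rw [Finset.HasAntidiagonal.mem_antidiagonal] at hij
      simp only [Finset.mem_insert, Finset.mem_singleton, Prod.mk.injEq] at hnot
      rcases Nat.lt_or_ge i (k + 1) with h | h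
      · rw [coeff_pow_eq_zero hg h, zero_mul]
      · have : j = 0 := by omega
        rw [this]
        simp only [PowerSeries.coeff_zero_eq_constantCoeff, hg, mul_zero]
    rw [← Finset.sum_subset hsub hzero, Finset.sum_pair (by simp)]
    rw [ih, coeff_pow_self hg]
    push_cast [succ_nsmul, smul_add, nsmul_eq_mul]
    ring

/-- products with a series supported in degrees `≥ M`. -/
lemma coeff_mul_lowzero {d b : PowerSeries R} {M n : ℕ}
    (hd : ∀ i < M, coeff i d = 0) (hn : n < M) :
    coeff n (d * b) = 0 := by
  rw [coeff_mul]
  refine Finset.sum_eq_zero fun p hp => ?_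
  rw [Finset.HasAntidiagonal.mem_antidiagonal] at hp
  rw [hd p.1 (by omega), zero_mul]

lemma coeff_pow_lowzero {d : PowerSeries R} {M : ℕ}
    (hd : ∀ i < M, coeff i d = 0) {j : ℕ} (hj : 2 ≤ j) {n : ℕ} (hn : n < 2 * M) :
    coeff n (d ^ j) = 0 := by
  have hrw : d ^ j = d * (d * d ^ (j - 2)) := by
    rw [← pow_succ', ← pow_succ']
    congr 1
    omega
  rw [hrw, coeff_mul]
  refine Finset.sum_eq_zero fun p hp => ?_
  rw [Finset.HasAntidiagonal.mem_antidiagonal] at hp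
  rcases Nat.lt_or_ge p.1 M with h | h
  · rw [hd p.1 h, zero_mul]
  · rw [coeff_mul_lowzero hd (by omega), mul_zero]

end ClaimA

namespace ClaimA
variable {R : Type*} [CommRing R]

lemma coeff_add_pow {g d : PowerSeries R} {M n : ℕ}
    (hd : ∀ i < M, coeff i d = 0) (hn : n < 2 * M) (k : ℕ) :
    coeff n ((g + d) ^ (k + 1)) =
      coeff n (g ^ (k + 1)) + (k + 1) • coeff n (d * g ^ k) := by
  rw [add_pow, map_sum]
  have hsub : ({k, k + 1} : Finset ℕ) ⊆ range (k + 1 + 1) := by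
    intro i hi
    simp only [Finset.mem_insert, Finset.mem_singleton] at hi
    rcases hi with rfl | rfl <;> simp only [mem_range] <;> omega
  have hzero : ∀ i ∈ range (k + 1 + 1), i ∉ ({k, k + 1} : Finset ℕ) →
      coeff n (g ^ i * d ^ (k + 1 - i) * ((k+1).choose i : R⟦X⟧)) = 0 := by
    intro i hi hnot
    rw [mem_range] at hi
    simp only [Finset.mem_insert, Finset.mem_singleton] at hnot
    have h2 : 2 ≤ k + 1 - i := by omega
    rw [mul_comm (g ^ i) _, mul_assoc, coeff_mul]
    refine Finset.sum_eq_zero fun p hp => ?_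
    rw [Finset.HasAntidiagonal.mem_antidiagonal] at hp
    rw [coeff_pow_lowzero hd h2 (show p.1 < 2 * M by omega), zero_mul]
  rw [← Finset.sum_subset hsub hzero, Finset.sum_pair (by omega)]
  have e1 : g ^ k * d ^ (k + 1 - k) * ((k+1).choose k : R⟦X⟧) = (k + 1) • (d * g ^ k) := by
    have : k + 1 - k = 1 := by omega
    rw [this, pow_one, Nat.choose_succ_self_right, nsmul_eq_mul]
    push_cast
    ring
  have e2 : g ^ (k+1) * d ^ (k + 1 - (k+1)) * ((k+1).choose (k+1) : R⟦X⟧) = g ^ (k+1) := by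
    simp
  rw [e1, e2, map_nsmul]
  ring

lemma coeff_m_mul_pow {g d : PowerSeries R} {M : ℕ} (hg : constantCoeff g = 0)
    (hd : ∀ i < M, coeff i d = 0) (k : ℕ) :
    coeff M (d * g ^ k) = if k = 0 then coeff M d else 0 := by
  rw [coeff_mul, Finset.sum_eq_single (M, 0)]
  · rcases Nat.eq_zero_or_pos k with rfl | hk
    · simp
    · simp [PowerSeries.coeff_zero_eq_constantCoeff, constantCoeff_pow_eq_zero hg hk,
        Nat.pos_iff_ne_zero.mp hk]
  · rintro ⟨i, j⟩ hij hne
    rw [Finset.HasAntidiagonal.mem_antidiagonal] at hij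
    have : i < M := by
      rcases Nat.lt_or_ge i M with h | h
      · exact h
      · exfalso; exact hne (by simp at hij ⊢; omega)
    rw [hd i this, zero_mul]
  · intro h
    exact absurd (by simp [Finset.HasAntidiagonal.mem_antidiagonal]) h

lemma coeff_m1_mul_pow {g d : PowerSeries R} {M : ℕ} (hg : constantCoeff g = 0)
    (hd : ∀ i < M, coeff i d = 0) (k : ℕ) :
    coeff (M + 1) (d * g ^ k) =
      (if k = 0 then coeff (M + 1) d else 0) +
      (if k = 1 then coeff M d * coeff 1 g else 0) := by
  rw [coeff_mul]
  have hsub : ({(M+1, 0), (M, 1)} : Finset (ℕ × ℕ)) ⊆ antidiagonal (M + 1) := by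
    intro p hp
    simp only [Finset.mem_insert, Finset.mem_singleton] at hp
    rcases hp with rfl | rfl <;> simp [Finset.HasAntidiagonal.mem_antidiagonal]
  have hzero : ∀ p ∈ antidiagonal (M + 1),
      p ∉ ({(M+1, 0), (M, 1)} : Finset (ℕ × ℕ)) →
      coeff p.1 d * coeff p.2 (g ^ k) = 0 := by
    rintro ⟨i, j⟩ hij hnot
    rw [Finset.HasAntidiagonal.mem_antidiagonal] at hij
    simp only [Finset.mem_insert, Finset.mem_singleton, Prod.mk.injEq] at hnot
    have : i < M := by omega
    rw [hd i this, zero_mul]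
  rw [← Finset.sum_subset hsub hzero, Finset.sum_pair (by simp)]
  rw [coeff_one_pow hg]
  rcases Nat.eq_zero_or_pos k with rfl | hk
  · simp
  · simp only [PowerSeries.coeff_zero_eq_constantCoeff, constantCoeff_pow_eq_zero hg hk,
      Nat.pos_iff_ne_zero.mp hk, if_false, mul_zero, zero_add]
    by_cases h1 : k = 1 <;> simp [h1, mul_comm]

end ClaimA

namespace ClaimA
variable {R : Type*} [CommRing R]

/-- Inner perturbation lemma, degree `m`. -/
lemma coeff_pssubst_perturb_m {g d f : PowerSeries R} {m : ℕ} (hg : constantCoeff g = 0)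
    (hm : 2 ≤ m) (hd : ∀ j < m, coeff j d = 0) :
    coeff m (pssubst (g + d) f) =
      coeff m (pssubst g f) + coeff 1 f * coeff m d := by
  rw [coeff_pssubst, coeff_pssubst, Finset.sum_range_succ' _ m, Finset.sum_range_succ' _ m]
  have step : ∀ i ∈ range m, coeff (i+1) f * coeff m ((g + d) ^ (i+1)) =
      coeff (i+1) f * coeff m (g ^ (i+1)) +
      coeff (i+1) f * ((i+1) • (if i = 0 then coeff m d else 0)) := by
    intro i _
    rw [coeff_add_pow hd (by omega) i, coeff_m_mul_pow hg hd i, mul_add]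
  rw [Finset.sum_congr rfl step, Finset.sum_add_distrib]
  have last : ∑ i ∈ range m, coeff (i+1) f * ((i+1) • (if i = 0 then coeff m d else 0)) =
      coeff 1 f * coeff m d := by
    rw [Finset.sum_eq_single 0]
    · simp
    · intro i _ hi; simp [hi]
    · intro h; exact absurd (mem_range.mpr (by omega)) h
  rw [last]
  simp only [pow_zero]
  ring

/-- Inner perturbation lemma, degree `m + 1`. -/
lemma coeff_pssubst_perturb_m1 {g d f : PowerSeries R} {m : ℕ} (hg : constantCoeff g = 0)
    (hm : 2 ≤ m) (hd : ∀ j < m, coeff j d = 0) :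
    coeff (m+1) (pssubst (g + d) f) =
      coeff (m+1) (pssubst g f) + coeff 1 f * coeff (m+1) d +
      2 * (coeff 2 f * (coeff m d * coeff 1 g)) := by
  rw [coeff_pssubst, coeff_pssubst, Finset.sum_range_succ' _ (m+1),
    Finset.sum_range_succ' _ (m+1)]
  have step : ∀ i ∈ range (m+1), coeff (i+1) f * coeff (m+1) ((g + d) ^ (i+1)) =
      coeff (i+1) f * coeff (m+1) (g ^ (i+1)) +
      coeff (i+1) f * ((i+1) • ((if i = 0 then coeff (m+1) d else 0) +
        (if i = 1 then coeff m d * coeff 1 g else 0))) := by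
    intro i _
    rw [coeff_add_pow hd (by omega) i, coeff_m1_mul_pow hg hd i, mul_add]
  rw [Finset.sum_congr rfl step, Finset.sum_add_distrib]
  have last : ∑ i ∈ range (m+1),
      coeff (i+1) f * ((i+1) • ((if i = 0 then coeff (m+1) d else 0) +
        (if i = 1 then coeff m d * coeff 1 g else 0))) =
      coeff 1 f * coeff (m+1) d + 2 * (coeff 2 f * (coeff m d * coeff 1 g)) := by
    have split : ∀ i ∈ range (m+1),
        coeff (i+1) f * ((i+1) • ((if i = 0 then coeff (m+1) d else 0) +
          (if i = 1 then coeff m d * coeff 1 g else 0))) =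
        (if i = 0 then coeff 1 f * coeff (m+1) d else 0) +
        (if i = 1 then 2 * (coeff 2 f * (coeff m d * coeff 1 g)) else 0) := by
      intro i _
      by_cases h0 : i = 0
      · subst h0; simp
      · by_cases h1 : i = 1
        · subst h1
          simp only [h0, if_false, if_pos rfl, zero_add, nsmul_eq_mul]
          push_cast
          ring
        · simp [h0, h1]
    rw [Finset.sum_congr rfl split, Finset.sum_add_distrib]
    rw [Finset.sum_ite_eq' (range (m+1)) 0, Finset.sum_ite_eq' (range (m+1)) 1]
    simp only [mem_range]
    rw [if_pos (by omega), if_pos (by omega)]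
  rw [last]
  simp only [pow_zero]
  ring

end ClaimA

namespace ClaimA
variable {R : Type*} [CommRing R]

/-- The series `-X + x₂X² + x₃X³ + ∑_{k≥4, k≠m} bₖ Xᵏ + t Xᵐ`. -/
noncomputable def genser (x₂ x₃ : R) (b : ℕ → R) (m : ℕ) (t : R) : PowerSeries R :=
  PowerSeries.mk fun k =>
    if k = 0 then 0 else if k = 1 then -1 else if k = 2 then x₂ else if k = 3 then x₃
    else if k = m then t else b k

variable (x₂ x₃ : R) (b : ℕ → R) (m : ℕ) (t : R)

@[simp] lemma genser_coeff_zero : constantCoeff (genser x₂ x₃ b m t) = 0 := by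
  have : coeff 0 (genser x₂ x₃ b m t) = 0 := by simp [genser]
  simpa [PowerSeries.coeff_zero_eq_constantCoeff] using this

@[simp] lemma genser_coeff_one : coeff 1 (genser x₂ x₃ b m t) = -1 := by
  simp [genser]

lemma genser_coeff_two (hm : 4 ≤ m) : coeff 2 (genser x₂ x₃ b m t) = x₂ := by
  simp only [genser, PowerSeries.coeff_mk]
  norm_num [show (2:ℕ) ≠ m by omega]

lemma genser_coeff_three (hm : 4 ≤ m) : coeff 3 (genser x₂ x₃ b m t) = x₃ := by
  simp only [genser, PowerSeries.coeff_mk]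
  norm_num [show (3:ℕ) ≠ m by omega]

lemma genser_coeff_m (hm : 4 ≤ m) : coeff m (genser x₂ x₃ b m t) = t := by
  simp only [genser, PowerSeries.coeff_mk]
  rw [if_neg (by omega), if_neg (by omega), if_neg (by omega), if_neg (by omega)]
  simp

lemma genser_coeff_other {k : ℕ} (hk : 4 ≤ k) (hkm : k ≠ m) :
    coeff k (genser x₂ x₃ b m t) = b k := by
  simp only [genser, PowerSeries.coeff_mk]
  rw [if_neg (by omega), if_neg (by omega), if_neg (by omega), if_neg (by omega), if_neg hkm]

lemma genser_eq (hm : 4 ≤ m) :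
    genser x₂ x₃ b m t = genser x₂ x₃ b m 0 + C t * X ^ m := by
  ext k
  rw [map_add, PowerSeries.coeff_C_mul, PowerSeries.coeff_X_pow]
  by_cases hkm : k = m
  · subst hkm
    rw [genser_coeff_m _ _ _ _ _ hm, genser_coeff_m _ _ _ _ _ hm]
    simp
  · simp only [genser, PowerSeries.coeff_mk, hkm, if_false, mul_zero, add_zero]

lemma coeff_C_mul_X_pow (u : R) (m j : ℕ) :
    coeff j (C u * X ^ m) = if j = m then u else 0 := by
  rw [PowerSeries.coeff_C_mul, PowerSeries.coeff_X_pow]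
  by_cases h : j = m <;> simp [h]

lemma coeff_one_pssubst {g f : PowerSeries R} :
    coeff 1 (pssubst g f) = coeff 1 f * coeff 1 g := by
  rw [coeff_pssubst]
  have : range 2 = {0, 1} := rfl
  rw [this, Finset.sum_pair (by omega)]
  simp [PowerSeries.coeff_one]

end ClaimA

namespace ClaimA
variable {R : Type*} [CommRing R]

lemma const_CX {u : R} {m : ℕ} (hm : 1 ≤ m) : constantCoeff (C u * X ^ m) = 0 := by
  have := coeff_C_mul_X_pow u m 0
  rw [if_neg (by omega)] at this
  simpa [PowerSeries.coeff_zero_eq_constantCoeff, zero_pow (show m ≠ 0 by omega)] using this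

lemma comp_coeff_m (B G : PowerSeries R) (hB0 : constantCoeff B = 0)
    (hG0 : constantCoeff G = 0) (hB1 : coeff 1 B = -1) (hG1 : coeff 1 G = -1)
    {m : ℕ} (hm : 4 ≤ m) (hme : Even m) (t u : R) :
    coeff m (pssubst (G + C u * X ^ m) (B + C t * X ^ m)) =
      coeff m (pssubst G B) + t - u := by
  set d : PowerSeries R := C u * X ^ m with hd_def
  have hγ0 : constantCoeff (G + d) = 0 := by
    rw [map_add, hG0, const_CX (by omega), add_zero]
  have hdlow : ∀ j < m, coeff j d = 0 := by
    intro j hj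
    rw [hd_def, coeff_C_mul_X_pow, if_neg (by omega)]
  rw [pssubst_add, pssubst_mul hγ0, pssubst_C, pssubst_pow hγ0, pssubst_X hγ0,
    map_add, PowerSeries.coeff_C_mul]
  have h1 : coeff m (pssubst (G + d) B) = coeff m (pssubst G B) - u := by
    rw [coeff_pssubst_perturb_m hG0 (by omega) hdlow, hB1, hd_def,
      coeff_C_mul_X_pow, if_pos rfl]
    ring
  have h2 : coeff m ((G + d) ^ m) = 1 := by
    rw [coeff_pow_self hγ0, map_add, hG1, hd_def, coeff_C_mul_X_pow, if_neg (by omega),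
      add_zero]
    exact Even.neg_one_pow hme
  rw [h1, h2]
  ring

lemma comp_coeff_m1 (B G : PowerSeries R) (hB0 : constantCoeff B = 0)
    (hG0 : constantCoeff G = 0) (hB1 : coeff 1 B = -1) (hG1 : coeff 1 G = -1)
    {m : ℕ} (hm : 4 ≤ m) (hme : Even m) (t u : R) :
    coeff (m + 1) (pssubst (G + C u * X ^ m) (B + C t * X ^ m)) =
      coeff (m + 1) (pssubst G B) - 2 * coeff 2 B * u - (m : R) * coeff 2 G * t := by
  set d : PowerSeries R := C u * X ^ m with hd_def
  have hγ0 : constantCoeff (G + d) = 0 := by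
    rw [map_add, hG0, const_CX (by omega), add_zero]
  have hdlow : ∀ j < m, coeff j d = 0 := by
    intro j hj
    rw [hd_def, coeff_C_mul_X_pow, if_neg (by omega)]
  have hdm : coeff m d = u := by rw [hd_def, coeff_C_mul_X_pow, if_pos rfl]
  have hdm1 : coeff (m + 1) d = 0 := by
    rw [hd_def, coeff_C_mul_X_pow, if_neg (by omega)]
  rw [pssubst_add, pssubst_mul hγ0, pssubst_C, pssubst_pow hγ0, pssubst_X hγ0,
    map_add, PowerSeries.coeff_C_mul]
  have h1 : coeff (m + 1) (pssubst (G + d) B) =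
      coeff (m + 1) (pssubst G B) - 2 * (coeff 2 B * u) := by
    rw [coeff_pssubst_perturb_m1 hG0 (by omega) hdlow, hB1, hdm, hdm1, hG1]
    ring
  have h2 : coeff (m + 1) ((G + d) ^ m) = -((m : R) * coeff 2 G) := by
    have hγ1 : coeff 1 (G + d) = -1 := by
      rw [map_add, hG1, hd_def, coeff_C_mul_X_pow, if_neg (by omega), add_zero]
    have hγ2 : coeff 2 (G + d) = coeff 2 G := by
      rw [map_add, hd_def, coeff_C_mul_X_pow, if_neg (by omega), add_zero]
    have key := coeff_pow_succ hγ0 (m - 1)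
    have e1 : m - 1 + 2 = m + 1 := by omega
    have e2 : m - 1 + 1 = m := by omega
    rw [e1, e2] at key
    rw [key, hγ1, hγ2]
    have hodd : Odd (m - 1) := Nat.Even.sub_odd (by omega) hme odd_one
    rw [hodd.neg_one_pow, nsmul_eq_mul]
    push_cast [e2]
    ring
  rw [h1, h2]
  ring

end ClaimA

namespace ClaimA
variable {R : Type*} [CommRing R]

lemma outer_m {w V W : PowerSeries R} (hW0 : constantCoeff W = 0) {m : ℕ} (hm : 2 ≤ m)
    (hlow : ∀ j < m, coeff j V = coeff j W) :
    coeff m (pssubst V w) =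
      coeff m (pssubst W w) + coeff 1 w * (coeff m V - coeff m W) := by
  have hVW : W + (V - W) = V := by ring
  have hd : ∀ j < m, coeff j (V - W) = 0 := fun j hj => by
    rw [map_sub, hlow j hj, sub_self]
  have h := coeff_pssubst_perturb_m (g := W) (d := V - W) (f := w) hW0 hm hd
  rw [hVW, map_sub] at h
  exact h

lemma outer_m1 {w V W : PowerSeries R} (hW0 : constantCoeff W = 0) {m : ℕ} (hm : 2 ≤ m)
    (hlow : ∀ j < m, coeff j V = coeff j W) :
    coeff (m + 1) (pssubst V w) =
      coeff (m + 1) (pssubst W w) + coeff 1 w * (coeff (m+1) V - coeff (m+1) W) +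
        2 * (coeff 2 w * ((coeff m V - coeff m W) * coeff 1 W)) := by
  have hVW : W + (V - W) = V := by ring
  have hd : ∀ j < m, coeff j (V - W) = 0 := fun j hj => by
    rw [map_sub, hlow j hj, sub_self]
  have h := coeff_pssubst_perturb_m1 (g := W) (d := V - W) (f := w) hW0 hm hd
  rw [hVW, map_sub, map_sub] at h
  exact h

end ClaimA

/-- Lemma `claimA`: let `p ≥ 5` be prime, `F ⊆ R` a field of
characteristic `p`, `b₂, b₃, c₂, c₃ ∈ F` with `c₂ - b₂ ≠ 0`, `a₂ = 2(b₂ - c₂)`,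
`a₃ = 4(b₂ - c₂)²`, and `α ∈ GA^c_1(R)` with `α(X) = X + a₂X² + a₃X³ + ⋯`. Let `m ≥ 4` be
even with `m ≢ 2 (mod p)`. Then for arbitrary prescribed coefficients `bₖ, cₖ` (`k ≥ 4`,
`k ≠ m`) there exist `bₘ, cₘ ∈ R` such that the automorphisms `β, γ` determined by
`β(X) = -X + b₂X² + b₃X³ + Σ_{k≥4} bₖXᵏ`, `γ(X) = -X + c₂X² + c₃X³ + Σ_{k≥4} cₖXᵏ` satisfy
`(βγα)(X)ₘ = (γβ)(X)ₘ` and `(βγα)(X)ₘ₊₁ = (γβ)(X)ₘ₊₁`. -/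
theorem exists_coeffs_solving_Em_of_not_two_mod_p {R F : Type*} [CommRing R] [Field F]
    {p : ℕ} (hp : p.Prime) (hp5 : 5 ≤ p) [CharP F p] [Algebra F R]
    (hinj : Function.Injective (algebraMap F R))
    (b₂ b₃ c₂ c₃ : F) (hne : c₂ - b₂ ≠ 0)
    (α : PowerSeries R ≃ₐ[R] PowerSeries R) (hα : GAc1 α)
    (hα1 : PowerSeries.coeff 1 (α PowerSeries.X) = 1)
    (hα2 : PowerSeries.coeff 2 (α PowerSeries.X) = algebraMap F R (2 * (b₂ - c₂)))
    (hα3 : PowerSeries.coeff 3 (α PowerSeries.X) = algebraMap F R (4 * (b₂ - c₂) ^ 2))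
    (m : ℕ) (hm4 : 4 ≤ m) (hmeven : Even m) (hmod : ¬ m ≡ 2 [MOD p])
    (b c : ℕ → R) :
    ∃ bm cm : R, ∃ β γ : PowerSeries R ≃ₐ[R] PowerSeries R, GAc1 β ∧ GAc1 γ ∧
      (PowerSeries.coeff 1 (β PowerSeries.X) = -1 ∧
        PowerSeries.coeff 2 (β PowerSeries.X) = algebraMap F R b₂ ∧
        PowerSeries.coeff 3 (β PowerSeries.X) = algebraMap F R b₃ ∧
        (∀ k, 4 ≤ k → k ≠ m → PowerSeries.coeff k (β PowerSeries.X) = b k) ∧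
        PowerSeries.coeff m (β PowerSeries.X) = bm) ∧
      (PowerSeries.coeff 1 (γ PowerSeries.X) = -1 ∧
        PowerSeries.coeff 2 (γ PowerSeries.X) = algebraMap F R c₂ ∧
        PowerSeries.coeff 3 (γ PowerSeries.X) = algebraMap F R c₃ ∧
        (∀ k, 4 ≤ k → k ≠ m → PowerSeries.coeff k (γ PowerSeries.X) = c k) ∧
        PowerSeries.coeff m (γ PowerSeries.X) = cm) ∧
      PowerSeries.coeff m ((β * γ * α) PowerSeries.X) =
        PowerSeries.coeff m ((γ * β) PowerSeries.X) ∧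
      PowerSeries.coeff (m + 1) ((β * γ * α) PowerSeries.X) =
        PowerSeries.coeff (m + 1) ((γ * β) PowerSeries.X) := by
  classical
  obtain ⟨-, hw0⟩ := hα
  set am := algebraMap F R with ham
  have hp2 : (2 : F) ≠ 0 := by
    intro h
    have h2 : ((2 : ℕ) : F) = 0 := by exact_mod_cast h
    have hdvd := (CharP.cast_eq_zero_iff F p 2).mp h2
    have := Nat.le_of_dvd (by norm_num) hdvd
    omega
  have hm2F : (m : F) - 2 ≠ 0 := by
    rw [sub_ne_zero]
    intro h
    apply hmod
    have h' : ((m : ℕ) : F) = ((2 : ℕ) : F) := by push_cast; exact h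
    exact (CharP.natCast_eq_natCast F p).mp h'
  set e : F := ((m : F) - 2) * (c₂ - b₂) with he_def
  have he : e ≠ 0 := mul_ne_zero hm2F hne
  -- the unperturbed series
  set B : PowerSeries R := ClaimA.genser (am b₂) (am b₃) b m 0 with hB_def
  set G : PowerSeries R := ClaimA.genser (am c₂) (am c₃) c m 0 with hG_def
  have hB0 : PowerSeries.constantCoeff B = 0 := ClaimA.genser_coeff_zero _ _ _ _ _
  have hG0 : PowerSeries.constantCoeff G = 0 := ClaimA.genser_coeff_zero _ _ _ _ _
  have hB1 : PowerSeries.coeff 1 B = -1 := ClaimA.genser_coeff_one _ _ _ _ _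
  have hG1 : PowerSeries.coeff 1 G = -1 := ClaimA.genser_coeff_one _ _ _ _ _
  have hB2 : PowerSeries.coeff 2 B = am b₂ := ClaimA.genser_coeff_two _ _ _ _ _ hm4
  have hG2 : PowerSeries.coeff 2 G = am c₂ := ClaimA.genser_coeff_two _ _ _ _ _ hm4
  set w : PowerSeries R := α PowerSeries.X with hw_def
  set W : PowerSeries R := ClaimA.pssubst B G with hW_def
  have hW0 : PowerSeries.constantCoeff W = 0 := by
    rw [hW_def, ClaimA.constantCoeff_pssubst hB0, hG0]
  have hW1 : PowerSeries.coeff 1 W = 1 := by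
    rw [hW_def, ClaimA.coeff_one_pssubst, hG1, hB1]; ring
  set K₁ := PowerSeries.coeff m (ClaimA.pssubst W w) with hK₁
  set K₂ := PowerSeries.coeff (m + 1) (ClaimA.pssubst W w) with hK₂
  set M₁ := PowerSeries.coeff m (ClaimA.pssubst G B) with hM₁
  set M₂ := PowerSeries.coeff (m + 1) (ClaimA.pssubst G B) with hM₂
  set w₂ := PowerSeries.coeff 2 w with hw₂
  -- the solved coefficients
  set s : R := am 2⁻¹ * (K₁ - M₁) with hs_def
  have h2s : (2 : R) * s = K₁ - M₁ := by
    rw [hs_def, show ((2 : R) = am (2 : F)) from (map_ofNat am 2).symm, ← mul_assoc,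
      ← map_mul, mul_inv_cancel₀ hp2, map_one, one_mul]
  set Q : R := M₂ - K₂ + 2 * am c₂ * s + 2 * w₂ * s - (m : R) * am c₂ * s with hQ_def
  set u : R := am e⁻¹ * Q with hu_def
  have heu : am e * u = Q := by
    rw [hu_def, ← mul_assoc, ← map_mul, mul_inv_cancel₀ he, map_one, one_mul]
  have hee : am e = ((m : R) - 2) * (am c₂ - am b₂) := by
    rw [he_def, map_mul, map_sub, map_sub, map_natCast, map_ofNat]
  set t : R := u + s with ht_def
  -- the perturbed series and the automorphisms
  set gβ : PowerSeries R := ClaimA.genser (am b₂) (am b₃) b m t with hgβ_def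
  set gγ : PowerSeries R := ClaimA.genser (am c₂) (am c₃) c m u with hgγ_def
  have hgb : gβ = B + PowerSeries.C t * PowerSeries.X ^ m :=
    ClaimA.genser_eq _ _ _ _ _ hm4
  have hgc : gγ = G + PowerSeries.C u * PowerSeries.X ^ m :=
    ClaimA.genser_eq _ _ _ _ _ hm4
  have hβ0 : PowerSeries.constantCoeff gβ = 0 := ClaimA.genser_coeff_zero _ _ _ _ _
  have hγ0 : PowerSeries.constantCoeff gγ = 0 := ClaimA.genser_coeff_zero _ _ _ _ _
  have hβ1 : PowerSeries.coeff 1 gβ = -1 := ClaimA.genser_coeff_one _ _ _ _ _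
  have hγ1 : PowerSeries.coeff 1 gγ = -1 := ClaimA.genser_coeff_one _ _ _ _ _
  have hβX : ClaimA.mkEquiv gβ hβ0 hβ1 PowerSeries.X = gβ := by
    rw [ClaimA.mkEquiv_apply, ClaimA.pssubst_X hβ0]
  have hγX : ClaimA.mkEquiv gγ hγ0 hγ1 PowerSeries.X = gγ := by
    rw [ClaimA.mkEquiv_apply, ClaimA.pssubst_X hγ0]
  refine ⟨t, u, ClaimA.mkEquiv gβ hβ0 hβ1, ClaimA.mkEquiv gγ hγ0 hγ1,
    ⟨ClaimA.continuous_pssubst gβ, by rw [hβX]; exact hβ0⟩,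
    ⟨ClaimA.continuous_pssubst gγ, by rw [hγX]; exact hγ0⟩,
    ⟨by rw [hβX]; exact hβ1,
     by rw [hβX]; exact ClaimA.genser_coeff_two _ _ _ _ _ hm4,
     by rw [hβX]; exact ClaimA.genser_coeff_three _ _ _ _ _ hm4,
     fun k hk hkm => by rw [hβX]; exact ClaimA.genser_coeff_other _ _ _ _ _ hk hkm,
     by rw [hβX]; exact ClaimA.genser_coeff_m _ _ _ _ _ hm4⟩,
    ⟨by rw [hγX]; exact hγ1,
     by rw [hγX]; exact ClaimA.genser_coeff_two _ _ _ _ _ hm4,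
     by rw [hγX]; exact ClaimA.genser_coeff_three _ _ _ _ _ hm4,
     fun k hk hkm => by rw [hγX]; exact ClaimA.genser_coeff_other _ _ _ _ _ hk hkm,
     by rw [hγX]; exact ClaimA.genser_coeff_m _ _ _ _ _ hm4⟩,
    ?_, ?_⟩
  all_goals {
    rw [AlgEquiv.mul_apply, AlgEquiv.mul_apply, ClaimA.mkEquiv_apply, ClaimA.mkEquiv_apply,
      AlgEquiv.mul_apply, hβX, ClaimA.mkEquiv_apply, ← hw_def,
      ClaimA.pssubst_assoc hγ0 hβ0 w]
    -- V := pssubst gβ gγ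
    have hVlow : ∀ j < m, PowerSeries.coeff j (ClaimA.pssubst gβ gγ) =
        PowerSeries.coeff j W := by
      intro j hj
      have hstep1 : PowerSeries.coeff j (ClaimA.pssubst gβ gγ) =
          PowerSeries.coeff j (ClaimA.pssubst B gγ) := by
        refine ClaimA.coeff_pssubst_congr (fun i hi => ?_) gγ
        rw [hgb, map_add, ClaimA.coeff_C_mul_X_pow, if_neg (by omega), add_zero]
      rw [hstep1, hgc, ClaimA.pssubst_add, ClaimA.pssubst_mul hB0, ClaimA.pssubst_C,
        ClaimA.pssubst_pow hB0, ClaimA.pssubst_X hB0, map_add,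
        PowerSeries.coeff_C_mul, ClaimA.coeff_pow_eq_zero hB0 hj, mul_zero, add_zero,
        hW_def]
    have hVm : PowerSeries.coeff m (ClaimA.pssubst gβ gγ) =
        PowerSeries.coeff m W + u - t := by
      rw [hgb, hgc, ClaimA.comp_coeff_m G B hG0 hB0 hG1 hB1 hm4 hmeven u t, hW_def]
    have hVm1 : PowerSeries.coeff (m + 1) (ClaimA.pssubst gβ gγ) =
        PowerSeries.coeff (m + 1) W - 2 * am c₂ * t - (m : R) * am b₂ * u := by
      rw [hgb, hgc, ClaimA.comp_coeff_m1 G B hG0 hB0 hG1 hB1 hm4 hmeven u t, hG2, hB2,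
        hW_def]
    have hRm : PowerSeries.coeff m (ClaimA.pssubst gγ gβ) = M₁ + t - u := by
      rw [hgb, hgc, ClaimA.comp_coeff_m B G hB0 hG0 hB1 hG1 hm4 hmeven t u, hM₁]
    have hRm1 : PowerSeries.coeff (m + 1) (ClaimA.pssubst gγ gβ) =
        M₂ - 2 * am b₂ * u - (m : R) * am c₂ * t := by
      rw [hgb, hgc, ClaimA.comp_coeff_m1 B G hB0 hG0 hB1 hG1 hm4 hmeven t u, hB2, hG2,
        hM₂]
    first
    | (rw [ClaimA.outer_m hW0 (by omega) hVlow, hVm, hRm, hα1, ← hK₁]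
       linear_combination -h2s - 2 * ht_def)
    | (rw [ClaimA.outer_m1 hW0 (by omega) hVlow, hVm, hVm1, hRm1, hα1, hW1, ← hK₂, ← hw₂]
       linear_combination heu - u * hee + ((m : R) * am c₂ - 2 * am c₂ - 2 * w₂) * ht_def)
  }
end

section
/- Let R be a commutative ring and n ≥ 2. Let f ∈ R[[X₁,...,Xₙ]] be a power series not involving X₁ (every monomial with nonzero coefficient has X₁-exponent 0) all of whose monomials have total degree ≥ 2. Then any α ∈ GA^c_n(R) with α(X₁) = X₁(1+f) = X₁ + X₁f and α(Xᵢ) = Xᵢ for i = 2,...,n is a single commutator: there exist β, γ ∈ GA^c_n(R) with α = β∘γ∘β⁻¹∘γ⁻¹. -/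
open MvPowerSeries

namespace X1F

open Finset

variable {R : Type*} [CommRing R] {n : ℕ}

/-- total degree of an exponent -/
def deg (d : Fin n →₀ ℕ) : ℕ := d.sum fun _ e => e

lemma deg_add (u v : Fin n →₀ ℕ) : deg (u + v) = deg u + deg v := by
  simp [deg, Finsupp.sum_add_index]

@[simp] lemma deg_zero : deg (0 : Fin n →₀ ℕ) = 0 := by simp [deg]

lemma deg_eq_zero {d : Fin n →₀ ℕ} (h : deg d = 0) : d = 0 := by
  ext i
  simp only [Finsupp.coe_zero, Pi.zero_apply]
  by_contra hi
  have hmem : i ∈ d.support := Finsupp.mem_support_iff.2 hi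
  have : d i ≤ deg d := Finset.single_le_sum (f := fun j => d j) (fun _ _ => Nat.zero_le _) hmem
  omega

lemma apply_le_deg (d : Fin n →₀ ℕ) (i : Fin n) : d i ≤ deg d := by
  by_cases hi : d i = 0
  · omega
  · exact Finset.single_le_sum (f := fun j => d j) (fun _ _ => Nat.zero_le _)
      (Finsupp.mem_support_iff.2 hi)

@[simp] lemma deg_single (i : Fin n) (k : ℕ) : deg (Finsupp.single i k) = k := by
  simp [deg, Finsupp.sum_single_index]

/-- the finset of exponents of total degree at most `N` -/
noncomputable def degLE (N : ℕ) : Finset (Fin n →₀ ℕ) :=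
  (Finset.Iic (Finsupp.equivFunOnFinite.symm fun _ => N)).filter fun e => deg e ≤ N

lemma mem_degLE {N : ℕ} {e : Fin n →₀ ℕ} : e ∈ degLE N ↔ deg e ≤ N := by
  constructor
  · intro h; exact (Finset.mem_filter.1 h).2
  · intro h
    refine Finset.mem_filter.2 ⟨Finset.mem_Iic.2 ?_, h⟩
    intro i
    simpa using (apply_le_deg e i).trans h

lemma degLE_mono {N N' : ℕ} (h : N ≤ N') : (degLE N : Finset (Fin n →₀ ℕ)) ⊆ degLE N' :=
  fun e he => mem_degLE.2 ((mem_degLE.1 he).trans h)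

/-- `F` has order at least `k`. -/
def OrdGE (k : ℕ) (F : MvPowerSeries (Fin n) R) : Prop :=
  ∀ d : Fin n →₀ ℕ, deg d < k → coeff d F = 0

lemma OrdGE.zero (F : MvPowerSeries (Fin n) R) : OrdGE 0 F := fun _ h => by omega

lemma OrdGE.mono {k k' : ℕ} (h : k' ≤ k) {F : MvPowerSeries (Fin n) R} (hF : OrdGE k F) :
    OrdGE k' F := fun d hd => hF d (by omega)

lemma OrdGE.zero_series (k : ℕ) : OrdGE k (0 : MvPowerSeries (Fin n) R) := fun d _ => map_zero _

lemma OrdGE.add {k : ℕ} {F G : MvPowerSeries (Fin n) R} (hF : OrdGE k F) (hG : OrdGE k G) :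
    OrdGE k (F + G) := fun d hd => by rw [map_add, hF d hd, hG d hd, add_zero]

lemma OrdGE.neg {k : ℕ} {F : MvPowerSeries (Fin n) R} (hF : OrdGE k F) : OrdGE k (-F) :=
  fun d hd => by rw [map_neg, hF d hd, neg_zero]

lemma OrdGE.mul {k l : ℕ} {F G : MvPowerSeries (Fin n) R} (hF : OrdGE k F) (hG : OrdGE l G) :
    OrdGE (k + l) (F * G) := by
  classical
  intro d hd
  rw [coeff_mul]
  refine Finset.sum_eq_zero ?_
  rintro ⟨u, v⟩ huv
  rw [Finset.HasAntidiagonal.mem_antidiagonal] at huv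
  have : deg u + deg v = deg d := by rw [← deg_add, huv]
  rcases Nat.lt_or_ge (deg u) k with h | h
  · simp [hF u h]
  · have : deg v < l := by omega
    simp [hG v this]

lemma OrdGE.pow {k m : ℕ} {F : MvPowerSeries (Fin n) R} (hF : OrdGE k F) :
    OrdGE (m * k) (F ^ m) := by
  induction m with
  | zero => simpa using OrdGE.zero _
  | succ m ih =>
    have := ih.mul hF
    simpa [Nat.succ_mul, pow_succ] using this

lemma OrdGE.one_of_constantCoeff {F : MvPowerSeries (Fin n) R}
    (h : constantCoeff F = 0) : OrdGE 1 F := by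
  intro d hd
  have : d = 0 := deg_eq_zero (by omega)
  subst this
  simpa [coeff_zero_eq_constantCoeff] using h

lemma OrdGE.finsetProd {a : Fin n → MvPowerSeries (Fin n) R}
    (ha : ∀ i, constantCoeff (a i) = 0) (e : Fin n →₀ ℕ) (s : Finset (Fin n)) :
    OrdGE (∑ i ∈ s, e i) (∏ i ∈ s, a i ^ e i) := by
  classical
  induction s using Finset.induction_on with
  | empty =>
    simp only [Finset.sum_empty, Finset.prod_empty]
    exact OrdGE.zero _
  | insert _ _ hx ih =>
    rename_i i s'
    rw [Finset.sum_insert hx, Finset.prod_insert hx]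
    have h1 : OrdGE (e i * 1) (a i ^ e i) := (OrdGE.one_of_constantCoeff (ha i)).pow
    have h1' : OrdGE (e i) (a i ^ e i) := by simpa using h1
    exact h1'.mul ih

lemma OrdGE.finsuppProd {a : Fin n → MvPowerSeries (Fin n) R}
    (ha : ∀ i, constantCoeff (a i) = 0) (e : Fin n →₀ ℕ) :
    OrdGE (deg e) (e.prod fun i k => a i ^ k) := by
  have := OrdGE.finsetProd ha e e.support
  rw [Finsupp.prod]
  exact this

section Subst

variable {R : Type*} [CommRing R] {n : ℕ}

/-- truncation of a power series to a polynomial keeping degrees `≤ N` -/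
noncomputable def pT (N : ℕ) (F : MvPowerSeries (Fin n) R) : MvPolynomial (Fin n) R :=
  ∑ e ∈ degLE N, MvPolynomial.monomial e (coeff e F)

lemma coeff_pT {N : ℕ} {F : MvPowerSeries (Fin n) R} (e : Fin n →₀ ℕ) :
    MvPolynomial.coeff e (pT N F) = if deg e ≤ N then coeff e F else 0 := by
  classical
  rw [pT, MvPolynomial.coeff_sum]
  simp only [MvPolynomial.coeff_monomial]
  rw [Finset.sum_ite_eq' (degLE N) e (fun e' => coeff e' F)]
  simp [mem_degLE]

lemma pT_add {N : ℕ} (F G : MvPowerSeries (Fin n) R) :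
    pT N (F + G) = pT N F + pT N G := by
  apply MvPolynomial.ext
  intro e
  simp only [coeff_pT, MvPolynomial.coeff_add, map_add]
  split <;> simp

variable (a : Fin n → MvPowerSeries (Fin n) R)

/-- evaluation of the truncation -/
noncomputable def AeT (N : ℕ) (F : MvPowerSeries (Fin n) R) : MvPowerSeries (Fin n) R :=
  MvPolynomial.aeval a (pT N F)

lemma coeff_AeT {N : ℕ} {F : MvPowerSeries (Fin n) R} (d : Fin n →₀ ℕ) :
    coeff d (AeT a N F) =
      ∑ e ∈ degLE N, coeff e F * coeff d (e.prod fun i k => a i ^ k) := by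
  rw [AeT, pT, map_sum, map_sum]
  refine Finset.sum_congr rfl fun e _ => ?_
  rw [MvPolynomial.aeval_monomial, ← c_eq_algebraMap, coeff_C_mul]

lemma coeff_aeval_eq_zero {N : ℕ} {d : Fin n →₀ ℕ}
    (ha : ∀ i, constantCoeff (a i) = 0)
    (hd : deg d ≤ N) {P : MvPolynomial (Fin n) R} (hP : ∀ e ∈ P.support, N < deg e) :
    coeff d (MvPolynomial.aeval a P) = 0 := by
  rw [MvPolynomial.aeval_def, MvPolynomial.eval₂_eq, map_sum]
  refine Finset.sum_eq_zero fun e he => ?_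
  rw [← c_eq_algebraMap, coeff_C_mul]
  have h1 : OrdGE (deg e) (∏ i ∈ e.support, a i ^ e i) := OrdGE.finsetProd ha e e.support
  rw [h1 d (by have := hP e he; omega), mul_zero]

lemma coeff_AeT_stable {N N' : ℕ} {F : MvPowerSeries (Fin n) R} {d : Fin n →₀ ℕ}
    (ha : ∀ i, constantCoeff (a i) = 0)
    (hd : deg d ≤ N) (hNN' : N ≤ N') :
    coeff d (AeT a N' F) = coeff d (AeT a N F) := by
  rw [coeff_AeT, coeff_AeT]
  refine (Finset.sum_subset (degLE_mono hNN') fun e he hne => ?_).symm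
  have h1 : OrdGE (deg e) (e.prod fun i k => a i ^ k) := OrdGE.finsuppProd ha e
  have h2 : N < deg e := by
    by_contra h
    exact hne (mem_degLE.2 (by omega))
  rw [h1 d (by omega), mul_zero]

/-- the substitution function -/
noncomputable def subFun (F : MvPowerSeries (Fin n) R) : MvPowerSeries (Fin n) R :=
  fun d => coeff d (AeT a (deg d) F)

lemma coeff_subFun {N : ℕ} {F : MvPowerSeries (Fin n) R} {d : Fin n →₀ ℕ}
    (ha : ∀ i, constantCoeff (a i) = 0) (hd : deg d ≤ N) :
    coeff d (subFun a F) = coeff d (AeT a N F) := by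
  have : coeff d (subFun a F) = coeff d (AeT a (deg d) F) := rfl
  rw [this, coeff_AeT_stable a ha le_rfl hd]

lemma coeff_subFun_eq {N : ℕ} {F : MvPowerSeries (Fin n) R} {d : Fin n →₀ ℕ}
    (ha : ∀ i, constantCoeff (a i) = 0) (hd : deg d ≤ N) :
    coeff d (subFun a F) =
      ∑ e ∈ degLE N, coeff e F * coeff d (e.prod fun i k => a i ^ k) := by
  rw [coeff_subFun a ha hd, coeff_AeT]

lemma subFun_add (ha : ∀ i, constantCoeff (a i) = 0)
    (F G : MvPowerSeries (Fin n) R) :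
    subFun a (F + G) = subFun a F + subFun a G := by
  apply MvPowerSeries.ext
  intro d
  rw [map_add, coeff_subFun a ha (le_refl (deg d)), coeff_subFun a ha (le_refl (deg d)),
    coeff_subFun a ha (le_refl (deg d)), AeT, AeT, AeT, pT_add, map_add, map_add]

lemma subFun_one (ha : ∀ i, constantCoeff (a i) = 0) :
    subFun a (1 : MvPowerSeries (Fin n) R) = 1 := by
  classical
  apply MvPowerSeries.ext
  intro d
  rw [coeff_subFun_eq a ha (le_refl (deg d))]
  have h0 : (0 : Fin n →₀ ℕ) ∈ degLE (deg d) := mem_degLE.2 (by simp)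
  rw [Finset.sum_eq_single (0 : Fin n →₀ ℕ)]
  · simp [coeff_one]
  · intro e he hne
    rw [coeff_one, if_neg hne, zero_mul]
  · intro h; exact absurd h0 h

lemma subFun_C (ha : ∀ i, constantCoeff (a i) = 0) (r : R) :
    subFun a (C r) = C r := by
  classical
  apply MvPowerSeries.ext
  intro d
  rw [coeff_subFun_eq a ha (le_refl (deg d))]
  have h0 : (0 : Fin n →₀ ℕ) ∈ degLE (deg d) := mem_degLE.2 (by simp)
  rw [Finset.sum_eq_single (0 : Fin n →₀ ℕ)]
  · rw [coeff_C, if_pos rfl, Finsupp.prod_zero_index, coeff_C]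
    have : coeff d (1 : MvPowerSeries (Fin n) R) = if d = 0 then 1 else 0 := coeff_one _
    rw [this]
    split <;> simp
  · intro e he hne
    rw [coeff_C, if_neg hne, zero_mul]
  · intro h; exact absurd h0 h

lemma pT_mul_high {N : ℕ} (F G : MvPowerSeries (Fin n) R) :
    ∀ e ∈ (pT N (F * G) - pT N F * pT N G).support, N < deg e := by
  classical
  intro e he
  rw [MvPolynomial.mem_support_iff] at he
  by_contra h
  push_neg at h
  apply he
  rw [MvPolynomial.coeff_sub, coeff_pT, if_pos h, MvPolynomial.coeff_mul, coeff_mul]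
  rw [sub_eq_zero]
  refine Finset.sum_congr rfl ?_
  rintro ⟨u, v⟩ huv
  rw [Finset.HasAntidiagonal.mem_antidiagonal] at huv
  have hu : deg u ≤ N := by
    have := deg_add u v; rw [huv] at this; omega
  have hv : deg v ≤ N := by
    have := deg_add u v; rw [huv] at this; omega
  rw [coeff_pT, coeff_pT, if_pos hu, if_pos hv]

lemma subFun_mul (ha : ∀ i, constantCoeff (a i) = 0)
    (F G : MvPowerSeries (Fin n) R) :
    subFun a (F * G) = subFun a F * subFun a G := by
  classical
  apply MvPowerSeries.ext
  intro d
  set N := deg d with hN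
  rw [coeff_subFun a ha (le_refl N)]
  rw [coeff_mul]
  have hstep : ∀ p ∈ antidiagonal d,
      coeff p.1 (subFun a F) * coeff p.2 (subFun a G) =
        coeff p.1 (AeT a N F) * coeff p.2 (AeT a N G) := by
    rintro ⟨u, v⟩ huv
    rw [Finset.HasAntidiagonal.mem_antidiagonal] at huv
    have hu : deg u ≤ N := by
      have := deg_add u v; rw [huv] at this; omega
    have hv : deg v ≤ N := by
      have := deg_add u v; rw [huv] at this; omega
    rw [coeff_subFun a ha hu, coeff_subFun a ha hv]
  rw [Finset.sum_congr rfl hstep, ← coeff_mul]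
  have hmul : AeT a N F * AeT a N G = MvPolynomial.aeval a (pT N F * pT N G) := by
    rw [map_mul]; rfl
  rw [hmul]
  have hdiff : coeff d (MvPolynomial.aeval a (pT N (F * G))) =
      coeff d (MvPolynomial.aeval a (pT N F * pT N G)) := by
    have hsub : pT N (F * G) = pT N F * pT N G + (pT N (F * G) - pT N F * pT N G) := by ring
    rw [hsub, map_add, map_add]
    rw [coeff_aeval_eq_zero a ha (le_refl N) (pT_mul_high F G), add_zero]
  rw [AeT, hdiff]

/-- the substitution algebra homomorphism -/
noncomputable def subAH (ha : ∀ i, constantCoeff (a i) = 0) :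
    MvPowerSeries (Fin n) R →ₐ[R] MvPowerSeries (Fin n) R where
  toFun := subFun a
  map_one' := subFun_one a ha
  map_mul' := subFun_mul a ha
  map_zero' := by
    have h := subFun_add a ha 0 0
    simp only [add_zero] at h
    have : subFun a (0 : MvPowerSeries (Fin n) R) = 0 := by
      have := congrArg (fun x => x - subFun a 0) h
      simpa using this.symm
    exact this
  map_add' := subFun_add a ha
  commutes' := fun r => by
    rw [show (algebraMap R (MvPowerSeries (Fin n) R)) r = C r from rfl]
    exact subFun_C a ha r

lemma subFun_X (ha : ∀ i, constantCoeff (a i) = 0) (i : Fin n) :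
    subFun a (X i) = a i := by
  classical
  apply MvPowerSeries.ext
  intro d
  rw [coeff_subFun_eq a ha (le_max_left (deg d) 1)]
  have hmem : Finsupp.single i 1 ∈ degLE (max (deg d) 1) := mem_degLE.2 (by simp)
  rw [Finset.sum_eq_single (Finsupp.single i 1)]
  · rw [coeff_X, if_pos rfl, one_mul,
      Finsupp.prod_single_index (by rw [pow_zero]), pow_one]
  · intro e he hne
    rw [coeff_X, if_neg hne, zero_mul]
  · intro h; exact absurd hmem h

lemma prod_monomial_single (e : Fin n →₀ ℕ) (s : Finset (Fin n)) :
    (∏ i ∈ s, monomial (R := R) (Finsupp.single i (e i)) 1) =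
      monomial (R := R) (∑ i ∈ s, Finsupp.single i (e i)) 1 := by
  classical
  induction s using Finset.induction_on with
  | empty => simp [monomial_zero_one]
  | insert _ _ hx ih =>
    rename_i i s'
    rw [Finset.prod_insert hx, Finset.sum_insert hx, ih, monomial_mul_monomial, one_mul]

lemma prod_X_pow (e : Fin n →₀ ℕ) :
    (e.prod fun i k => (X i : MvPowerSeries (Fin n) R) ^ k) = monomial e 1 := by
  rw [Finsupp.prod]
  have h1 : ∀ i ∈ e.support, (X i : MvPowerSeries (Fin n) R) ^ e i
      = monomial (Finsupp.single i (e i)) 1 := fun i _ => X_pow_eq i (e i)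
  have hsum : (∑ i ∈ e.support, Finsupp.single i (e i)) = e := by
    have := Finsupp.sum_single e
    rw [Finsupp.sum] at this
    exact this
  rw [Finset.prod_congr rfl h1, prod_monomial_single e e.support, hsum]

lemma pow_decomp {x r : MvPowerSeries (Fin n) R} (hx : OrdGE 1 x) (hr : OrdGE 2 r) (m : ℕ) :
    ∃ ρ, (x + r) ^ m = x ^ m + ρ ∧ OrdGE (m + 1) ρ := by
  induction m with
  | zero => exact ⟨0, by simp, fun d hd => by
      have : d = 0 := deg_eq_zero (by omega)
      simp [map_zero]⟩
  | succ m ih =>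
    obtain ⟨ρ, hdecomp, hρ⟩ := ih
    refine ⟨x ^ m * r + ρ * x + ρ * r, ?_, ?_⟩
    · rw [pow_succ, hdecomp, pow_succ]; ring
    · have hxm : OrdGE m (x ^ m) := by simpa using hx.pow (m := m)
      have t1 : OrdGE (m + 2) (x ^ m * r) := hxm.mul hr
      have t2 : OrdGE (m + 2) (ρ * x) := hρ.mul hx
      have t3 : OrdGE (m + 3) (ρ * r) := hρ.mul hr
      exact ((t1.mono (by omega)).add (t2.mono (by omega))).add (t3.mono (by omega))

lemma prod_decomp (ha2 : ∀ i, OrdGE 2 (a i - X i)) (e : Fin n →₀ ℕ) (s : Finset (Fin n)) :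
    ∃ ρ, (∏ i ∈ s, a i ^ e i) = (∏ i ∈ s, (X i : MvPowerSeries (Fin n) R) ^ e i) + ρ ∧
      OrdGE ((∑ i ∈ s, e i) + 1) ρ := by
  classical
  induction s using Finset.induction_on with
  | empty => exact ⟨0, by simp, fun d hd => map_zero _⟩
  | insert _ _ hx ih =>
    rename_i i s'
    obtain ⟨ρ, hdecomp, hρ⟩ := ih
    have hXi : OrdGE 1 (X i : MvPowerSeries (Fin n) R) :=
      OrdGE.one_of_constantCoeff (constantCoeff_X i)
    obtain ⟨ρᵢ, hdecompi, hρᵢ⟩ := pow_decomp hXi (ha2 i) (e i)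
    have hai : a i = X i + (a i - X i) := by ring
    refine ⟨(X i : MvPowerSeries (Fin n) R) ^ e i * ρ + ρᵢ * (∏ j ∈ s', (X j : MvPowerSeries (Fin n) R) ^ e j) + ρᵢ * ρ, ?_, ?_⟩
    · rw [Finset.prod_insert hx, Finset.prod_insert hx, hdecomp]
      conv_lhs => rw [hai]
      rw [hdecompi]
      ring
    · rw [Finset.sum_insert hx]
      have hXipow : OrdGE (e i) ((X i : MvPowerSeries (Fin n) R) ^ e i) := by
        simpa using hXi.pow (m := e i)
      have hXprod : OrdGE (∑ j ∈ s', e j) (∏ j ∈ s', (X j : MvPowerSeries (Fin n) R) ^ e j) :=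
        OrdGE.finsetProd (fun j => constantCoeff_X j) e s'
      have t1 := hXipow.mul hρ
      have t2 := hρᵢ.mul hXprod
      have t3 := hρᵢ.mul hρ
      exact ((t1.mono (by omega)).add (t2.mono (by omega))).add (t3.mono (by omega))

lemma coeff_prod_lin (ha2 : ∀ i, OrdGE 2 (a i - X i)) {e d : Fin n →₀ ℕ}
    (hd : deg d ≤ deg e) :
    coeff d (e.prod fun i k => a i ^ k) = if d = e then 1 else 0 := by
  classical
  obtain ⟨ρ, hdecomp, hρ⟩ := prod_decomp a ha2 e e.support
  have h1 : (e.prod fun i k => a i ^ k) = (∏ i ∈ e.support, a i ^ e i) := rfl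
  have h2 : (∑ i ∈ e.support, e i) = deg e := rfl
  rw [h1, hdecomp, map_add]
  have h3 : (∏ i ∈ e.support, (X i : MvPowerSeries (Fin n) R) ^ e i) = monomial e 1 := by
    rw [← prod_X_pow]
    rfl
  rw [h3, hρ d (by omega), add_zero, coeff_monomial]

lemma coeff_subFun_self (ha : ∀ i, constantCoeff (a i) = 0)
    (ha2 : ∀ i, OrdGE 2 (a i - X i)) {F : MvPowerSeries (Fin n) R} {d : Fin n →₀ ℕ}
    (hlow : ∀ e, deg e < deg d → coeff e F = 0) :
    coeff d (subFun a F) = coeff d F := by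
  classical
  rw [coeff_subFun_eq a ha (le_refl (deg d))]
  have hd : d ∈ degLE (deg d) := mem_degLE.2 le_rfl
  rw [Finset.sum_eq_single d]
  · rw [coeff_prod_lin a ha2 le_rfl, if_pos rfl, mul_one]
  · intro e he hne
    rcases Nat.lt_or_ge (deg e) (deg d) with h | h
    · rw [hlow e h, zero_mul]
    · rw [coeff_prod_lin a ha2 h, if_neg (fun hde => hne hde.symm), mul_zero]
  · intro h; exact absurd hd h

lemma subAH_apply (ha : ∀ i, constantCoeff (a i) = 0)
    (F : MvPowerSeries (Fin n) R) : subAH a ha F = subFun a F := rfl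

lemma subFun_injective (ha : ∀ i, constantCoeff (a i) = 0)
    (ha2 : ∀ i, OrdGE 2 (a i - X i)) :
    Function.Injective (subAH a ha) := by
  have hker : ∀ F : MvPowerSeries (Fin n) R, subFun a F = 0 → F = 0 := by
    intro F hF
    by_contra hne
    have hex : ∃ m : ℕ, ∃ d : Fin n →₀ ℕ, deg d = m ∧ coeff d F ≠ 0 := by
      have : ∃ d, coeff d F ≠ 0 := by
        by_contra hall
        push_neg at hall
        exact hne (MvPowerSeries.ext fun d => by rw [hall d, map_zero])
      obtain ⟨d, hd⟩ := this
      exact ⟨deg d, d, rfl, hd⟩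
    set S : Set ℕ := {m | ∃ d : Fin n →₀ ℕ, deg d = m ∧ coeff d F ≠ 0} with hS
    have hSne : S.Nonempty := hex
    obtain ⟨d, hdm, hd⟩ := Nat.sInf_mem hSne
    have hlow : ∀ e, deg e < deg d → coeff e F = 0 := by
      intro e he
      by_contra hce
      have : deg e ∈ S := ⟨e, rfl, hce⟩
      have := Nat.sInf_le this
      omega
    have := coeff_subFun_self a ha ha2 hlow
    rw [hF, map_zero] at this
    exact hd this.symm
  intro F G hFG
  have hz : subAH a ha (F - G) = 0 := by rw [map_sub, hFG, sub_self]
  exact sub_eq_zero.1 (hker _ hz)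

lemma subFun_surjective (ha : ∀ i, constantCoeff (a i) = 0)
    (ha2 : ∀ i, OrdGE 2 (a i - X i)) :
    Function.Surjective (subAH a ha) := by
  intro F
  let Gseq : ℕ → MvPowerSeries (Fin n) R := fun k =>
    Nat.rec F (fun _ Gk => Gk - (subAH a ha Gk - F)) k
  have hGsucc : ∀ k, Gseq (k + 1) = Gseq k - (subAH a ha (Gseq k) - F) := fun k => rfl
  have hE : ∀ k, OrdGE k (subAH a ha (Gseq k) - F) := by
    intro k
    induction k with
    | zero => exact OrdGE.zero _
    | succ k ih =>
      have hstep : subAH a ha (Gseq (k + 1)) - F =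
          (subAH a ha (Gseq k) - F) - subAH a ha (subAH a ha (Gseq k) - F) := by
        rw [hGsucc k, map_sub]
        ring
      rw [hstep]
      intro d hd
      rw [map_sub]
      have hcoeff : coeff d (subAH a ha (subAH a ha (Gseq k) - F)) =
          coeff d (subAH a ha (Gseq k) - F) := by
        rw [subAH_apply]
        exact coeff_subFun_self a ha ha2 (fun e he => ih e (by omega))
      rw [hcoeff, sub_self]
  have hstab : ∀ (d : Fin n →₀ ℕ) (k k' : ℕ), deg d < k → k ≤ k' →
      coeff d (Gseq k') = coeff d (Gseq k) := by
    intro d k k' hdk hkk'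
    induction k' with
    | zero => omega
    | succ k' ih =>
      rcases le_or_gt k k' with h | h
      · have hih := ih h
        rw [hGsucc k', map_sub, hE k' d (by omega), sub_zero]
        exact hih
      · have : k = k' + 1 := by omega
        rw [this]
  refine ⟨fun d => coeff d (Gseq (deg d + 1)), ?_⟩
  set G : MvPowerSeries (Fin n) R := fun d => coeff d (Gseq (deg d + 1)) with hG
  have hGcoeff : ∀ (d : Fin n →₀ ℕ) (k : ℕ), deg d < k → coeff d G = coeff d (Gseq k) := by
    intro d k hdk
    have h1 : coeff d G = coeff d (Gseq (deg d + 1)) := rfl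
    rcases le_or_gt k (deg d + 1) with h | h
    · rw [h1, hstab d k (deg d + 1) hdk h]
    · rw [h1, hstab d (deg d + 1) k (by omega) (by omega)]
  apply MvPowerSeries.ext
  intro d
  set N := deg d with hN
  rw [subAH_apply, coeff_subFun_eq a ha (le_refl N)]
  have hterm : ∀ e ∈ degLE N,
      coeff e G * coeff d (e.prod fun i k => a i ^ k) =
      coeff e (Gseq (N + 1)) * coeff d (e.prod fun i k => a i ^ k) := by
    intro e he
    rw [hGcoeff e (N + 1) (by have := mem_degLE.1 he; omega)]
  rw [Finset.sum_congr rfl hterm, ← coeff_subFun_eq a ha (le_refl N), ← subAH_apply a ha]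
  have hplus : subAH a ha (Gseq (N + 1)) = F + (subAH a ha (Gseq (N + 1)) - F) := by ring
  rw [hplus, map_add, hE (N + 1) d (by omega), add_zero]

/-- the substitution algebra equivalence -/
noncomputable def subAE (ha : ∀ i, constantCoeff (a i) = 0)
    (ha2 : ∀ i, OrdGE 2 (a i - X i)) :
    MvPowerSeries (Fin n) R ≃ₐ[R] MvPowerSeries (Fin n) R :=
  AlgEquiv.ofBijective (subAH a ha) ⟨subFun_injective a ha ha2, subFun_surjective a ha ha2⟩

lemma subAE_apply (ha : ∀ i, constantCoeff (a i) = 0)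
    (ha2 : ∀ i, OrdGE 2 (a i - X i)) (F : MvPowerSeries (Fin n) R) :
    subAE a ha ha2 F = subFun a F := rfl

lemma subFun_fix (ha : ∀ i, constantCoeff (a i) = 0) (i0 : Fin n)
    (hfix : ∀ j, j ≠ i0 → a j = X j) {f : MvPowerSeries (Fin n) R}
    (hf : ∀ e, coeff e f ≠ 0 → e i0 = 0) :
    subFun a f = f := by
  classical
  apply MvPowerSeries.ext
  intro d
  rw [coeff_subFun_eq a ha (le_refl (deg d))]
  have hterm : ∀ e ∈ degLE (deg d),
      coeff e f * coeff d (e.prod fun i k => a i ^ k) =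
      coeff e f * coeff d (monomial e 1) := by
    intro e he
    by_cases hce : coeff e f = 0
    · rw [hce, zero_mul, zero_mul]
    · have he0 : e i0 = 0 := hf e hce
      have hprod : (e.prod fun i k => a i ^ k) = (e.prod fun i k => (X i : MvPowerSeries (Fin n) R) ^ k) := by
        apply Finsupp.prod_congr
        intro j hj
        have : j ≠ i0 := by
          intro hji
          rw [hji] at hj
          exact (Finsupp.mem_support_iff.1 hj) he0
        rw [hfix j this]
      rw [hprod, prod_X_pow]
  rw [Finset.sum_congr rfl hterm]
  have hd : d ∈ degLE (deg d) := mem_degLE.2 le_rfl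
  rw [Finset.sum_eq_single d]
  · rw [coeff_monomial, if_pos rfl, mul_one]
  · intro e he hne
    rw [coeff_monomial, if_neg (fun h => hne h.symm), mul_zero]
  · intro h; exact absurd hd h

end Subst

section Topology

variable {R : Type*} [CommRing R] {n : ℕ}

lemma continuous_subFun (a : Fin n → MvPowerSeries (Fin n) R)
    (ha : ∀ i, constantCoeff (a i) = 0) :
    @Continuous _ _ (mvPiTopology (Fin n) R) (mvPiTopology (Fin n) R) (subFun a) := by
  letI : TopologicalSpace R := ⊥
  haveI : DiscreteTopology R := ⟨rfl⟩
  letI : TopologicalSpace (MvPowerSeries (Fin n) R) := mvPiTopology (Fin n) R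
  apply continuous_pi
  intro d
  have hrw : (fun F : MvPowerSeries (Fin n) R => subFun a F d) =
      (fun v : ((degLE (n := n) (deg d) : Finset _) : Type _) → R =>
        ∑ e ∈ (degLE (n := n) (deg d)).attach,
          v e * coeff d (e.1.prod fun i k => a i ^ k)) ∘
      (fun (F : MvPowerSeries (Fin n) R) (e : ((degLE (n := n) (deg d) : Finset _) : Type _)) =>
        coeff e.1 F) := by
    funext F
    have h1 : subFun a F d = coeff d (subFun a F) := rfl
    rw [Function.comp_apply, h1, coeff_subFun_eq a ha (le_refl (deg d)),
      ← Finset.sum_attach (degLE (deg d)) (fun e => coeff e F * coeff d (e.prod fun i k => a i ^ k))]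
  rw [hrw]
  exact continuous_of_discreteTopology.comp (continuous_pi fun e => continuous_apply e.1)

/-- truncation as a power series -/
noncomputable def sT (N : ℕ) (F : MvPowerSeries (Fin n) R) : MvPowerSeries (Fin n) R :=
  ∑ e ∈ degLE N, monomial e (coeff e F)

lemma coeff_sT {N : ℕ} {F : MvPowerSeries (Fin n) R} (e : Fin n →₀ ℕ) :
    coeff e (sT N F) = if deg e ≤ N then coeff e F else 0 := by
  classical
  rw [sT, map_sum]
  simp only [coeff_monomial]
  rw [Finset.sum_ite_eq (degLE N) e (fun e' => coeff e' F)]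
  simp [mem_degLE]

lemma algHom_apply_monomial (ψ : MvPowerSeries (Fin n) R →ₐ[R] MvPowerSeries (Fin n) R)
    (e : Fin n →₀ ℕ) (r : R) :
    ψ (monomial e r) = C r * (e.prod fun i k => (ψ (X i)) ^ k) := by
  have h1 : monomial e r = C r * monomial e 1 := by
    have := monomial_mul_monomial (0 : Fin n →₀ ℕ) e r 1
    rw [zero_add, mul_one] at this
    rw [← this]
    rfl
  rw [h1, map_mul]
  have h2 : ψ (C r) = C r := by
    rw [c_eq_algebraMap]
    exact ψ.commutes r
  rw [h2, ← prod_X_pow, Finsupp.prod, Finsupp.prod, map_prod]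
  simp only [map_pow]

lemma algHom_unique (ψ₁ ψ₂ : MvPowerSeries (Fin n) R →ₐ[R] MvPowerSeries (Fin n) R)
    (hc1 : @Continuous _ _ (mvPiTopology (Fin n) R) (mvPiTopology (Fin n) R) ψ₁)
    (hc2 : @Continuous _ _ (mvPiTopology (Fin n) R) (mvPiTopology (Fin n) R) ψ₂)
    (h : ∀ i, ψ₁ (X i) = ψ₂ (X i)) : ψ₁ = ψ₂ := by
  letI : TopologicalSpace R := ⊥
  haveI : DiscreteTopology R := ⟨rfl⟩
  letI : TopologicalSpace (MvPowerSeries (Fin n) R) := mvPiTopology (Fin n) R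
  have hpoly : ∀ (N : ℕ) (F : MvPowerSeries (Fin n) R), ψ₁ (sT N F) = ψ₂ (sT N F) := by
    intro N F
    rw [sT, map_sum, map_sum]
    refine Finset.sum_congr rfl fun e _ => ?_
    rw [algHom_apply_monomial, algHom_apply_monomial]
    congr 1
    exact Finsupp.prod_congr fun i _ => by rw [h i]
  apply AlgHom.ext
  intro F
  apply MvPowerSeries.ext
  intro d
  have hsT : Filter.Tendsto (fun N => sT N F) Filter.atTop (nhds F) := by
    apply tendsto_pi_nhds.2
    intro e
    have hev : ∀ᶠ N in Filter.atTop, (fun _ : ℕ => coeff e F) N = (fun N => (sT N F) e) N :=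
      Filter.eventually_atTop.2 ⟨deg e, fun N _hN => by
        show coeff e F = (sT N F) e
        rw [show (sT N F) e = coeff e (sT N F) from rfl, coeff_sT, if_pos ‹deg e ≤ N›]⟩
    exact Filter.Tendsto.congr' hev tendsto_const_nhds
  have h1 : Filter.Tendsto (fun N => (ψ₁ (sT N F)) d) Filter.atTop (nhds ((ψ₁ F) d)) :=
    ((continuous_apply d).tendsto (ψ₁ F)).comp ((hc1.tendsto F).comp hsT)
  have h2 : Filter.Tendsto (fun N => (ψ₂ (sT N F)) d) Filter.atTop (nhds ((ψ₂ F) d)) :=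
    ((continuous_apply d).tendsto (ψ₂ F)).comp ((hc2.tendsto F).comp hsT)
  rw [nhds_discrete R, Filter.tendsto_pure] at h1 h2
  obtain ⟨N, hN1, hN2⟩ := (h1.and h2).exists
  have : coeff d (ψ₁ F) = coeff d (ψ₂ F) := by
    rw [show coeff d (ψ₁ F) = (ψ₁ F) d from rfl, show coeff d (ψ₂ F) = (ψ₂ F) d from rfl,
      ← hN1, ← hN2, hpoly]
  exact this

lemma continuous_comp' {h g : MvPowerSeries (Fin n) R → MvPowerSeries (Fin n) R}
    (hh : @Continuous _ _ (mvPiTopology (Fin n) R) (mvPiTopology (Fin n) R) h)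
    (hg : @Continuous _ _ (mvPiTopology (Fin n) R) (mvPiTopology (Fin n) R) g) :
    @Continuous _ _ (mvPiTopology (Fin n) R) (mvPiTopology (Fin n) R) (h ∘ g) := by
  letI : TopologicalSpace (MvPowerSeries (Fin n) R) := mvPiTopology (Fin n) R
  exact hh.comp hg

end Topology

end X1F

/-- Lemma `x1f`, Step 1: if `f` does not involve `X₁` and all monomials of
`f` have total degree `≥ 2`, then any `α ∈ GA^c_n(R)` with `α(X₁) = X₁ + X₁f` and
`α(Xᵢ) = Xᵢ` for `i ≥ 2` is a single commutator of elements of `GA^c_n(R)`. -/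
theorem x1_mul_one_add_f_is_commutator {R : Type*} [CommRing R] {n : ℕ} (hn : 2 ≤ n)
    (f : MvPowerSeries (Fin n) R)
    (hf1 : ∀ d : Fin n →₀ ℕ, MvPowerSeries.coeff d f ≠ 0 → d ⟨0, by omega⟩ = 0)
    (hf2 : ∀ d : Fin n →₀ ℕ, MvPowerSeries.coeff d f ≠ 0 → 2 ≤ d.sum fun _ e => e)
    (α : MvPowerSeries (Fin n) R ≃ₐ[R] MvPowerSeries (Fin n) R) (hα : GAc α)
    (hα1 : α (X ⟨0, by omega⟩) = X ⟨0, by omega⟩ + X ⟨0, by omega⟩ * f) (hαj : ∀ j, j ≠ ⟨0, by omega⟩ → α (X j) = X j) :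
    ∃ β γ : MvPowerSeries (Fin n) R ≃ₐ[R] MvPowerSeries (Fin n) R,
      GAc β ∧ GAc γ ∧ α = β * γ * β⁻¹ * γ⁻¹ := by
  classical
  have hn0 : 0 < n := by omega
  have hn1 : 1 < n := by omega
  let i0 : Fin n := ⟨0, hn0⟩
  let i1 : Fin n := ⟨1, hn1⟩
  have hne : i1 ≠ i0 := by simp [i0, i1, Fin.ext_iff]
  have hne' : i0 ≠ i1 := hne.symm
  have hα1' : α (X i0) = X i0 + X i0 * f := hα1
  have hαj' : ∀ j, j ≠ i0 → α (X j) = X j := hαj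
  have hf1' : ∀ d : Fin n →₀ ℕ, MvPowerSeries.coeff d f ≠ 0 → d i0 = 0 := hf1
  -- constant coefficient of f vanishes
  have hf0 : constantCoeff f = 0 := by
    by_contra h
    have h2 := hf2 0 (by rwa [coeff_zero_eq_constantCoeff])
    simp at h2
  have f2 : X1F.OrdGE 2 f := by
    intro d hd
    by_contra h
    have := hf2 d h
    have hdeg : X1F.deg d = d.sum fun _ e => e := rfl
    rw [← hdeg] at this
    omega
  set vf := MvPowerSeries.invOfUnit (1 + f) 1 with hvf_def
  have hvf : (1 + f) * vf = 1 :=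
    MvPowerSeries.mul_invOfUnit (1 + f) 1 (by simp [hf0])
  set aβ : Fin n → MvPowerSeries (Fin n) R :=
    fun i => if i = i0 then X i0 * (1 + X i1) else X i with haβ_def
  set aγ : Fin n → MvPowerSeries (Fin n) R :=
    fun i => if i = i1 then (X i1 - f) * vf else X i with haγ_def
  have haβ : ∀ i, constantCoeff (aβ i) = 0 := by
    intro i
    by_cases hi : i = i0 <;> simp [haβ_def, hi, constantCoeff_X]
  have haγ : ∀ i, constantCoeff (aγ i) = 0 := by
    intro i
    by_cases hi : i = i1 <;> simp [haγ_def, hi, constantCoeff_X, hf0]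
  have haβ2 : ∀ i, X1F.OrdGE 2 (aβ i - X i) := by
    intro i
    by_cases hi : i = i0
    · rw [hi]
      have hkey : aβ i0 - X i0 = X i0 * X i1 := by
        simp only [haβ_def, if_pos rfl]
        ring
      rw [hkey]
      exact (X1F.OrdGE.one_of_constantCoeff (constantCoeff_X i0)).mul
        (X1F.OrdGE.one_of_constantCoeff (constantCoeff_X i1))
    · have hkey : aβ i - X i = 0 := by simp [haβ_def, hi]
      rw [hkey]
      exact fun d _ => map_zero _
  have haγ2 : ∀ i, X1F.OrdGE 2 (aγ i - X i) := by
    intro i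
    by_cases hi : i = i1
    · rw [hi]
      have hkey : aγ i1 - X i1 = -(f * ((1 + X i1) * vf)) := by
        simp only [haγ_def, if_pos rfl]
        linear_combination (X i1 : MvPowerSeries (Fin n) R) * hvf
      rw [hkey]
      have h1 : X1F.OrdGE 2 (f * ((1 + X i1) * vf)) := by
        have := f2.mul (X1F.OrdGE.zero ((1 + X i1) * vf))
        simpa using this
      exact h1.neg
    · have hkey : aγ i - X i = 0 := by simp [haγ_def, hi]
      rw [hkey]
      exact fun d _ => map_zero _
  let β := X1F.subAE aβ haβ haβ2
  let γ := X1F.subAE aγ haγ haγ2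
  have hβ_apply : ∀ F, β F = X1F.subFun aβ F := fun F => rfl
  have hγ_apply : ∀ F, γ F = X1F.subFun aγ F := fun F => rfl
  have hβX : ∀ i, β (X i) = aβ i := fun i => by
    rw [hβ_apply, X1F.subFun_X aβ haβ]
  have hγX : ∀ i, γ (X i) = aγ i := fun i => by
    rw [hγ_apply, X1F.subFun_X aγ haγ]
  have hβX0 : β (X i0) = X i0 * (1 + X i1) := by rw [hβX]; simp [haβ_def]
  have hβXj : ∀ j, j ≠ i0 → β (X j) = X j := fun j hj => by
    rw [hβX]; simp [haβ_def, hj]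
  have hγX1 : γ (X i1) = (X i1 - f) * vf := by rw [hγX]; simp [haγ_def]
  have hγXj : ∀ j, j ≠ i1 → γ (X j) = X j := fun j hj => by
    rw [hγX]; simp [haγ_def, hj]
  have hβc : @Continuous _ _ (mvPiTopology (Fin n) R) (mvPiTopology (Fin n) R) β := by
    have h : ⇑β = X1F.subFun aβ := funext hβ_apply
    rw [h]
    exact X1F.continuous_subFun aβ haβ
  have hγc : @Continuous _ _ (mvPiTopology (Fin n) R) (mvPiTopology (Fin n) R) γ := by
    have h : ⇑γ = X1F.subFun aγ := funext hγ_apply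
    rw [h]
    exact X1F.continuous_subFun aγ haγ
  have hβf : β f = f := by
    rw [hβ_apply]
    exact X1F.subFun_fix aβ haβ i0 (fun j hj => by simp [haβ_def, hj]) hf1'
  -- α agrees with the substitution on its generator values
  have hαc : @Continuous _ _ (mvPiTopology (Fin n) R) (mvPiTopology (Fin n) R) α := hα.1
  set aα : Fin n → MvPowerSeries (Fin n) R := fun i => α (X i) with haα_def
  have haα : ∀ i, constantCoeff (aα i) = 0 := hα.2
  have hα_eq : α.toAlgHom = X1F.subAH aα haα := by
    apply X1F.algHom_unique
    · exact hαc
    · exact X1F.continuous_subFun aα haα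
    · intro i
      rw [X1F.subAH_apply, X1F.subFun_X aα haα]
      rfl
  have hαf : α f = f := by
    have h1 : α f = X1F.subFun aα f := by
      rw [show α f = α.toAlgHom f from rfl, hα_eq, X1F.subAH_apply]
    rw [h1]
    exact X1F.subFun_fix aα haα i0 (fun j hj => hαj' j hj) hf1'
  have hinv : ∀ ψ : MvPowerSeries (Fin n) R ≃ₐ[R] MvPowerSeries (Fin n) R,
      ψ f = f → ψ vf = vf := by
    intro ψ hψf
    have h1 : (1 + f) * ψ vf = 1 := by
      have h2 := congrArg ψ hvf
      rw [map_mul, map_one, map_add, map_one, hψf] at h2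
      exact h2
    calc ψ vf = ((1 + f) * vf) * ψ vf := by rw [hvf, one_mul]
    _ = ((1 + f) * ψ vf) * vf := by ring
    _ = vf := by rw [h1, one_mul]
  have hαvf : α vf = vf := hinv α hαf
  have hβvf : β vf = vf := hinv β hβf
  -- the key identity on generators
  have hmain : (α.toAlgHom.comp (γ.toAlgHom.comp β.toAlgHom)) = (β.toAlgHom.comp γ.toAlgHom) := by
    apply X1F.algHom_unique
    · show @Continuous _ _ (mvPiTopology (Fin n) R) (mvPiTopology (Fin n) R) (⇑α ∘ ⇑γ ∘ ⇑β)
      exact X1F.continuous_comp' hαc (X1F.continuous_comp' hγc hβc)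
    · show @Continuous _ _ (mvPiTopology (Fin n) R) (mvPiTopology (Fin n) R) (⇑β ∘ ⇑γ)
      exact X1F.continuous_comp' hβc hγc
    · intro i
      show α (γ (β (X i))) = β (γ (X i))
      by_cases h0 : i = i0
      · rw [h0, hβX0, map_mul, map_add, map_one, hγXj i0 hne', hγX1,
          map_mul, map_add, map_one, map_mul, map_sub, hα1', hαj' i1 hne, hαf, hαvf,
          hβX0]
        linear_combination (X i0 * (X i1 - f) : MvPowerSeries (Fin n) R) * hvf
      · by_cases h1 : i = i1
        · rw [h1, hβXj i1 hne, hγX1, map_mul, map_sub, hαj' i1 hne, hαf, hαvf,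
            map_mul, map_sub, hβXj i1 hne, hβf, hβvf]
        · rw [hβXj i h0, hγXj i h1, hαj' i h0, hβXj i h0]
  have hmain' : α * γ * β = β * γ := by
    apply AlgEquiv.ext
    intro x
    have h1 : (α * γ * β) x = α (γ (β x)) := rfl
    have h2 : (β * γ) x = β (γ x) := rfl
    rw [h1, h2]
    exact DFunLike.congr_fun hmain x
  refine ⟨β, γ, ⟨hβc, fun i => by rw [hβX]; exact haβ i⟩,
    ⟨hγc, fun i => by rw [hγX]; exact haγ i⟩, ?_⟩
  calc α = α * γ * β * β⁻¹ * γ⁻¹ := by group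
  _ = β * γ * β⁻¹ * γ⁻¹ := by rw [hmain']
end
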